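/- arXiv:1409.1614 — 6 statements merged into one kernel-verified Lean document; each statement's English description precedes it below -/
import Mathlib

section
/- Let S be a finite nonempty set of positive integers with |S| = n, let p ∈ [0,1], and let f be a random S-map such that the values f(i) for i ∈ S are chosen independently, P[f(i) ≠ 0] = p for every i ∈ S, and conditioned on f(i) ≠ 0 the value f(i) is uniformly distributed on S. Then the probability that f has a cycle is exactly p. -/
open MeasureTheory

/-- A cycle of a map `f` relative to a set `S`: a sequence `a 0, …, a (k-1)` of
elements of `S` with `f (a i) = a (i+1)` for `i < k - 1` and `f (a (k-1)) = a 0`. -/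
def HasCycle (S : Finset ℕ) (f : ℕ → ℕ) : Prop :=
  ∃ (k : ℕ) (a : ℕ → ℕ), 0 < k ∧ (∀ i < k, a i ∈ S) ∧
    (∀ i, i + 1 < k → f (a i) = a (i + 1)) ∧ f (a (k - 1)) = a 0

open scoped Classical

namespace CycleAux

/-- extend a dependent function on a finset by 0 -/
def ext (A : Finset ℕ) (v : ∀ i ∈ A, ℕ) : ℕ → ℕ := fun i => if h : i ∈ A then v i h else 0

/-- "no cycle inside A": every orbit eventually leaves A -/
def NC (A : Finset ℕ) (f : ℕ → ℕ) : Prop := ∀ x ∈ A, ∃ j, f^[j] x ∉ A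

lemma ext_mem (A : Finset ℕ) (v : ∀ i ∈ A, ℕ) {i : ℕ} (hi : i ∈ A) :
    ext A v i = v i hi := dif_pos hi

lemma orbit_congr {A : Finset ℕ} {f g : ℕ → ℕ} (h : ∀ i ∈ A, f i = g i) {x : ℕ}
    (hf : ∀ j, f^[j] x ∈ A) : ∀ j, g^[j] x = f^[j] x := by
  intro j
  induction j with
  | zero => rfl
  | succ j ih =>
    rw [Function.iterate_succ_apply', Function.iterate_succ_apply', ih, h _ (hf j)]

lemma NC_congr {A : Finset ℕ} {f g : ℕ → ℕ} (h : ∀ i ∈ A, f i = g i) :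
    NC A f ↔ NC A g := by
  have key : ∀ {f g : ℕ → ℕ}, (∀ i ∈ A, f i = g i) → NC A f → NC A g := by
    intro f g h hf x hx
    by_contra hc
    push_neg at hc
    obtain ⟨j, hj⟩ := hf x hx
    exact hj ((orbit_congr (fun i hi => (h i hi).symm) hc j) ▸ hc j)
  exact ⟨key h, key (fun i hi => (h i hi).symm)⟩

lemma NC_self {A : Finset ℕ} {f : ℕ → ℕ} (h : ∀ i ∈ A, f i ∈ A) {x : ℕ} (hx : x ∈ A) :
    ∀ j, f^[j] x ∈ A := by
  intro j
  induction j with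
  | zero => exact hx
  | succ j ih => rw [Function.iterate_succ_apply']; exact h _ ih

/-- peeling: NC on A is the same as NC on A minus the exit set -/
lemma NC_sdiff {A : Finset ℕ} {f : ℕ → ℕ} :
    NC A f ↔ NC (A \ A.filter (fun i => f i ∉ A)) f := by
  set Z := A.filter (fun i => f i ∉ A) with hZ
  constructor
  · intro h x hx
    obtain ⟨j, hj⟩ := h x (Finset.mem_sdiff.mp hx).1
    exact ⟨j, fun hc => hj (Finset.mem_sdiff.mp hc).1⟩
  · intro h x hx
    by_cases hxZ : x ∈ Z
    · exact ⟨1, by simpa using (Finset.mem_filter.mp hxZ).2⟩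
    · obtain ⟨j, hj⟩ := h x (Finset.mem_sdiff.mpr ⟨hx, hxZ⟩)
      by_cases hy : f^[j] x ∈ A
      · have hyZ : f^[j] x ∈ Z := by
          by_contra hc
          exact hj (Finset.mem_sdiff.mpr ⟨hy, hc⟩)
        exact ⟨j + 1, by
          rw [Function.iterate_succ_apply']
          exact (Finset.mem_filter.mp hyZ).2⟩
      · exact ⟨j, hy⟩


/-- number of k-subsets of A containing i -/
lemma card_subsets_containing {A : Finset ℕ} {i : ℕ} (hi : i ∈ A) {k : ℕ} (hk : 1 ≤ k) :
    ((A.powersetCard k).filter (fun Z => i ∈ Z)).card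
      = (A.card - 1).choose (k - 1) := by
  have : ((A.powersetCard k).filter (fun Z => i ∈ Z)).card
      = ((A.erase i).powersetCard (k-1)).card := by
    apply Finset.card_bij (fun Z _ => Z.erase i)
    · intro Z hZ
      simp only [Finset.mem_filter, Finset.mem_powersetCard] at hZ
      obtain ⟨⟨hZA, hZc⟩, hiZ⟩ := hZ
      rw [Finset.mem_powersetCard]
      exact ⟨Finset.erase_subset_erase _ hZA, by rw [Finset.card_erase_of_mem hiZ, hZc]⟩
    · intro Z₁ hZ₁ Z₂ hZ₂ h
      simp only [Finset.mem_filter] at hZ₁ hZ₂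
      rw [← Finset.insert_erase hZ₁.2, ← Finset.insert_erase hZ₂.2, h]
    · intro Y hY
      rw [Finset.mem_powersetCard] at hY
      have hiY : i ∉ Y := fun hc => (Finset.mem_erase.mp (hY.1 hc)).1 rfl
      refine ⟨insert i Y, ?_, by rw [Finset.erase_insert hiY]⟩
      simp only [Finset.mem_filter, Finset.mem_powersetCard]
      refine ⟨⟨Finset.insert_subset hi (hY.1.trans (Finset.erase_subset _ _)), ?_⟩,
        Finset.mem_insert_self _ _⟩
      rw [Finset.card_insert_of_notMem hiY, hY.2]
      omega
  rw [this, Finset.card_powersetCard, Finset.card_erase_of_mem hi]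

lemma sum_over_powersetCard {A : Finset ℕ} (wt : ℕ → ℝ) {k : ℕ} (hk : 1 ≤ k) :
    ∑ Z ∈ A.powersetCard k, ∑ i ∈ Z, wt i
      = ((A.card - 1).choose (k - 1) : ℝ) * ∑ i ∈ A, wt i := by
  have step : ∀ Z ∈ A.powersetCard k, ∑ i ∈ Z, wt i
      = ∑ i ∈ A, if i ∈ Z then wt i else 0 := by
    intro Z hZ
    rw [Finset.mem_powersetCard] at hZ
    rw [Finset.sum_ite_mem, Finset.inter_eq_right.mpr hZ.1]
  rw [Finset.sum_congr rfl step, Finset.sum_comm]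
  rw [Finset.mul_sum, Finset.sum_congr rfl]
  intro i hi
  rw [← Finset.sum_filter, Finset.sum_const,
    card_subsets_containing hi hk, nsmul_eq_mul]


noncomputable def W (wt : ℕ → ℝ) (A B : Finset ℕ) : ℝ :=
  ∑ v ∈ A.pi (fun _ => A ∪ B),
    if NC A (ext A v) then ∏ i ∈ A, wt (ext A v i) else 0

theorem W_eq (wt : ℕ → ℝ) : ∀ (A : Finset ℕ), 0 ∉ A → ∀ B : Finset ℕ, Disjoint A B →
    W wt A B = if A = ∅ then 1 else
      (∑ b ∈ B, wt b) * (∑ b ∈ B, wt b + ∑ i ∈ A, wt i) ^ (A.card - 1) := by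
  intro A
  induction A using Finset.strongInduction with
  | _ A ih =>
    intro h0 B hd
    by_cases hAe : A = ∅
    · subst hAe
      rw [if_pos rfl, W]
      have hone : ∀ v ∈ (∅ : Finset ℕ).pi (fun _ => ∅ ∪ B),
          (if NC ∅ (ext ∅ v) then ∏ i ∈ (∅ : Finset ℕ), wt (ext ∅ v i) else 0) = 1 := by
        intro v _
        have hnc : NC ∅ (ext ∅ v) := fun x hx => absurd hx (Finset.notMem_empty x)
        rw [if_pos hnc, Finset.prod_empty]
      rw [Finset.sum_congr rfl hone, Finset.sum_const, Finset.card_pi]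
      simp
    · rw [if_neg hAe]
      have hAne : A.Nonempty := Finset.nonempty_iff_ne_empty.mpr hAe
      set T := ∑ b ∈ B, wt b with hT
      set R := ∑ i ∈ A, wt i with hR
      set a := A.card with ha
      have ha1 : 1 ≤ a := Finset.card_pos.mpr hAne
      -- step 1 : fiber the sum over the exit set
      have h1 : W wt A B = ∑ Z ∈ A.powerset,
          ∑ v ∈ (A.pi (fun _ => A ∪ B)).filter
            (fun v => A.filter (fun i => ext A v i ∉ A) = Z),
            (if NC A (ext A v) then ∏ i ∈ A, wt (ext A v i) else 0) :=
        (Finset.sum_fiberwise_of_maps_to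
          (fun v _ => Finset.mem_powerset.mpr (Finset.filter_subset _ _)) _).symm
      -- step 2 : compute each fiber
      have h2 : ∀ Z ∈ A.powerset,
          (∑ v ∈ (A.pi (fun _ => A ∪ B)).filter
            (fun v => A.filter (fun i => ext A v i ∉ A) = Z),
            (if NC A (ext A v) then ∏ i ∈ A, wt (ext A v i) else 0))
          = if Z = ∅ then 0 else
              T ^ Z.card * (if Z = A then 1 else (∑ i ∈ Z, wt i) * R ^ (a - Z.card - 1)) := by
        intro Z hZp
        have hZA : Z ⊆ A := Finset.mem_powerset.mp hZp
        by_cases hZe : Z = ∅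
        · subst hZe
          rw [if_pos rfl]
          apply Finset.sum_eq_zero
          intro v hv
          rw [Finset.mem_filter] at hv
          rw [if_neg]
          intro hNC
          obtain ⟨x, hx⟩ := hAne
          obtain ⟨j, hj⟩ := hNC x hx
          apply hj
          apply NC_self _ hx
          intro i hi
          by_contra hc
          have : i ∈ A.filter (fun i => ext A v i ∉ A) := Finset.mem_filter.mpr ⟨hi, hc⟩
          rw [hv.2] at this
          exact Finset.notMem_empty _ this
        · rw [if_neg hZe]
          have hZne : Z.Nonempty := Finset.nonempty_iff_ne_empty.mpr hZe
          -- bijection with pairs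
          have key : (∑ v ∈ (A.pi (fun _ => A ∪ B)).filter
              (fun v => A.filter (fun i => ext A v i ∉ A) = Z),
              (if NC A (ext A v) then ∏ i ∈ A, wt (ext A v i) else 0))
            = ∑ q ∈ (Z.pi fun _ => B) ×ˢ ((A \ Z).pi fun _ => A),
                (∏ i ∈ Z, wt (ext Z q.1 i)) *
                (if NC (A \ Z) (ext (A \ Z) q.2) then ∏ i ∈ A \ Z, wt (ext (A \ Z) q.2 i)
                  else 0) := by
            apply Finset.sum_bij'
              (i := fun v _ => (fun i hi => v i (hZA hi),
                fun i hi => v i (Finset.sdiff_subset hi)))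
              (j := fun q _ => fun i hi =>
                if h : i ∈ Z then q.1 i h else q.2 i (Finset.mem_sdiff.mpr ⟨hi, h⟩))
            · -- hi : image in product set
              intro v hv
              rw [Finset.mem_filter] at hv
              obtain ⟨hvpi, hvf⟩ := hv
              rw [Finset.mem_pi] at hvpi
              rw [Finset.mem_product]
              constructor
              · rw [Finset.mem_pi]
                intro i hi
                have hiA : i ∈ A := hZA hi
                have hout : ext A v i ∉ A := by
                  have : i ∈ A.filter (fun i => ext A v i ∉ A) := by rw [hvf]; exact hi
                  exact (Finset.mem_filter.mp this).2
                have hmem : v i hiA ∈ A ∪ B := hvpi i hiA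
                rw [ext_mem A v hiA] at hout
                rcases Finset.mem_union.mp hmem with h | h
                · exact absurd h hout
                · exact h
              · rw [Finset.mem_pi]
                intro i hi
                have hiA : i ∈ A := Finset.sdiff_subset hi
                have hiZ : i ∉ Z := (Finset.mem_sdiff.mp hi).2
                have hni : i ∉ A.filter (fun i => ext A v i ∉ A) := by rw [hvf]; exact hiZ
                have hin : ¬ (ext A v i ∉ A) := fun hc => hni (Finset.mem_filter.mpr ⟨hiA, hc⟩)
                rw [ext_mem A v hiA] at hin
                exact not_not.mp hin
            · -- hj : inverse maps into the fiber
              intro q hq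
              rw [Finset.mem_product] at hq
              obtain ⟨hq1, hq2⟩ := hq
              rw [Finset.mem_pi] at hq1 hq2
              rw [Finset.mem_filter]
              constructor
              · rw [Finset.mem_pi]
                intro i hi
                by_cases h : i ∈ Z
                · rw [dif_pos h]
                  exact Finset.mem_union_right _ (hq1 i h)
                · rw [dif_neg h]
                  exact Finset.mem_union_left _ (hq2 i (Finset.mem_sdiff.mpr ⟨hi, h⟩))
              · ext i
                rw [Finset.mem_filter]
                constructor
                · rintro ⟨hiA, hout⟩
                  by_contra hiZ
                  apply hout
                  rw [ext_mem _ _ hiA, dif_neg hiZ]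
                  exact hq2 i (Finset.mem_sdiff.mpr ⟨hiA, hiZ⟩)
                · intro hiZ
                  have hiA : i ∈ A := hZA hiZ
                  refine ⟨hiA, ?_⟩
                  rw [ext_mem _ _ hiA, dif_pos hiZ]
                  exact Finset.disjoint_right.mp hd (hq1 i hiZ)
            · -- left inverse
              intro v hv
              funext i hi
              by_cases h : i ∈ Z <;> simp [h]
            · -- right inverse
              intro q hq
              refine Prod.ext ?_ ?_
              · funext i hi
                simp [hi]
              · funext i hi
                have hiZ : i ∉ Z := (Finset.mem_sdiff.mp hi).2
                simp [hiZ]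
            · -- summand equality
              intro v hv
              dsimp only
              rw [Finset.mem_filter] at hv
              obtain ⟨hvpi, hvf⟩ := hv
              have hext1 : ∀ i ∈ Z, ext Z (fun i hi => v i (hZA hi)) i = ext A v i := by
                intro i hi
                rw [ext_mem _ _ hi, ext_mem _ _ (hZA hi)]
              have hext2 : ∀ i ∈ A \ Z,
                  ext (A \ Z) (fun i hi => v i (Finset.sdiff_subset hi)) i = ext A v i := by
                intro i hi
                rw [ext_mem _ _ hi, ext_mem _ _ (Finset.sdiff_subset hi)]
              have hNCiff : NC A (ext A v) ↔
                  NC (A \ Z) (ext (A \ Z) (fun i hi => v i (Finset.sdiff_subset hi))) := by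
                rw [NC_sdiff (A := A) (f := ext A v), hvf]
                exact NC_congr (fun i hi => (hext2 i hi).symm)
              by_cases hc : NC A (ext A v)
              · rw [if_pos hc, if_pos (hNCiff.mp hc)]
                have e1 : ∏ i ∈ Z, wt (ext Z (fun i hi => v i (hZA hi)) i)
                    = ∏ i ∈ Z, wt (ext A v i) :=
                  Finset.prod_congr rfl (fun i hi => by rw [hext1 i hi])
                have e2 : ∏ i ∈ A \ Z, wt (ext (A \ Z)
                      (fun i hi => v i (Finset.sdiff_subset hi)) i)
                    = ∏ i ∈ A \ Z, wt (ext A v i) :=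
                  Finset.prod_congr rfl (fun i hi => by rw [hext2 i hi])
                rw [e1, e2, ← Finset.prod_sdiff hZA]
                ring
              · rw [if_neg hc, if_neg (fun hcc => hc (hNCiff.mpr hcc)), mul_zero]
          rw [key, Finset.sum_product,
            ← Finset.sum_mul_sum (Z.pi fun _ => B) ((A \ Z).pi fun _ => A)
              (fun v₁ => ∏ i ∈ Z, wt (ext Z v₁ i))
              (fun v₂ => if NC (A \ Z) (ext (A \ Z) v₂) then
                ∏ i ∈ A \ Z, wt (ext (A \ Z) v₂ i) else 0)]
          -- first factor
          have hF1 : (∑ v₁ ∈ Z.pi (fun _ => B), ∏ i ∈ Z, wt (ext Z v₁ i)) = T ^ Z.card := by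
            have hsummand : ∀ p ∈ Z.pi (fun _ => B),
                (∏ i ∈ Z, wt (ext Z p i)) = ∏ x ∈ Z.attach, wt (p x.1 x.2) := by
              intro p _
              rw [← Finset.prod_attach Z (fun i => wt (ext Z p i))]
              exact Finset.prod_congr rfl (fun x _ => by rw [ext_mem _ _ x.2])
            calc (∑ v₁ ∈ Z.pi (fun _ => B), ∏ i ∈ Z, wt (ext Z v₁ i))
                = ∑ p ∈ Z.pi (fun _ => B), ∏ x ∈ Z.attach, wt (p x.1 x.2) :=
                  Finset.sum_congr rfl hsummand
              _ = ∏ i ∈ Z, ∑ b ∈ B, wt b :=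
                  (Finset.prod_sum Z (fun _ => B) (fun i b => wt b)).symm
              _ = T ^ Z.card := by rw [Finset.prod_const]
          -- second factor
          have hF2 : (∑ v₂ ∈ (A \ Z).pi (fun _ => A),
              if NC (A \ Z) (ext (A \ Z) v₂) then
                ∏ i ∈ A \ Z, wt (ext (A \ Z) v₂ i) else 0) = W wt (A \ Z) Z := by
            rw [W, Finset.sdiff_union_of_subset hZA]
          rw [hF1, hF2,
            ih (A \ Z) (Finset.sdiff_ssubset hZA hZne)
              (fun hc => h0 (Finset.sdiff_subset hc)) Z Finset.sdiff_disjoint]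
          have hsum : (∑ b ∈ Z, wt b) + ∑ i ∈ A \ Z, wt i = R := by
            rw [hR, ← Finset.sum_sdiff hZA]
            ring
          by_cases hZAeq : Z = A
          · have hAZe : A \ Z = ∅ := by rw [hZAeq, Finset.sdiff_self]
            rw [if_pos hAZe, if_pos hZAeq]
          · have hAZne : A \ Z ≠ ∅ := by
              intro hc
              exact hZAeq (Finset.Subset.antisymm hZA
                (Finset.sdiff_eq_empty_iff_subset.mp hc))
            rw [if_neg hAZne, if_neg hZAeq, hsum, Finset.card_sdiff_of_subset hZA]
      -- step 3 : the algebra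
      rw [h1, Finset.sum_congr rfl h2, Finset.sum_powerset]
      have hH : ∀ k ∈ Finset.range (a + 1),
          (∑ Z ∈ A.powersetCard k, if Z = ∅ then 0 else
            T ^ Z.card * (if Z = A then 1 else (∑ i ∈ Z, wt i) * R ^ (a - Z.card - 1)))
          = if k = 0 then 0 else ((a - 1).choose (k - 1) : ℝ) * (T ^ k * R ^ (a - k)) := by
        intro k hk
        rw [Finset.mem_range] at hk
        by_cases hk0 : k = 0
        · subst hk0
          rw [if_pos rfl, Finset.powersetCard_zero, Finset.sum_singleton, if_pos rfl]
        · rw [if_neg hk0]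
          have hk1 : 1 ≤ k := Nat.one_le_iff_ne_zero.mpr hk0
          by_cases hka : k = a
          · subst hka
            rw [ha, Finset.powersetCard_self, Finset.sum_singleton, if_neg hAe, if_pos rfl,
              mul_one, ← ha, Nat.choose_self, Nat.sub_self, pow_zero]
            push_cast
            ring
          · have hklt : k < a := lt_of_le_of_ne (Nat.lt_succ_iff.mp hk) hka
            have hterm : ∀ Z ∈ A.powersetCard k,
                (if Z = ∅ then 0 else T ^ Z.card *
                  (if Z = A then 1 else (∑ i ∈ Z, wt i) * R ^ (a - Z.card - 1)))
                = T ^ k * ((∑ i ∈ Z, wt i) * R ^ (a - k - 1)) := by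
              intro Z hZ
              rw [Finset.mem_powersetCard] at hZ
              have hZcard : Z.card = k := hZ.2
              have hZne' : Z ≠ ∅ := by
                intro hc
                rw [hc, Finset.card_empty] at hZcard
                exact hk0 hZcard.symm
              have hZneA : Z ≠ A := by
                intro hc
                rw [hc] at hZcard
                exact hka (hZcard ▸ rfl)
              rw [if_neg hZne', if_neg hZneA, hZcard]
            rw [Finset.sum_congr rfl hterm, ← Finset.mul_sum, ← Finset.sum_mul,
              sum_over_powersetCard wt hk1, ← hR, ← ha]
            have hpow : R ^ (a - k) = R ^ (a - k - 1) * R := by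
              rw [← pow_succ]
              congr 1
              omega
            rw [hpow]
            ring
      rw [Finset.sum_congr rfl hH, Finset.sum_range_succ']
      simp only [Nat.succ_ne_zero, if_false, eq_self_iff_true, if_true, add_zero, Nat.succ_sub_one]
      rw [add_pow T R (a - 1), Finset.mul_sum]
      rw [show a - 1 + 1 = a from by omega]
      apply Finset.sum_congr rfl
      intro j hj
      rw [show a - (j + 1) = a - 1 - j from by omega, pow_succ]
      ring


lemma hasCycle_iff (S : Finset ℕ) (f : ℕ → ℕ) :
    HasCycle S f ↔ ∃ x ∈ S, ∀ j, f^[j] x ∈ S := by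
  constructor
  · rintro ⟨k, a, hk, ha, hstep, hlast⟩
    refine ⟨a 0, ha 0 hk, ?_⟩
    have key : ∀ j, ∃ m, m < k ∧ f^[j] (a 0) = a m := by
      intro j
      induction j with
      | zero => exact ⟨0, hk, rfl⟩
      | succ j ihj =>
        obtain ⟨m, hm, hmeq⟩ := ihj
        rw [Function.iterate_succ_apply', hmeq]
        by_cases h : m + 1 < k
        · exact ⟨m + 1, h, hstep m h⟩
        · have hmk : m = k - 1 := by omega
          exact ⟨0, hk, by rw [hmk, hlast]⟩
    intro j
    obtain ⟨m, hm, hmeq⟩ := key j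
    rw [hmeq]
    exact ha m hm
  · rintro ⟨x, hx, horb⟩
    obtain ⟨j₁, j₂, hne, heq⟩ := Finite.exists_ne_map_eq_of_infinite
      (fun j : ℕ => (⟨f^[j] x, horb j⟩ : {y // y ∈ S}))
    have heq' : f^[j₁] x = f^[j₂] x := congrArg Subtype.val heq
    clear heq
    wlog hlt : j₂ < j₁ generalizing j₁ j₂
    · exact this j₂ j₁ hne.symm heq'.symm (by omega)
    refine ⟨j₁ - j₂, fun i => f^[i] (f^[j₂] x), by omega, ?_, ?_, ?_⟩
    · intro i _
      show f^[i] (f^[j₂] x) ∈ S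
      rw [← Function.iterate_add_apply]
      exact horb _
    · intro i _
      show f (f^[i] (f^[j₂] x)) = f^[i + 1] (f^[j₂] x)
      rw [Function.iterate_succ_apply']
    · show f (f^[j₁ - j₂ - 1] (f^[j₂] x)) = f^[0] (f^[j₂] x)
      rw [← Function.iterate_succ_apply' f (j₁ - j₂ - 1),
        show (j₁ - j₂ - 1).succ = j₁ - j₂ from by omega,
        ← Function.iterate_add_apply, show j₁ - j₂ + j₂ = j₁ from by omega, heq']
      rfl

lemma orbit_transfer {S : Finset ℕ} {f g : ℕ → ℕ} (h : ∀ i ∈ S, f i = g i) :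
    (∃ x ∈ S, ∀ j, f^[j] x ∈ S) → (∃ x ∈ S, ∀ j, g^[j] x ∈ S) := by
  rintro ⟨x, hx, horb⟩
  refine ⟨x, hx, fun j => ?_⟩
  have : ∀ j, g^[j] x = f^[j] x := by
    intro j
    induction j with
    | zero => rfl
    | succ j ihj =>
      rw [Function.iterate_succ_apply', Function.iterate_succ_apply', ihj, h _ (horb j)]
  rw [this j]
  exact horb j


end CycleAux

open CycleAux

/-- Let `S` be a finite nonempty set of positive integers with `|S| = n`, let
`p ∈ [0,1]`, and let `F` be a random `S`-map whose values `F ω i` for `i ∈ S` are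
independent, with `P[F i ≠ 0] = p` and, conditionally on being nonzero, uniform on `S`
(i.e. `P[F i = j] = p / n` for each `j ∈ S`).  Then the probability that `F` has a
cycle is exactly `p`. -/
theorem cycle_prob_uniform
    (S : Finset ℕ) (hS : S.Nonempty) (hpos : ∀ i ∈ S, 0 < i)
    (n : ℕ) (hn : S.card = n)
    (p : ℝ) (hp0 : 0 ≤ p) (hp1 : p ≤ 1)
    {Ω : Type*} [MeasurableSpace Ω] (μ : Measure Ω) [IsProbabilityMeasure μ]
    (F : Ω → ℕ → ℕ)
    (hSmap : ∀ ω, ∀ i ∈ S, F ω i ∈ S ∨ F ω i = 0)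
    (hmeas : ∀ i ∈ S, Measurable fun ω => F ω i)
    (hindep : ProbabilityTheory.iIndepFun
      (fun (i : {i // i ∈ S}) ω => F ω i.val) μ)
    (hne : ∀ i ∈ S, (μ {ω | F ω i ≠ 0}).toReal = p)
    (hunif : ∀ i ∈ S, ∀ j ∈ S, (μ {ω | F ω i = j}).toReal = p / n) :
    (μ {ω | HasCycle S (F ω)}).toReal = p := by
  have h0S : 0 ∉ S := fun h => lt_irrefl 0 (hpos 0 h)
  have hn1 : 1 ≤ n := hn ▸ Finset.card_pos.mpr hS
  have hnR : (n : ℝ) ≠ 0 := by positivity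
  set wt : ℕ → ℝ := fun j => if j = 0 then 1 - p else p / n with hwt
  set P := S.pi (fun _ => insert 0 S) with hP
  set Ev : (∀ i ∈ S, ℕ) → Set Ω := fun v => {ω | ∀ i (hi : i ∈ S), F ω i = v i hi} with hEv
  -- measurability of the atoms
  have hEvMeas : ∀ v, MeasurableSet (Ev v) := by
    intro v
    have : Ev v = ⋂ i : {i // i ∈ S}, (fun ω => F ω i.1) ⁻¹' {v i.1 i.2} := by
      ext ω
      simp only [hEv, Set.mem_setOf_eq, Set.mem_iInter, Set.mem_preimage,
        Set.mem_singleton_iff]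
      exact ⟨fun h i => h i.1 i.2, fun h i hi => h ⟨i, hi⟩⟩
    rw [this]
    exact MeasurableSet.iInter (fun i => (hmeas i.1 i.2) (measurableSet_singleton _))
  -- probability of an atom
  have hfact : ∀ (i : ℕ), i ∈ S → ∀ (c : ℕ), c ∈ insert 0 S →
      (μ ((fun ω => F ω i) ⁻¹' {c})).toReal = wt c := by
    intro i hi c hc
    rcases Finset.mem_insert.mp hc with rfl | hcS
    · have hset : (fun ω => F ω i) ⁻¹' {0} = {ω | F ω i ≠ 0}ᶜ := by
        ext ω
        simp [Set.mem_preimage]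
      have hmeasne : MeasurableSet {ω | F ω i ≠ 0} := by
        have : {ω | F ω i ≠ 0} = ((fun ω => F ω i) ⁻¹' {0})ᶜ := by
          ext ω; simp [Set.mem_preimage]
        rw [this]
        exact ((hmeas i hi) (measurableSet_singleton 0)).compl
      rw [hset, prob_compl_eq_one_sub hmeasne,
        ENNReal.toReal_sub_of_le prob_le_one ENNReal.one_ne_top, ENNReal.toReal_one,
        hne i hi]
      simp [hwt]
    · have hset : (fun ω => F ω i) ⁻¹' {c} = {ω | F ω i = c} := rfl
      have hc0 : c ≠ 0 := Nat.pos_iff_ne_zero.mp (hpos c hcS)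
      rw [hset, hunif i hi c hcS, hwt]
      simp [hc0]
  have hEvProb : ∀ v ∈ P, (μ (Ev v)).toReal = ∏ i ∈ S, wt (ext S v i) := by
    intro v hv
    rw [hP, Finset.mem_pi] at hv
    have hset : Ev v = ⋂ i ∈ (Finset.univ : Finset {i // i ∈ S}),
        (fun ω => F ω i.1) ⁻¹' {v i.1 i.2} := by
      ext ω
      simp only [hEv, Set.mem_setOf_eq, Set.mem_iInter, Set.mem_preimage,
        Set.mem_singleton_iff, Finset.mem_univ, Set.iInter_true]
      exact ⟨fun h i => h i.1 i.2, fun h i hi => h ⟨i, hi⟩⟩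
    have hprod := hindep.measure_inter_preimage_eq_mul (Finset.univ)
      (sets := fun i => {v i.1 i.2}) (fun i _ => measurableSet_singleton _)
    rw [hset, hprod, ENNReal.toReal_prod]
    have hstep : ∀ x ∈ (Finset.univ : Finset {i // i ∈ S}),
        (μ ((fun ω => F ω x.1) ⁻¹' {v x.1 x.2})).toReal = wt (ext S v x.1) := by
      intro x _
      rw [ext_mem S v x.2]
      exact hfact x.1 x.2 _ (hv x.1 x.2)
    rw [Finset.prod_congr rfl hstep, Finset.univ_eq_attach,
      Finset.prod_attach S (fun i => wt (ext S v i))]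
  -- pairwise disjointness
  have hdisj : ∀ (Q : Finset (∀ i ∈ S, ℕ)), Set.PairwiseDisjoint (↑Q) Ev := by
    intro Q v _ w _ hvw
    apply Set.disjoint_left.mpr
    intro ω hωv hωw
    apply hvw
    funext i hi
    exact (hωv i hi).symm.trans (hωw i hi)
  set C := P.filter (fun v => ¬ NC S (ext S v)) with hC
  have hNCiff : ∀ g : ℕ → ℕ, ¬ NC S g ↔ ∃ x ∈ S, ∀ j, g^[j] x ∈ S := by
    intro g
    rw [NC]
    push_neg
    simp only [not_not]
  -- the cycle event is the union of the atoms in C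
  have hevent : {ω | HasCycle S (F ω)} = ⋃ v ∈ C, Ev v := by
    ext ω
    simp only [Set.mem_setOf_eq, Set.mem_iUnion]
    constructor
    · intro hcyc
      refine ⟨fun i _ => F ω i, ⟨?_, fun i hi => rfl⟩⟩
      rw [hC, Finset.mem_filter]
      constructor
      · rw [hP, Finset.mem_pi]
        intro i hi
        rcases hSmap ω i hi with h | h
        · exact Finset.mem_insert_of_mem h
        · rw [h]; exact Finset.mem_insert_self _ _
      · rw [hNCiff]
        apply orbit_transfer (f := F ω)
          (fun i hi => (ext_mem S (fun i _ => F ω i) hi).symm)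
        exact (hasCycle_iff S (F ω)).mp hcyc
    · rintro ⟨v, hvC, hωv⟩
      rw [hC, Finset.mem_filter] at hvC
      rw [hasCycle_iff]
      apply orbit_transfer (f := ext S v)
      · intro i hi
        rw [ext_mem S v hi]
        exact (hωv i hi).symm
      · exact (hNCiff _).mp hvC.2
  -- the whole space is the union of all atoms
  have huniv : (Set.univ : Set Ω) = ⋃ v ∈ P, Ev v := by
    ext ω
    simp only [Set.mem_univ, true_iff, Set.mem_iUnion]
    refine ⟨fun i _ => F ω i, ?_, fun i hi => rfl⟩
    rw [hP, Finset.mem_pi]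
    intro i hi
    rcases hSmap ω i hi with h | h
    · exact Finset.mem_insert_of_mem h
    · rw [h]; exact Finset.mem_insert_self _ _
  -- measures as sums
  have hcycμ : (μ {ω | HasCycle S (F ω)}).toReal = ∑ v ∈ C, ∏ i ∈ S, wt (ext S v i) := by
    rw [hevent, measure_biUnion_finset (hdisj C) (fun v _ => hEvMeas v),
      ENNReal.toReal_sum (fun v _ => measure_ne_top μ _)]
    exact Finset.sum_congr rfl (fun v hv => hEvProb v (Finset.filter_subset _ _ hv))
  have hunivμ : (1 : ℝ) = ∑ v ∈ P, ∏ i ∈ S, wt (ext S v i) := by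
    have : (μ Set.univ).toReal = 1 := by rw [measure_univ]; rfl
    rw [← this, huniv, measure_biUnion_finset (hdisj P) (fun v _ => hEvMeas v),
      ENNReal.toReal_sum (fun v _ => measure_ne_top μ _)]
    exact Finset.sum_congr rfl (fun v hv => hEvProb v hv)
  -- split the total sum
  have hsplit : ∑ v ∈ P, ∏ i ∈ S, wt (ext S v i)
      = (∑ v ∈ P.filter (fun v => NC S (ext S v)), ∏ i ∈ S, wt (ext S v i))
        + ∑ v ∈ C, ∏ i ∈ S, wt (ext S v i) :=
    (Finset.sum_filter_add_sum_filter_not P (fun v => NC S (ext S v)) _).symm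
  -- the acyclic part is W
  have hWval : (∑ v ∈ P.filter (fun v => NC S (ext S v)), ∏ i ∈ S, wt (ext S v i))
      = W wt S {0} := by
    rw [W, Finset.sum_filter]
    congr 1
    rw [hP]
    congr 1
    rw [Finset.union_comm]
    rfl
  -- compute W
  have hwt0 : ∑ b ∈ ({0} : Finset ℕ), wt b = 1 - p := by
    rw [Finset.sum_singleton, hwt]
    simp
  have hwtS : ∑ i ∈ S, wt i = p := by
    have : ∀ i ∈ S, wt i = p / n := by
      intro i hi
      have : i ≠ 0 := Nat.pos_iff_ne_zero.mp (hpos i hi)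
      simp [hwt, this]
    rw [Finset.sum_congr rfl this, Finset.sum_const, hn, nsmul_eq_mul]
    field_simp
  have hW : W wt S {0} = 1 - p := by
    rw [W_eq wt S h0S {0} (by
      rw [Finset.disjoint_singleton_right]
      exact h0S), if_neg (Finset.nonempty_iff_ne_empty.mp hS), hwt0, hwtS,
      show (1 : ℝ) - p + p = 1 by ring, one_pow, mul_one]
  -- conclude
  have := hunivμ
  rw [hsplit, hWval, hW] at this
  rw [hcycμ]
  linarith
end

section
/- Let S be a finite nonempty set of positive integers with |S| = n. Then the number of cycle-free S-maps is exactly (n+1)^{n−1}. -/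
open Finset

open scoped Classical

/-- Encode dependent functions on `S` as functions `ℕ → ℕ` vanishing outside `S`. -/
noncomputable def phiFn (S : Finset ℕ) (p : ∀ a ∈ S, ℕ) : ℕ → ℕ :=
  fun i => if h : i ∈ S then p i h else 0

/-- The finset of functions `ℕ → ℕ` mapping `S` into `V` and vanishing outside `S`. -/
noncomputable def mapsTo (S V : Finset ℕ) : Finset (ℕ → ℕ) :=
  (S.pi fun _ => V).image (phiFn S)

lemma mem_mapsTo {S V : Finset ℕ} {g : ℕ → ℕ} :
    g ∈ mapsTo S V ↔ (∀ i ∈ S, g i ∈ V) ∧ (∀ i ∉ S, g i = 0) := by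
  constructor
  · intro h
    simp only [mapsTo, mem_image] at h
    obtain ⟨p, hp, rfl⟩ := h
    rw [Finset.mem_pi] at hp
    refine ⟨fun i hi => ?_, fun i hi => ?_⟩
    · simpa [phiFn, hi] using hp i hi
    · simp [phiFn, hi]
  · rintro ⟨h1, h2⟩
    simp only [mapsTo, mem_image]
    refine ⟨fun i _ => g i, ?_, ?_⟩
    · exact Finset.mem_pi.mpr fun i hi => h1 i hi
    · funext i
      simp only [phiFn]
      split
      · rfl
      · exact (h2 i ‹_›).symm

lemma card_mapsTo (S V : Finset ℕ) : (mapsTo S V).card = V.card ^ S.card := by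
  rw [mapsTo, Finset.card_image_of_injOn, Finset.card_pi, Finset.prod_const]
  intro p hp q hq h
  funext i hi
  have := congrFun h i
  simpa [phiFn, hi] using this

/-- An endofunction of a nonempty finite set has a cycle. -/
lemma hasCycle_of_mapsTo_self {S : Finset ℕ} {g : ℕ → ℕ} (hS : S.Nonempty)
    (h : ∀ i ∈ S, g i ∈ S) : HasCycle S g := by
  obtain ⟨x, hx⟩ := hS
  have hiter : ∀ m, g^[m] x ∈ S := by
    intro m
    induction m with
    | zero => simpa
    | succ m ih => rw [Function.iterate_succ_apply']; exact h _ ih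
  have hninj : ¬ Function.Injective (fun m : Fin (S.card + 1) => (⟨g^[m] x, hiter m⟩ : {y // y ∈ S})) := by
    intro hinj
    have := Fintype.card_le_of_injective _ hinj
    simp [Fintype.card_coe] at this
  rw [Function.not_injective_iff] at hninj
  obtain ⟨m₁, m₂, heq, hne⟩ := hninj
  have heq' : g^[(m₁ : ℕ)] x = g^[(m₂ : ℕ)] x := by
    simpa [Subtype.ext_iff] using heq
  -- wlog m₁ < m₂
  obtain ⟨i, j, hij, hgij⟩ : ∃ i j : ℕ, i < j ∧ g^[i] x = g^[j] x := by
    rcases lt_or_gt_of_ne (fun hh => hne (Fin.ext hh)) with h' | h'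
    · exact ⟨m₁, m₂, h', heq'⟩
    · exact ⟨m₂, m₁, h', heq'.symm⟩
  refine ⟨j - i, fun t => g^[i + t] x, by omega, fun t _ => hiter _, ?_, ?_⟩
  · intro t ht
    rw [← Function.iterate_succ_apply' g (i + t) x]
    congr 1
  · have h1 : (i + (j - i - 1)) + 1 = j := by omega
    rw [← Function.iterate_succ_apply' g (i + (j - i - 1)) x]
    show g^[(i + (j - i - 1)) + 1] x = g^[i + 0] x
    rw [h1, ← hgij, Nat.add_zero]

open scoped Classical in
/-- Cycle-free maps from `S` to `S ∪ R` (vanishing outside `S`). -/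
noncomputable def good (S R : Finset ℕ) : Finset (ℕ → ℕ) :=
  (mapsTo S (S ∪ R)).filter (fun g => ¬ HasCycle S g)

lemma mem_good {S R : Finset ℕ} {g : ℕ → ℕ} :
    g ∈ good S R ↔ (∀ i ∈ S, g i ∈ S ∪ R) ∧ (∀ i ∉ S, g i = 0) ∧ ¬ HasCycle S g := by
  classical
  simp [good, mem_mapsTo, and_assoc]

lemma card_part (S R T : Finset ℕ) (hd : Disjoint S R) (hTS : T ⊆ S) :
    ((good S R).filter (fun g => S.filter (fun i => g i ∈ R) = T)).card
      = R.card ^ T.card * (good (S \ T) T).card := by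
  classical
  have hST : S \ T ∪ T = S := Finset.sdiff_union_of_subset hTS
  rw [← card_mapsTo T R, ← Finset.card_product]
  refine Finset.card_bij'
    (i := fun g _ => ((fun i => if i ∈ T then g i else 0 : ℕ → ℕ),
                      (fun i => if i ∈ S \ T then g i else 0 : ℕ → ℕ)))
    (j := fun p _ => (fun i => if i ∈ T then p.1 i else p.2 i))
    ?_ ?_ ?_ ?_
  · -- forward membership
    intro g hg
    rw [Finset.mem_filter] at hg
    obtain ⟨hgood, hfT⟩ := hg
    rw [mem_good] at hgood
    obtain ⟨h1, h2, h3⟩ := hgood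
    have hmemT : ∀ i, i ∈ T ↔ i ∈ S ∧ g i ∈ R := by
      intro i; rw [← hfT, Finset.mem_filter]
    rw [Finset.mem_product]
    constructor
    · rw [mem_mapsTo]
      constructor
      · intro i hi
        simp only [hi, if_pos]
        exact ((hmemT i).1 hi).2
      · intro i hi; simp [hi]
    · rw [mem_good]
      refine ⟨?_, ?_, ?_⟩
      · intro i hi
        simp only [hi, if_pos]
        have hiS : i ∈ S := (Finset.mem_sdiff.1 hi).1
        have hiT : i ∉ T := (Finset.mem_sdiff.1 hi).2
        have : g i ∈ S := by
          rcases Finset.mem_union.1 (h1 i hiS) with h | h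
          · exact h
          · exact absurd ((hmemT i).2 ⟨hiS, h⟩) hiT
        rw [hST]
        exact this
      · intro i hi; simp [hi]
      · intro hcyc
        obtain ⟨k, a, hk, haS, hstep, hlast⟩ := hcyc
        refine h3 ⟨k, a, hk, fun i hik => (Finset.mem_sdiff.1 (haS i hik)).1, ?_, ?_⟩
        · intro i hik
          obtain ⟨hm1, hm2⟩ := Finset.mem_sdiff.1 (haS i (Nat.lt_of_succ_lt hik))
          simpa [hm1, hm2] using hstep i hik
        · obtain ⟨hm1, hm2⟩ := Finset.mem_sdiff.1 (haS (k-1) (Nat.sub_lt hk Nat.one_pos))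
          simpa [hm1, hm2] using hlast
  · -- backward membership
    intro p hp
    rw [Finset.mem_product] at hp
    obtain ⟨hp1, hp2⟩ := hp
    rw [mem_mapsTo] at hp1
    rw [mem_good] at hp2
    obtain ⟨h1, h2⟩ := hp1
    obtain ⟨h1', h2', h3'⟩ := hp2
    rw [Finset.mem_filter]
    have hvS : ∀ i ∈ S \ T, p.2 i ∈ S := by
      intro i hi
      have := h1' i hi
      rwa [hST] at this
    have hgval : ∀ i ∈ S, (if i ∈ T then p.1 i else p.2 i) ∈ S ∪ R := by
      intro i hiS
      by_cases hiT : i ∈ T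
      · simp only [hiT, if_pos]
        exact Finset.mem_union_right _ (h1 i hiT)
      · simp only [hiT, if_neg, if_false]
        exact Finset.mem_union_left _ (hvS i (Finset.mem_sdiff.2 ⟨hiS, hiT⟩))
    refine ⟨mem_good.2 ⟨hgval, ?_, ?_⟩, ?_⟩
    · intro i hiS
      have hiT : i ∉ T := fun h => hiS (hTS h)
      have hiST : i ∉ S \ T := fun h => hiS (Finset.mem_sdiff.1 h).1
      simp [hiT, h2' i hiST]
    · intro hcyc
      obtain ⟨k, a, hk, haS, hstep, hlast⟩ := hcyc
      have hnext : ∀ i < k, (if a i ∈ T then p.1 (a i) else p.2 (a i)) ∈ S := by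
        intro i hik
        rcases Nat.lt_or_ge (i+1) k with h | h
        · have := hstep i h
          simp only at this
          rw [this]
          exact haS (i+1) h
        · have hieq : i = k - 1 := by omega
          have := hlast
          simp only at this
          rw [hieq, this]
          exact haS 0 hk
      have hnT : ∀ i < k, a i ∈ S \ T := by
        intro i hik
        refine Finset.mem_sdiff.2 ⟨haS i hik, fun hiT => ?_⟩
        have h5 := hnext i hik
        rw [if_pos hiT] at h5
        exact Finset.disjoint_left.1 hd h5 (h1 _ hiT)
      refine h3' ⟨k, a, hk, hnT, ?_, ?_⟩
      · intro i hik
        have hm2 := (Finset.mem_sdiff.1 (hnT i (Nat.lt_of_succ_lt hik))).2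
        simpa [hm2] using hstep i hik
      · have hm2 := (Finset.mem_sdiff.1 (hnT (k-1) (Nat.sub_lt hk Nat.one_pos))).2
        simpa [hm2] using hlast
    · ext i
      simp only [Finset.mem_filter]
      constructor
      · rintro ⟨hiS, hiR⟩
        by_contra hiT
        rw [if_neg hiT] at hiR
        exact Finset.disjoint_left.1 hd (hvS i (Finset.mem_sdiff.2 ⟨hiS, hiT⟩)) hiR
      · intro hiT
        refine ⟨hTS hiT, ?_⟩
        rw [if_pos hiT]
        exact h1 i hiT
  · -- left inverse
    intro g hg
    rw [Finset.mem_filter] at hg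
    obtain ⟨hgood, hfT⟩ := hg
    rw [mem_good] at hgood
    obtain ⟨h1, h2, h3⟩ := hgood
    funext i
    by_cases hiT : i ∈ T
    · simp [hiT]
    · simp only [hiT, if_neg, if_false]
      by_cases hiS : i ∈ S
      · simp [Finset.mem_sdiff, hiS, hiT]
      · simp [Finset.mem_sdiff, hiS, h2 i hiS]
  · -- right inverse
    intro p hp
    rw [Finset.mem_product] at hp
    obtain ⟨hp1, hp2⟩ := hp
    rw [mem_mapsTo] at hp1
    rw [mem_good] at hp2
    obtain ⟨h1, h2⟩ := hp1
    obtain ⟨h1', h2', h3'⟩ := hp2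
    have : ∀ i, i ∈ T → i ∈ S := fun i hi => hTS hi
    refine Prod.ext ?_ ?_
    · funext i
      by_cases hiT : i ∈ T
      · simp [hiT]
      · simp [hiT, h2 i hiT]
    · funext i
      by_cases hi : i ∈ S \ T
      · have : i ∉ T := (Finset.mem_sdiff.1 hi).2
        simp [hi, this]
      · simp only [hi, if_neg, if_false]
        exact (h2' i hi).symm

lemma not_hasCycle_empty (g : ℕ → ℕ) : ¬ HasCycle ∅ g := by
  rintro ⟨k, a, hk, ha, -, -⟩
  exact absurd (ha 0 hk) (Finset.notMem_empty _)

lemma good_eq_biUnion (S R : Finset ℕ) (hS : S.Nonempty) :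
    good S R = (S.powerset.filter Finset.Nonempty).biUnion
      (fun T => (good S R).filter (fun g => S.filter (fun i => g i ∈ R) = T)) := by
  classical
  ext g
  simp only [Finset.mem_biUnion, Finset.mem_filter, Finset.mem_powerset]
  constructor
  · intro hg
    refine ⟨S.filter (fun i => g i ∈ R), ⟨Finset.filter_subset _ _, ?_⟩, hg, rfl⟩
    by_contra hne
    rw [Finset.not_nonempty_iff_eq_empty, Finset.filter_eq_empty_iff] at hne
    obtain ⟨h1, h2, h3⟩ := mem_good.1 hg
    refine h3 (hasCycle_of_mapsTo_self hS (fun i hi => ?_))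
    rcases Finset.mem_union.1 (h1 i hi) with h | h
    · exact h
    · exact absurd h (hne hi)
  · rintro ⟨T, -, hg, -⟩
    exact hg

lemma key_identity (t k : ℕ) :
    ∑ m ∈ Finset.range (t + 2),
        (t + 1).choose m * (k ^ m * (if m = t + 1 then 1 else m * (t + 1) ^ (t + 1 - m - 1)))
      = k * (t + 1 + k) ^ t := by
  rw [Finset.sum_range_succ]
  have h1 : ∀ m ∈ Finset.range (t + 1),
      (t + 1).choose m * (k ^ m * (if m = t + 1 then 1 else m * (t + 1) ^ (t + 1 - m - 1)))
        = (t + 1).choose m * (k ^ m * (m * (t + 1) ^ (t - m))) := by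
    intro m hm
    rw [Finset.mem_range] at hm
    rw [if_neg (by omega)]
    have he : t + 1 - m - 1 = t - m := by omega
    rw [he]
  rw [Finset.sum_congr rfl h1, Finset.sum_range_succ']
  have h2 : ∀ i ∈ Finset.range t,
      (t + 1).choose (i + 1) * (k ^ (i + 1) * ((i + 1) * (t + 1) ^ (t - (i + 1))))
        = k * (t.choose i * (k ^ i * (t + 1) ^ (t - i))) := by
    intro i hi
    rw [Finset.mem_range] at hi
    have hc : (t + 1).choose (i + 1) * (i + 1) = (t + 1) * t.choose i := by
      rw [← Nat.add_one_mul_choose_eq]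
    have hp : (t + 1) * (t + 1) ^ (t - (i + 1)) = (t + 1) ^ (t - i) := by
      have he : t - (i + 1) + 1 = t - i := by omega
      rw [← pow_succ', he]
    calc (t + 1).choose (i + 1) * (k ^ (i + 1) * ((i + 1) * (t + 1) ^ (t - (i + 1))))
        = ((t + 1).choose (i + 1) * (i + 1)) * k ^ (i + 1) * (t + 1) ^ (t - (i + 1)) := by ring
      _ = (t + 1) * t.choose i * k ^ (i + 1) * (t + 1) ^ (t - (i + 1)) := by rw [hc]
      _ = t.choose i * k ^ (i + 1) * ((t + 1) * (t + 1) ^ (t - (i + 1))) := by ring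
      _ = t.choose i * k ^ (i + 1) * (t + 1) ^ (t - i) := by rw [hp]
      _ = k * (t.choose i * (k ^ i * (t + 1) ^ (t - i))) := by ring
  rw [Finset.sum_congr rfl h2, ← Finset.mul_sum]
  have hf0 : (t + 1).choose 0 * (k ^ 0 * (0 * (t + 1) ^ (t - 0))) = 0 := by simp
  have hlast : (t + 1).choose (t + 1) * (k ^ (t + 1) *
      (if t + 1 = t + 1 then 1 else (t + 1) * (t + 1) ^ (t + 1 - (t + 1) - 1))) = k ^ (t + 1) := by
    simp
  rw [hf0, hlast]
  have hrhs : (k + (t + 1)) ^ t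
      = ∑ i ∈ Finset.range t, t.choose i * (k ^ i * (t + 1) ^ (t - i)) + k ^ t := by
    rw [add_pow, Finset.sum_range_succ]
    simp only [Nat.cast_id, Nat.sub_self, pow_zero, mul_one, Nat.choose_self]
    congr 1
    apply Finset.sum_congr rfl
    intro i _
    ring
  rw [show t + 1 + k = k + (t + 1) from by ring, hrhs]
  ring

lemma card_good : ∀ s : ℕ, ∀ S R : Finset ℕ, S.card = s → Disjoint S R →
    (good S R).card = if s = 0 then 1 else R.card * (s + R.card) ^ (s - 1) := by
  intro s
  induction s using Nat.strong_induction_on with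
  | _ s IH =>
  intro S R hcard hd
  rcases Nat.eq_zero_or_pos s with hs0 | hspos
  · subst hs0
    rw [Finset.card_eq_zero] at hcard
    subst hcard
    rw [if_pos rfl]
    unfold good
    rw [Finset.filter_true_of_mem (fun g _ => not_hasCycle_empty g), card_mapsTo]
    simp
  · have hSne : S.Nonempty := by
      rw [← Finset.card_pos, hcard]; exact hspos
    rw [if_neg (by omega)]
    classical
    have hdisj : ∀ T₁ ∈ S.powerset.filter Finset.Nonempty, ∀ T₂ ∈ S.powerset.filter Finset.Nonempty,
        T₁ ≠ T₂ → Disjoint ((good S R).filter (fun g => S.filter (fun i => g i ∈ R) = T₁))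
          ((good S R).filter (fun g => S.filter (fun i => g i ∈ R) = T₂)) := by
      intro T₁ _ T₂ _ hne
      rw [Finset.disjoint_left]
      intro g hg1 hg2
      rw [Finset.mem_filter] at hg1 hg2
      exact hne (hg1.2 ▸ hg2.2)
    rw [good_eq_biUnion S R hSne, Finset.card_biUnion hdisj]
    have hterm : ∀ T ∈ S.powerset.filter Finset.Nonempty,
        ((good S R).filter (fun g => S.filter (fun i => g i ∈ R) = T)).card
          = R.card ^ T.card * (if T.card = s then 1 else T.card * s ^ (s - T.card - 1)) := by
      intro T hT
      rw [Finset.mem_filter, Finset.mem_powerset] at hT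
      obtain ⟨hTS, hTne⟩ := hT
      rw [card_part S R T hd hTS]
      congr 1
      have hTc : T.card ≤ s := hcard ▸ Finset.card_le_card hTS
      have hTpos : 0 < T.card := Finset.card_pos.2 hTne
      have hsd : (S \ T).card = s - T.card := by
        rw [Finset.card_sdiff_of_subset hTS, hcard]
      have hlt : (S \ T).card < s := by omega
      rw [IH _ hlt (S \ T) T rfl Finset.sdiff_disjoint, hsd]
      by_cases h : T.card = s
      · rw [if_pos (by omega), if_pos h]
      · have hadd : s - T.card + T.card = s := by omega
        rw [if_neg (by omega), if_neg h, hadd]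
    rw [Finset.sum_congr rfl hterm,
      Finset.sum_filter_of_ne (by
        intro T _ hne
        by_contra hTe
        apply hne
        rw [Finset.not_nonempty_iff_eq_empty] at hTe
        subst hTe
        simp [if_neg (by omega : ¬ (0 : ℕ) = s)] )]
    rw [Finset.sum_powerset_apply_card
      (f := fun m => R.card ^ m * (if m = s then 1 else m * s ^ (s - m - 1))), hcard]
    simp only [smul_eq_mul]
    obtain ⟨t, rfl⟩ : ∃ t, s = t + 1 := ⟨s - 1, by omega⟩
    have := key_identity t R.card
    simpa using this

/-- Let `S` be a finite nonempty set of positive integers with `|S| = n`.  The number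
of cycle-free `S`-maps (functions `f : S → S ∪ {0}`, encoded as functions `ℕ → ℕ`
which vanish outside `S`) is exactly `(n + 1) ^ (n - 1)`. -/
theorem card_cycleFree_maps
    (S : Finset ℕ) (hS : S.Nonempty) (hpos : ∀ i ∈ S, 0 < i)
    (n : ℕ) (hn : S.card = n) :
    {f : ℕ → ℕ | (∀ i ∈ S, f i ∈ S ∨ f i = 0) ∧ (∀ i ∉ S, f i = 0) ∧
      ¬ HasCycle S f}.ncard = (n + 1) ^ (n - 1) := by
  classical
  have hd : Disjoint S ({0} : Finset ℕ) := by
    rw [Finset.disjoint_left]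
    intro i hi hi0
    rw [Finset.mem_singleton] at hi0
    have := hpos i hi
    omega
  have hset : {f : ℕ → ℕ | (∀ i ∈ S, f i ∈ S ∨ f i = 0) ∧ (∀ i ∉ S, f i = 0) ∧
      ¬ HasCycle S f} = ↑(good S {0}) := by
    ext g
    rw [Set.mem_setOf_eq, Finset.mem_coe, mem_good]
    simp [Finset.mem_union, or_comm]
  rw [hset, Set.ncard_coe_finset, card_good n S {0} hn hd]
  have hn0 : ¬ n = 0 := by
    have := Finset.card_pos.2 hS
    omega
  rw [if_neg hn0]
  simp
end

section
/- (Cayley's Formula) For any positive integer n, the number of trees on n labeled vertices is exactly n^{n−2}. -/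
set_option linter.unusedSectionVars false
open Function
namespace CayleyAux
open scoped Classical
variable {V : Type*}
def IsRooted (p : V → V) (r : V) : Prop := p r = r ∧ ∀ v, ∃ k, p^[k] v = r
section Rooted
variable {p : V → V} {r : V}
noncomputable def ht (hp : IsRooted p r) (v : V) : ℕ := Nat.find (hp.2 v)
lemma iterate_ht (hp : IsRooted p r) (v : V) : p^[ht hp v] v = r := Nat.find_spec (hp.2 v)
lemma ht_le (hp : IsRooted p r) {v : V} {k : ℕ} (h : p^[k] v = r) : ht hp v ≤ k := Nat.find_le h
lemma ht_root (hp : IsRooted p r) : ht hp r = 0 := Nat.le_zero.1 (ht_le hp rfl)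
lemma ht_eq_zero_iff (hp : IsRooted p r) {v : V} : ht hp v = 0 ↔ v = r := by
  constructor
  · intro h; have := iterate_ht hp v; rwa [h] at this
  · rintro rfl; exact ht_root hp
lemma ht_apply (hp : IsRooted p r) {v : V} (hv : v ≠ r) : ht hp (p v) + 1 = ht hp v := by
  have h0 : ht hp v ≠ 0 := fun h => hv ((ht_eq_zero_iff hp).1 h)
  have h1 := iterate_ht hp v
  rw [show ht hp v = (ht hp v - 1) + 1 by omega, Function.iterate_succ_apply] at h1
  have hle : ht hp (p v) ≤ ht hp v - 1 := ht_le hp h1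
  have hge : ht hp v ≤ ht hp (p v) + 1 := by
    apply ht_le hp
    rw [Function.iterate_succ_apply]
    exact iterate_ht hp (p v)
  omega
lemma iterate_root (hp : IsRooted p r) (j : ℕ) : p^[j] r = r := Function.iterate_fixed hp.1 j

lemma iterate_of_ht_le (hp : IsRooted p r) {v : V} {k : ℕ} (h : ht hp v ≤ k) : p^[k] v = r := by
  obtain ⟨j, rfl⟩ := Nat.exists_eq_add_of_le h
  rw [Nat.add_comm, Function.iterate_add_apply, iterate_ht hp v, iterate_root hp]

lemma ht_iterate (hp : IsRooted p r) {v : V} {k : ℕ} (h : k ≤ ht hp v) :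
    ht hp (p^[k] v) = ht hp v - k := by
  induction k with
  | zero => simp
  | succ k ih =>
    have hk : k ≤ ht hp v := by omega
    have ih' := ih hk
    have hne : p^[k] v ≠ r := by
      intro he
      have : ht hp (p^[k] v) = 0 := by rw [he]; exact ht_root hp
      omega
    have h2 := ht_apply hp hne
    rw [Function.iterate_succ_apply']
    omega

lemma iterate_inj (hp : IsRooted p r) {v : V} {i j : ℕ} (hi : i ≤ ht hp v) (hj : j ≤ ht hp v)
    (h : p^[i] v = p^[j] v) : i = j := by
  have h1 := ht_iterate hp hi
  have h2 := ht_iterate hp hj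
  rw [h, h2] at h1
  omega

lemma apply_ne_self (hp : IsRooted p r) {v : V} (hv : v ≠ r) : p v ≠ v := by
  intro h
  obtain ⟨k, hk⟩ := hp.2 v
  exact hv (by rw [← hk, Function.iterate_fixed h k])
end Rooted

open SimpleGraph

section Graph
variable {p : V → V} {r : V}

/-- The graph on `V` whose edges join each non-root vertex to its parent. -/
def treeGraph (p : V → V) : SimpleGraph V := SimpleGraph.fromRel (fun a b => p a = b)

lemma treeGraph_adj {a b : V} : (treeGraph p).Adj a b ↔ a ≠ b ∧ (p a = b ∨ p b = a) := by
  simp [treeGraph]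

lemma exists_last_edge {G : SimpleGraph V} {u v : V} (w : G.Walk u v) (hw : ¬ w.Nil) :
    ∃ z, z ∈ w.support ∧ G.Adj z v ∧ s(z, v) ∈ w.edges := by
  induction w with
  | nil => simp at hw
  | @cons a b c h q ih =>
    by_cases hq : q.Nil
    · cases q with
      | nil => exact ⟨a, by simp, h, by simp⟩
      | cons h' q' => simp at hq
    · obtain ⟨z, hz, hadj, he⟩ := ih hq
      exact ⟨z, by simp [hz], hadj, by simp [he]⟩

/-- Among the neighbours of a vertex of maximal height, only the parent occurs. -/
lemma adj_max_ht (hp : IsRooted p r) {x y : V} (hadj : (treeGraph p).Adj x y)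
    (hle : ht hp y ≤ ht hp x) : p x = y := by
  rw [treeGraph_adj] at hadj
  rcases hadj.2 with h | h
  · exact h
  · by_cases hyr : y = r
    · exfalso
      apply hadj.1
      rw [hyr] at h ⊢
      rw [hp.1] at h
      exact h.symm
    · have := ht_apply hp hyr
      rw [h] at this
      omega

lemma treeGraph_acyclic (hp : IsRooted p r) : (treeGraph p).IsAcyclic := by
  intro a c hc
  obtain ⟨x, hxmem, hxmax⟩ := Finset.exists_max_image c.support.toFinset (ht hp)
    ⟨a, List.mem_toFinset.2 c.start_mem_support⟩
  rw [List.mem_toFinset] at hxmem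
  have hc' := hc.rotate hxmem
  set c' : (treeGraph p).Walk x x := c.rotate x hxmem with hc'def
  have hsup : ∀ y ∈ c'.support, ht hp y ≤ ht hp x := by
    intro y hy
    rw [Walk.support_eq_cons, List.mem_cons] at hy
    rcases hy with hy | hy
    · simp [hy]
    · apply hxmax
      rw [List.mem_toFinset]
      have := (SimpleGraph.Walk.support_rotate c x hxmem).mem_iff (a := y)
      exact List.mem_of_mem_tail (this.1 hy)
  clear_value c'
  cases c' with
  | nil => exact hc'.not_of_nil
  | @cons _ w _ hxy q =>
    have hq : ¬ q.Nil := by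
      intro hqn
      cases q with
      | nil => exact (treeGraph p).irrefl hxy
      | cons h' q' => simp at hqn
    obtain ⟨z, hzsup, hzadj, hze⟩ := exists_last_edge q hq
    have hy : p x = w := by
      apply adj_max_ht hp hxy
      apply hsup; simp
    have hz : p x = z := by
      apply adj_max_ht hp hzadj.symm
      apply hsup; simp [hzsup]
    have hwz : w = z := by rw [← hy, hz]
    subst hwz
    have hnodup := hc'.edges_nodup
    rw [Walk.edges_cons] at hnodup
    have : s(x, w) ∈ q.edges := by rwa [Sym2.eq_swap]
    exact (List.nodup_cons.1 hnodup).1 this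

lemma treeGraph_reach (hp : IsRooted p r) (v : V) : (treeGraph p).Reachable v r := by
  obtain ⟨k, hk⟩ := hp.2 v
  induction k generalizing v with
  | zero => simp only [Function.iterate_zero, id_eq] at hk; rw [hk]
  | succ k ih =>
    by_cases hv : v = r
    · rw [hv]
    · have hadj : (treeGraph p).Adj v (p v) := by
        rw [treeGraph_adj]
        exact ⟨(apply_ne_self hp hv).symm, Or.inl rfl⟩
      exact hadj.reachable.trans (ih (p v) (by rwa [Function.iterate_succ_apply] at hk))

lemma treeGraph_isTree (hp : IsRooted p r) : (treeGraph p).IsTree := by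
  have : Nonempty V := ⟨r⟩
  exact ⟨⟨fun u v => (treeGraph_reach hp u).trans (treeGraph_reach hp v).symm⟩,
    treeGraph_acyclic hp⟩

end Graph

section Parent
variable {G : SimpleGraph V} {r₀ : V}

/-- The canonical (unique) path from `v` to `r₀` in a tree. -/
noncomputable def cpath (hG : G.IsTree) (r₀ v : V) : G.Walk v r₀ :=
  (hG.existsUnique_path v r₀).choose

lemma cpath_isPath (hG : G.IsTree) (v : V) : (cpath hG r₀ v).IsPath :=
  (hG.existsUnique_path v r₀).choose_spec.1

lemma cpath_unique (hG : G.IsTree) {v : V} (w : G.Walk v r₀) (hw : w.IsPath) :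
    w = cpath hG r₀ v :=
  (hG.existsUnique_path v r₀).choose_spec.2 w hw

lemma cpath_root (hG : G.IsTree) : cpath hG r₀ r₀ = Walk.nil :=
  (cpath_unique hG Walk.nil Walk.IsPath.nil).symm

lemma cpath_not_nil (hG : G.IsTree) {v : V} (hv : v ≠ r₀) : ¬ (cpath hG r₀ v).Nil :=
  Walk.not_nil_of_ne hv

/-- The parent function of a tree, towards the root `r₀`. -/
noncomputable def parentFun (hG : G.IsTree) (r₀ : V) : V → V :=
  fun v => if v = r₀ then r₀ else (cpath hG r₀ v).getVert 1

lemma parentFun_root (hG : G.IsTree) : parentFun hG r₀ r₀ = r₀ := if_pos rfl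

lemma parentFun_of_ne (hG : G.IsTree) {v : V} (hv : v ≠ r₀) :
    parentFun hG r₀ v = (cpath hG r₀ v).getVert 1 := if_neg hv

lemma parentFun_adj (hG : G.IsTree) {v : V} (hv : v ≠ r₀) :
    G.Adj v (parentFun hG r₀ v) := by
  rw [parentFun_of_ne hG hv]
  exact Walk.adj_snd (cpath_not_nil hG hv)

lemma cpath_parentFun (hG : G.IsTree) {v : V} (hv : v ≠ r₀) :
    (cpath hG r₀ (parentFun hG r₀ v)).length + 1 = (cpath hG r₀ v).length := by
  have hnil := cpath_not_nil hG (r₀ := r₀) hv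
  have htail : ((cpath hG r₀ v).tail).IsPath := (cpath_isPath hG v).tail
  have := cpath_unique hG ((cpath hG r₀ v).tail.copy (parentFun_of_ne hG hv).symm rfl)
    (by simpa using htail)
  rw [← this]
  simpa using Walk.length_tail_add_one hnil

lemma parentFun_isRooted (hG : G.IsTree) : IsRooted (parentFun hG r₀) r₀ := by
  refine ⟨parentFun_root hG, ?_⟩
  suffices h : ∀ (L : ℕ) (v : V), (cpath hG r₀ v).length ≤ L →
      ∃ k, (parentFun hG r₀)^[k] v = r₀ by
    intro v; exact h (cpath hG r₀ v).length v le_rfl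
  intro L
  induction L with
  | zero =>
    intro v hv
    by_cases h : v = r₀
    · exact ⟨0, h⟩
    · exfalso
      have := cpath_not_nil hG (r₀ := r₀) h
      rw [Walk.nil_iff_length_eq] at this
      omega
  | succ L ih =>
    intro v hv
    by_cases h : v = r₀
    · exact ⟨0, h⟩
    · have hlen := cpath_parentFun hG (r₀ := r₀) h
      obtain ⟨k, hk⟩ := ih (parentFun hG r₀ v) (by omega)
      exact ⟨k + 1, by rwa [Function.iterate_succ_apply]⟩

lemma treeGraph_parentFun (hG : G.IsTree) : treeGraph (parentFun hG r₀) = G := by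
  ext a b
  rw [treeGraph_adj]
  constructor
  · rintro ⟨hne, h | h⟩
    · have ha : a ≠ r₀ := by
        intro h'; subst h'
        rw [parentFun_root hG] at h
        exact hne h
      rw [← h]
      exact parentFun_adj hG ha
    · have hb : b ≠ r₀ := by
        intro h'; subst h'
        rw [parentFun_root hG] at h
        exact hne h.symm
      rw [← h]
      exact (parentFun_adj hG hb).symm
  · intro hadj
    refine ⟨hadj.ne, ?_⟩
    by_cases hmem : a ∈ (cpath hG r₀ b).support
    · right
      have hb : b ≠ r₀ := by
        intro h'; subst h'
        rw [cpath_root hG] at hmem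
        simp at hmem
        exact hadj.ne hmem
      have htake : ((cpath hG r₀ b).takeUntil a hmem).IsPath :=
        (cpath_isPath hG b).takeUntil hmem
      have hsingle := hG.IsAcyclic.path_unique ⟨_, htake⟩ (SimpleGraph.Path.singleton hadj.symm)
      have heq : (cpath hG r₀ b).takeUntil a hmem = Walk.cons hadj.symm Walk.nil :=
        congrArg Subtype.val hsingle
      have hspec := ((cpath hG r₀ b).take_spec hmem).symm
      rw [heq] at hspec
      rw [parentFun_of_ne hG hb, hspec]
      simp [Walk.cons_append]
    · left
      have hpath : (Walk.cons hadj (cpath hG r₀ b)).IsPath :=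
        (cpath_isPath hG b).cons hmem
      have ha : a ≠ r₀ := by
        intro h'; subst h'
        have := cpath_unique hG _ hpath
        rw [cpath_root hG] at this
        have := congrArg Walk.length this
        simp at this
      rw [parentFun_of_ne hG ha, ← cpath_unique hG _ hpath]
      simp

lemma parentFun_treeGraph {p : V → V} (hp : IsRooted p r₀)
    (hG : (treeGraph p).IsTree) : parentFun hG r₀ = p := by
  have key : ∀ (k : ℕ) (v : V), ht hp v ≤ k → ∃ w : (treeGraph p).Walk v r₀, w.IsPath ∧
      (∀ x ∈ w.support, ht hp x ≤ ht hp v) ∧ (v ≠ r₀ → w.getVert 1 = p v) := by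
    intro k
    induction k with
    | zero =>
      intro v hv
      have : v = r₀ := (ht_eq_zero_iff hp).1 (by omega)
      subst this
      exact ⟨Walk.nil, Walk.IsPath.nil, by simp, fun h => absurd rfl h⟩
    | succ k ih =>
      intro v hv
      by_cases h : v = r₀
      · subst h
        exact ⟨Walk.nil, Walk.IsPath.nil, by simp, fun h => absurd rfl h⟩
      · have hht := ht_apply hp h
        obtain ⟨w', hw'path, hw'sup, _⟩ := ih (p v) (by omega)
        have hadj : (treeGraph p).Adj v (p v) := by
          rw [treeGraph_adj]
          exact ⟨(apply_ne_self hp h).symm, Or.inl rfl⟩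
        have hvmem : v ∉ w'.support := by
          intro hmem
          have := hw'sup v hmem
          omega
        refine ⟨Walk.cons hadj w', hw'path.cons hvmem, ?_, fun _ => by simp⟩
        intro x hx
        rw [Walk.support_cons, List.mem_cons] at hx
        rcases hx with rfl | hx
        · exact le_rfl
        · have := hw'sup x hx
          omega
  funext v
  by_cases h : v = r₀
  · subst h
    rw [parentFun_root hG, hp.1]
  · obtain ⟨w, hwpath, _, hw1⟩ := key (ht hp v) v le_rfl
    rw [parentFun_of_ne hG h, ← cpath_unique hG w hwpath]
    exact hw1 h

/-- The equivalence between rooted parent functions (with fixed root) and trees. -/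
noncomputable def rootedEquivTree (r₀ : V) :
    {p : V → V // IsRooted p r₀} ≃ {G : SimpleGraph V // G.IsTree} where
  toFun q := ⟨treeGraph q.1, treeGraph_isTree q.2⟩
  invFun Gh := ⟨parentFun Gh.2 r₀, parentFun_isRooted Gh.2⟩
  left_inv q := Subtype.ext (parentFun_treeGraph q.2 _)
  right_inv Gh := Subtype.ext (treeGraph_parentFun Gh.2)

end Parent

section Conj

lemma conj_iterate (σ : Equiv.Perm V) (p : V → V) (k : ℕ) (v : V) :
    (⇑σ ∘ p ∘ ⇑σ.symm)^[k] v = σ (p^[k] (σ.symm v)) := by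
  induction k generalizing v with
  | zero => simp
  | succ k ih =>
    rw [Function.iterate_succ_apply, ih]
    simp [Function.iterate_succ_apply]

lemma isRooted_conj (σ : Equiv.Perm V) {p : V → V} {r : V} (hp : IsRooted p r) :
    IsRooted (⇑σ ∘ p ∘ ⇑σ.symm) (σ r) := by
  constructor
  · simp [hp.1]
  · intro v
    obtain ⟨k, hk⟩ := hp.2 (σ.symm v)
    exact ⟨k, by rw [conj_iterate, hk]⟩

/-- Rooted functions with arbitrary root are a product: root × rooted functions at `r₀`. -/
noncomputable def rootedPairEquiv (r₀ : V) :
    {q : V × (V → V) // IsRooted q.2 q.1} ≃ V × {p : V → V // IsRooted p r₀} where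
  toFun q := ⟨q.1.1, ⟨⇑(Equiv.swap r₀ q.1.1) ∘ q.1.2 ∘ ⇑(Equiv.swap r₀ q.1.1), by
    have := isRooted_conj (Equiv.swap r₀ q.1.1) q.2
    rwa [Equiv.swap_apply_right, Equiv.symm_swap] at this⟩⟩
  invFun q := ⟨(q.1, ⇑(Equiv.swap r₀ q.1) ∘ q.2.1 ∘ ⇑(Equiv.swap r₀ q.1)), by
    have := isRooted_conj (Equiv.swap r₀ q.1) q.2.2
    rwa [Equiv.swap_apply_left, Equiv.symm_swap] at this⟩
  left_inv q := by
    apply Subtype.ext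
    refine Prod.ext rfl ?_
    funext v
    simp
  right_inv q := by
    refine Prod.ext rfl ?_
    apply Subtype.ext
    funext v
    simp

end Conj

section Joyal
variable [Fintype V] [Nonempty V]

/-- The periodic points of `f`. -/
noncomputable def perF (f : V → V) : Finset V :=
  Finset.univ.filter (fun v => ∃ k, 0 < k ∧ f^[k] v = v)

lemma mem_perF {f : V → V} {v : V} : v ∈ perF f ↔ ∃ k, 0 < k ∧ f^[k] v = v := by
  simp [perF]

lemma apply_mem_perF {f : V → V} {v : V} (hv : v ∈ perF f) : f v ∈ perF f := by
  rw [mem_perF] at hv ⊢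
  obtain ⟨k, hk, h⟩ := hv
  exact ⟨k, hk, by rw [← Function.iterate_succ_apply, Function.iterate_succ_apply', h]⟩

lemma exists_iterate_mem_perF (f : V → V) (v : V) : ∃ i, f^[i] v ∈ perF f := by
  obtain ⟨i, j, hne, h⟩ := Finite.exists_ne_map_eq_of_infinite (fun i : ℕ => f^[i] v)
  wlog hij : i < j generalizing i j
  · exact this j i hne.symm h.symm (by omega)
  refine ⟨i, mem_perF.2 ⟨j - i, by omega, ?_⟩⟩
  rw [← Function.iterate_add_apply, show j - i + i = j by omega]
  exact h.symm

lemma perF_nonempty (f : V → V) : (perF f).Nonempty := by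
  obtain ⟨i, h⟩ := exists_iterate_mem_perF f (Classical.arbitrary V)
  exact ⟨_, h⟩

lemma perF_card_pos (f : V → V) : 0 < (perF f).card :=
  Finset.card_pos.2 (perF_nonempty f)

lemma perF_injOn (f : V → V) {v w : V} (hv : v ∈ perF f) (hw : w ∈ perF f)
    (h : f v = f w) : v = w := by
  rw [mem_perF] at hv hw
  obtain ⟨a, ha, hva⟩ := hv
  obtain ⟨b, hb, hwb⟩ := hw
  have hvab : f^[a * b] v = v := by
    rw [Function.iterate_mul]; exact Function.iterate_fixed hva b
  have hwab : f^[a * b] w = w := by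
    rw [mul_comm, Function.iterate_mul]; exact Function.iterate_fixed hwb a
  have hpos := Nat.mul_pos ha hb
  have key : ∀ x : V, f^[a * b] x = f^[a * b - 1] (f x) := fun x => by
    conv_lhs => rw [show a * b = (a * b - 1) + 1 by omega]
    rw [Function.iterate_succ_apply]
  calc v = f^[a * b] v := hvab.symm
    _ = f^[a * b - 1] (f v) := key v
    _ = f^[a * b - 1] (f w) := by rw [h]
    _ = f^[a * b] w := (key w).symm
    _ = w := hwab

/-- `f` restricted to its periodic points, as a permutation. -/
noncomputable def perMap (f : V → V) : ↥(perF f) ≃ ↥(perF f) :=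
  Equiv.ofBijective (fun x => ⟨f x, apply_mem_perF x.2⟩)
    (Finite.injective_iff_bijective.1 (fun x y h =>
      Subtype.ext (perF_injOn f x.2 y.2 (congrArg Subtype.val h))))

lemma perMap_apply (f : V → V) (x : ↥(perF f)) : (perMap f x : V) = f x := rfl

lemma mem_perF_of_mapsTo {f : V → V} {s : Finset V} (hmap : ∀ x ∈ s, f x ∈ s)
    (hinj : ∀ x ∈ s, ∀ y ∈ s, f x = f y → x = y) {v : V} (hv : v ∈ s) : v ∈ perF f := by
  have hiter : ∀ i, f^[i] v ∈ s := by
    intro i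
    induction i with
    | zero => exact hv
    | succ i ih => rw [Function.iterate_succ_apply']; exact hmap _ ih
  obtain ⟨i, j, hne, h⟩ := Finite.exists_ne_map_eq_of_infinite (fun i : ℕ => f^[i] v)
  wlog hij : i < j generalizing i j
  · exact this j i hne.symm h.symm (by omega)
  have cancel : ∀ a b, f^[a] v = f^[a + b] v → v = f^[b] v := by
    intro a
    induction a with
    | zero => intro b h; simpa using h
    | succ a ih =>
      intro b h
      rw [Function.iterate_succ_apply', show a + 1 + b = (a + b) + 1 by omega,
        Function.iterate_succ_apply'] at h
      exact ih b (hinj _ (hiter a) _ (hiter (a + b)) h)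
  refine mem_perF.2 ⟨j - i, by omega, ?_⟩
  exact (cancel i (j - i) (by rw [show i + (j - i) = j by omega]; exact h)).symm

/-- Canonical enumeration of a finset, with index clamped into range. -/
noncomputable def senum (s : Finset V) (i : ℕ) : V :=
  if h : 0 < s.card then (s.equivFin.symm ⟨min i (s.card - 1), by omega⟩ : V)
  else Classical.arbitrary V

lemma senum_pos {s : Finset V} (h : 0 < s.card) (i : ℕ) :
    senum s i = ((s.equivFin.symm ⟨min i (s.card - 1), by omega⟩ : ↥s) : V) := dif_pos h

lemma senum_mem {s : Finset V} (h : 0 < s.card) (i : ℕ) : senum s i ∈ s := by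
  rw [senum, dif_pos h]
  exact Finset.coe_mem _

lemma senum_clamp (s : Finset V) (i : ℕ) : senum s (min i (s.card - 1)) = senum s i := by
  by_cases h : 0 < s.card
  · rw [senum, senum, dif_pos h, dif_pos h]
    exact congrArg (fun x : Fin s.card => ((s.equivFin.symm x : ↥s) : V))
      (Fin.ext (by simp))
  · rw [senum, senum, dif_neg h, dif_neg h]

lemma senum_inj {s : Finset V} {i j : ℕ} (h : 0 < s.card) (hi : i ≤ s.card - 1)
    (hj : j ≤ s.card - 1) (he : senum s i = senum s j) : i = j := by
  rw [senum, senum, dif_pos h, dif_pos h] at he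
  have h2 := s.equivFin.symm.injective (Subtype.coe_injective he)
  have h3 := congrArg Fin.val h2
  simp at h3
  omega

lemma senum_idx {s : Finset V} (x : ↥s) : senum s ((s.equivFin x : Fin s.card) : ℕ) = x := by
  have h : 0 < s.card := Finset.card_pos.2 ⟨x, x.2⟩
  rw [senum, dif_pos h]
  have hlt := (s.equivFin x).isLt
  have h2 : (⟨min ((s.equivFin x : Fin s.card) : ℕ) (s.card - 1), by omega⟩ : Fin s.card)
      = s.equivFin x := Fin.ext (by simp; omega)
  rw [h2, Equiv.symm_apply_apply]

/-- The "spine" of `f` : the cycle part of `f` written out along the canonical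
enumeration of the periodic points. -/
noncomputable def spine (f : V → V) (i : ℕ) : V := f (senum (perF f) i)

/-- Position of a periodic point on the spine. -/
noncomputable def idx (f : V → V) (v : V) (hv : v ∈ perF f) : ℕ :=
  (((perF f).equivFin ((perMap f).symm ⟨v, hv⟩) : Fin (perF f).card) : ℕ)

lemma spine_mem (f : V → V) (i : ℕ) : spine f i ∈ perF f :=
  apply_mem_perF (senum_mem (perF_card_pos f) i)

lemma idx_le (f : V → V) (v : V) (hv : v ∈ perF f) : idx f v hv ≤ (perF f).card - 1 := by
  have := (((perF f).equivFin ((perMap f).symm ⟨v, hv⟩))).isLt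
  unfold idx
  omega

lemma spine_idx (f : V → V) (v : V) (hv : v ∈ perF f) : spine f (idx f v hv) = v := by
  unfold spine idx
  rw [senum_idx]
  calc f ↑((perMap f).symm ⟨v, hv⟩) = ((perMap f) ((perMap f).symm ⟨v, hv⟩) : V) := rfl
    _ = v := by rw [Equiv.apply_symm_apply]

lemma spine_clamp (f : V → V) (i : ℕ) :
    spine f (min i ((perF f).card - 1)) = spine f i :=
  congrArg f (senum_clamp _ _)

lemma spine_inj (f : V → V) {i j : ℕ} (hi : i ≤ (perF f).card - 1)
    (hj : j ≤ (perF f).card - 1) (h : spine f i = spine f j) : i = j := by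
  apply senum_inj (perF_card_pos f) hi hj
  apply perF_injOn f (senum_mem (perF_card_pos f) i) (senum_mem (perF_card_pos f) j) h

lemma spine_eq_of_min (f : V → V) {i j : ℕ}
    (h : min i ((perF f).card - 1) = min j ((perF f).card - 1)) : spine f i = spine f j := by
  rw [← spine_clamp f i, ← spine_clamp f j, h]

lemma idx_spine (f : V → V) (i : ℕ) (hv : spine f i ∈ perF f) :
    idx f (spine f i) hv = min i ((perF f).card - 1) := by
  apply spine_inj f (idx_le f _ hv) (by omega)
  rw [spine_idx]
  exact (spine_clamp f i).symm

/-- The Joyal components of an endofunction: head, root (= tail), parent function. -/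
noncomputable def Ju (f : V → V) : V := spine f 0

noncomputable def Jr (f : V → V) : V := spine f ((perF f).card - 1)

noncomputable def Jp (f : V → V) : V → V :=
  fun v => if hv : v ∈ perF f then spine f (idx f v hv + 1) else f v

lemma Jp_of_not_mem {f : V → V} {v : V} (hv : v ∉ perF f) : Jp f v = f v := dif_neg hv

lemma Jp_of_mem {f : V → V} {v : V} (hv : v ∈ perF f) :
    Jp f v = spine f (idx f v hv + 1) := dif_pos hv

lemma Jp_spine (f : V → V) (i : ℕ) : Jp f (spine f i) = spine f (i + 1) := by
  rw [Jp_of_mem (spine_mem f i), idx_spine f i]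
  have hpos := perF_card_pos f
  exact spine_eq_of_min f (by omega)

lemma Jp_iterate (f : V → V) (k i : ℕ) : (Jp f)^[k] (spine f i) = spine f (i + k) := by
  induction k with
  | zero => simp
  | succ k ih =>
    rw [Function.iterate_succ_apply', ih, Jp_spine, Nat.add_assoc]

lemma Jp_reach_perF (f : V → V) (v : V) : ∃ i, (Jp f)^[i] v ∈ perF f := by
  suffices H : ∀ (t : ℕ) (v : V), f^[t] v ∈ perF f → ∃ i, (Jp f)^[i] v ∈ perF f by
    obtain ⟨t, ht⟩ := exists_iterate_mem_perF f v
    exact H t v ht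
  intro t
  induction t with
  | zero => intro v hv; exact ⟨0, hv⟩
  | succ t ih =>
    intro v hv
    by_cases h : v ∈ perF f
    · exact ⟨0, h⟩
    · obtain ⟨i, hi⟩ := ih (f v) (by rwa [← Function.iterate_succ_apply])
      exact ⟨i + 1, by rwa [Function.iterate_succ_apply, Jp_of_not_mem h]⟩

lemma Jp_rooted (f : V → V) : IsRooted (Jp f) (Jr f) := by
  have hpos := perF_card_pos f
  constructor
  · rw [Jr, Jp_spine]
    exact spine_eq_of_min f (by omega)
  · intro v
    obtain ⟨i, hi⟩ := Jp_reach_perF f v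
    refine ⟨(perF f).card + i, ?_⟩
    rw [Function.iterate_add_apply]
    rw [← spine_idx f _ hi, Jp_iterate]
    have := idx_le f _ hi
    exact spine_eq_of_min f (by omega)

section Kside
variable {p : V → V} {r : V}

/-- The orbit of `u` under the parent function `p`, i.e. the path from `u` to the root. -/
noncomputable def orbF (hp : IsRooted p r) (u : V) : Finset V :=
  (Finset.range (ht hp u + 1)).image (fun k => p^[k] u)

lemma mem_orbF (hp : IsRooted p r) (u : V) {v : V} :
    v ∈ orbF hp u ↔ ∃ k, k ≤ ht hp u ∧ p^[k] u = v := by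
  simp [orbF, Nat.lt_succ_iff]

lemma orbF_card (hp : IsRooted p r) (u : V) : (orbF hp u).card = ht hp u + 1 := by
  rw [orbF, Finset.card_image_of_injOn, Finset.card_range]
  intro i hi j hj h
  simp only [Finset.coe_range, Set.mem_Iio, Nat.lt_succ_iff] at hi hj
  exact iterate_inj hp hi hj h

lemma root_mem_orbF (hp : IsRooted p r) (u : V) : r ∈ orbF hp u :=
  (mem_orbF hp u).2 ⟨ht hp u, le_rfl, iterate_ht hp u⟩

lemma orbF_card_pos (hp : IsRooted p r) (u : V) : 0 < (orbF hp u).card := by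
  rw [orbF_card]; omega

/-- The Joyal decoding: reconstruct an endofunction from a head vertex and a rooted
parent function. -/
noncomputable def Kf (hp : IsRooted p r) (u : V) : V → V :=
  fun v => if hv : v ∈ orbF hp u
    then p^[(((orbF hp u).equivFin ⟨v, hv⟩ : Fin (orbF hp u).card) : ℕ)] u else p v

lemma Kf_of_not_mem (hp : IsRooted p r) (u : V) {v : V} (hv : v ∉ orbF hp u) :
    Kf hp u v = p v := dif_neg hv

lemma Kf_of_mem (hp : IsRooted p r) (u : V) {v : V} (hv : v ∈ orbF hp u) :
    Kf hp u v = p^[(((orbF hp u).equivFin ⟨v, hv⟩ : Fin (orbF hp u).card) : ℕ)] u :=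
  dif_pos hv

lemma equivFin_index_le (s : Finset V) (x : ↥s) :
    ((s.equivFin x : Fin s.card) : ℕ) ≤ s.card - 1 := by
  have := (s.equivFin x).isLt
  omega

lemma Kf_mem_of_mem (hp : IsRooted p r) (u : V) {v : V} (hv : v ∈ orbF hp u) :
    Kf hp u v ∈ orbF hp u := by
  rw [Kf_of_mem hp u hv]
  refine (mem_orbF hp u).2 ⟨_, ?_, rfl⟩
  have := equivFin_index_le (orbF hp u) ⟨v, hv⟩
  have hc := orbF_card hp u
  omega

lemma Kf_injOn (hp : IsRooted p r) (u : V) {v w : V} (hv : v ∈ orbF hp u)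
    (hw : w ∈ orbF hp u) (h : Kf hp u v = Kf hp u w) : v = w := by
  rw [Kf_of_mem hp u hv, Kf_of_mem hp u hw] at h
  have hc := orbF_card hp u
  have h1 := equivFin_index_le (orbF hp u) ⟨v, hv⟩
  have h2 := equivFin_index_le (orbF hp u) ⟨w, hw⟩
  have h3 := iterate_inj hp (v := u) (by omega) (by omega) h
  have h4 : (orbF hp u).equivFin ⟨v, hv⟩ = (orbF hp u).equivFin ⟨w, hw⟩ := Fin.ext h3
  have := (orbF hp u).equivFin.injective h4
  exact congrArg Subtype.val this

lemma perF_Kf (hp : IsRooted p r) (u : V) : perF (Kf hp u) = orbF hp u := by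
  apply Finset.Subset.antisymm
  · intro v hv
    by_contra hvN
    obtain ⟨k, hk0, hk⟩ := mem_perF.1 hv
    have hex : ∃ i, p^[i] v ∈ orbF hp u :=
      ⟨ht hp v, by rw [iterate_ht]; exact root_mem_orbF hp u⟩
    have hts := Nat.find_spec hex
    set t := Nat.find hex with htdef
    have hmin : ∀ i < t, p^[i] v ∉ orbF hp u := fun i hi => Nat.find_min hex hi
    have heq : ∀ i ≤ t, (Kf hp u)^[i] v = p^[i] v := by
      intro i hi
      induction i with
      | zero => rfl
      | succ i ih =>
        rw [Function.iterate_succ_apply', Function.iterate_succ_apply', ih (by omega)]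
        exact Kf_of_not_mem hp u (hmin i (by omega))
    by_cases hkt : t ≤ k
    · have h1 : (Kf hp u)^[t] v ∈ orbF hp u := by rw [heq t le_rfl]; exact hts
      have h2 : ∀ d, (Kf hp u)^[t + d] v ∈ orbF hp u := by
        intro d
        induction d with
        | zero => simpa using h1
        | succ d ih =>
          rw [show t + (d + 1) = (t + d) + 1 by omega, Function.iterate_succ_apply']
          exact Kf_mem_of_mem hp u ih
      have h3 := h2 (k - t)
      rw [show t + (k - t) = k by omega, hk] at h3
      exact hvN h3
    · push_neg at hkt
      have hpk : p^[k] v = v := by rw [← heq k (by omega), hk]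
      have h5 : p^[k * (ht hp v + 1)] v = v := by
        rw [Function.iterate_mul]; exact Function.iterate_fixed hpk _
      have h6 : p^[k * (ht hp v + 1)] v = r := by
        apply iterate_of_ht_le hp
        have : ht hp v + 1 ≤ k * (ht hp v + 1) := Nat.le_mul_of_pos_left _ hk0
        omega
      have hvr : v = r := by rw [← h5, h6]
      exact hvN (hvr ▸ root_mem_orbF hp u)
  · intro v hv
    exact mem_perF_of_mapsTo (fun x hx => Kf_mem_of_mem hp u hx)
      (fun x hx y hy h => Kf_injOn hp u hx hy h) hv

lemma senum_orb (hp : IsRooted p r) (u : V) (i : ℕ) :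
    Kf hp u (senum (orbF hp u) i) = p^[min i (ht hp u)] u := by
  have hpos := orbF_card_pos hp u
  have hmem := senum_mem hpos i
  rw [Kf_of_mem hp u hmem]
  have h2 : (⟨senum (orbF hp u) i, hmem⟩ : ↥(orbF hp u)) =
      (orbF hp u).equivFin.symm ⟨min i ((orbF hp u).card - 1), by omega⟩ :=
    Subtype.ext (senum_pos hpos i)
  rw [h2, Equiv.apply_symm_apply]
  have hc := orbF_card hp u
  congr 1
  simp [hc]

lemma spine_Kf (hp : IsRooted p r) (u : V) (i : ℕ) :
    spine (Kf hp u) i = p^[min i (ht hp u)] u := by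
  rw [spine, perF_Kf hp u]
  exact senum_orb hp u i

lemma Ju_Kf (hp : IsRooted p r) (u : V) : Ju (Kf hp u) = u := by
  rw [Ju, spine_Kf]
  simp

lemma Jr_Kf (hp : IsRooted p r) (u : V) : Jr (Kf hp u) = r := by
  rw [Jr, perF_Kf hp u, orbF_card hp u, spine_Kf]
  simp [iterate_ht hp u]

lemma Jp_Kf (hp : IsRooted p r) (u : V) : Jp (Kf hp u) = p := by
  funext v
  by_cases hv : v ∈ perF (Kf hp u)
  · rw [Jp_of_mem hv]
    have hvN : v ∈ orbF hp u := by rwa [perF_Kf hp u] at hv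
    have hidx := idx_le (Kf hp u) v hv
    have hcard : (perF (Kf hp u)).card = ht hp u + 1 := by rw [perF_Kf hp u, orbF_card hp u]
    have hsp := spine_idx (Kf hp u) v hv
    rw [spine_Kf hp u] at hsp
    set j := idx (Kf hp u) v hv with hjdef
    have hj : j ≤ ht hp u := by omega
    rw [min_eq_left hj] at hsp
    rw [spine_Kf hp u]
    by_cases hj2 : j + 1 ≤ ht hp u
    · rw [min_eq_left hj2, Function.iterate_succ_apply', hsp]
    · have hj3 : j = ht hp u := by omega
      have hvr : v = r := by rw [← hsp, hj3]; exact iterate_ht hp u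
      rw [min_eq_right (by omega), iterate_ht hp u, hvr, hp.1]
  · rw [Jp_of_not_mem hv]
    rw [perF_Kf hp u] at hv
    exact Kf_of_not_mem hp u hv

lemma equivFin_congr {s t : Finset V} (h : s = t) {v : V} (hv : v ∈ s) (hv' : v ∈ t) :
    ((s.equivFin ⟨v, hv⟩ : Fin s.card) : ℕ) = ((t.equivFin ⟨v, hv'⟩ : Fin t.card) : ℕ) := by
  subst h; rfl

lemma ht_Ju (f : V → V) : ht (Jp_rooted f) (Ju f) = (perF f).card - 1 := by
  have hpos := perF_card_pos f
  have h1 : (Jp f)^[(perF f).card - 1] (Ju f) = Jr f := by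
    rw [Ju, Jp_iterate]
    exact spine_eq_of_min f (by omega)
  have hle := ht_le (Jp_rooted f) h1
  have h2 : (Jp f)^[ht (Jp_rooted f) (Ju f)] (Ju f) = Jr f := iterate_ht (Jp_rooted f) (Ju f)
  rw [Ju, Jp_iterate] at h2
  have := spine_inj f (i := 0 + ht (Jp_rooted f) (Ju f)) (by omega) (by omega) (h2.trans rfl)
  omega

lemma orb_Ju (f : V → V) : orbF (Jp_rooted f) (Ju f) = perF f := by
  ext v
  rw [mem_orbF, ht_Ju f]
  constructor
  · rintro ⟨k, hk, rfl⟩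
    rw [Ju, Jp_iterate]
    exact spine_mem f _
  · intro hv
    refine ⟨idx f v hv, idx_le f v hv, ?_⟩
    rw [Ju, Jp_iterate, Nat.zero_add]
    exact spine_idx f v hv

lemma Kf_Jf (f : V → V) : Kf (Jp_rooted f) (Ju f) = f := by
  funext v
  by_cases hv : v ∈ perF f
  · have hvo : v ∈ orbF (Jp_rooted f) (Ju f) := by rw [orb_Ju f]; exact hv
    rw [Kf_of_mem _ _ hvo]
    rw [equivFin_congr (orb_Ju f) hvo hv]
    rw [Ju, Jp_iterate, Nat.zero_add]
    rw [spine, senum_idx]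
  · have hvo : v ∉ orbF (Jp_rooted f) (Ju f) := by rw [orb_Ju f]; exact hv
    rw [Kf_of_not_mem _ _ hvo, Jp_of_not_mem hv]

end Kside

/-- **Joyal's bijection**: endofunctions of `V` are in bijection with doubly-rooted
labeled trees, i.e. with a head vertex together with a rooted parent function. -/
noncomputable def joyal : (V → V) ≃ V × {q : V × (V → V) // IsRooted q.2 q.1} where
  toFun f := (Ju f, ⟨(Jr f, Jp f), Jp_rooted f⟩)
  invFun x := Kf x.2.2 x.1
  left_inv f := Kf_Jf f
  right_inv x := by
    obtain ⟨u, ⟨⟨r, p⟩, hp⟩⟩ := x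
    exact Prod.ext (Ju_Kf hp u) (Subtype.ext (Prod.ext (Jr_Kf hp u) (Jp_Kf hp u)))

end Joyal
end CayleyAux


/-- **Cayley's formula.** For any positive integer `n`, the number of trees on `n`
labeled vertices (connected acyclic simple graphs on the vertex set `Fin n`) is
exactly `n ^ (n - 2)`. -/
theorem cayley_formula (n : ℕ) (hn : 0 < n) :
    {G : SimpleGraph (Fin n) | G.IsTree}.ncard = n ^ (n - 2) := by
  have hne : Nonempty (Fin n) := ⟨⟨0, hn⟩⟩
  set z : Fin n := ⟨0, hn⟩ with hz
  classical
  have h1 : {G : SimpleGraph (Fin n) | G.IsTree}.ncard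
      = Nat.card {p : Fin n → Fin n // CayleyAux.IsRooted p z} := by
    rw [← Nat.card_coe_set_eq]
    exact Nat.card_congr (CayleyAux.rootedEquivTree z).symm
  have h2 : Nat.card (Fin n → Fin n)
      = Nat.card (Fin n × {q : (Fin n) × (Fin n → Fin n) // CayleyAux.IsRooted q.2 q.1}) :=
    Nat.card_congr CayleyAux.joyal
  have h3 : Nat.card {q : (Fin n) × (Fin n → Fin n) // CayleyAux.IsRooted q.2 q.1}
      = Nat.card (Fin n × {p : Fin n → Fin n // CayleyAux.IsRooted p z}) :=
    Nat.card_congr (CayleyAux.rootedPairEquiv z)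
  set T := Nat.card {p : Fin n → Fin n // CayleyAux.IsRooted p z} with hT
  have h4 : Nat.card (Fin n → Fin n) = n ^ n := by
    simp [Nat.card_eq_fintype_card]
  have h5 : n ^ n = n * (n * T) := by
    rw [← h4, h2, Nat.card_prod, h3, Nat.card_prod, Nat.card_eq_fintype_card, Fintype.card_fin]
  rw [h1]
  rcases Nat.lt_or_ge n 2 with h | h
  · have hn1 : n = 1 := by omega
    subst hn1
    simp at h5 ⊢
    omega
  · have hsplit : n ^ n = n ^ (n - 2) * n ^ 2 := (pow_sub_mul_pow n h).symm
    have hcancel : n ^ (n - 2) * n ^ 2 = T * n ^ 2 := by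
      rw [← hsplit, h5]; ring
    exact (Nat.eq_of_mul_eq_mul_right (by positivity) hcancel).symm
end

section
/- For n ≥ 2, the mapping that sends an [n−1]-map f to the multigraph on vertex set {0, 1, …, n−1} with an edge between i and f(i) for each i ∈ [n−1] restricts to a bijection between the set of cycle-free [n−1]-maps and the set of trees on the n vertices labeled 0, 1, …, n−1; the inverse sends a tree to the map associating each vertex i ≠ 0 with the second vertex on the unique path from i to 0. -/
/-- The simple graph on vertex set `{0, 1, …, n-1}` obtained from an `[n-1]`-map `f`
by putting an edge between `i` and `f i` for each `i ∈ [n-1] = {1, …, n-1}`. -/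
def mapGraph (n : ℕ) (f : ℕ → ℕ) : SimpleGraph (Fin n) where
  Adj a b := a ≠ b ∧ (((a : ℕ) ≠ 0 ∧ f a = (b : ℕ)) ∨ ((b : ℕ) ≠ 0 ∧ f b = (a : ℕ)))
  symm := by
    constructor
    rintro a b ⟨hab, h⟩
    exact ⟨hab.symm, h.symm⟩
  loopless := by
    constructor
    rintro a ⟨hab, -⟩
    exact hab rfl

open SimpleGraph Walk Function

/-- peel off the first edge of a walk between distinct vertices -/
lemma walk_peel {V : Type*} {G : SimpleGraph V} {v w : V} (p : G.Walk v w) (h : v ≠ w) :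
    ∃ (u : V) (ha : G.Adj v u) (q : G.Walk u w), p = Walk.cons ha q := by
  cases p with
  | nil => exact absurd rfl h
  | cons ha q => exact ⟨_, ha, q, rfl⟩

lemma path_loop_eq_nil {V : Type*} {G : SimpleGraph V} {v : V} (p : G.Walk v v)
    (hp : p.IsPath) : p = Walk.nil := by
  cases p with
  | nil => rfl
  | cons ha q =>
    rw [Walk.cons_isPath_iff] at hp
    exact absurd q.end_mem_support hp.2

section
variable {n : ℕ} {f : ℕ → ℕ}

/-- depth of a vertex: least m with f^[m] i = 0 -/
noncomputable def mdepth (f : ℕ → ℕ) (i : ℕ) : ℕ := sInf {m | f^[m] i = 0}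

lemma bound_lt (hn : 2 ≤ n) (hf1 : ∀ i ∈ Finset.Ico 1 n, f i < n)
    (hf2 : ∀ i ∉ Finset.Ico 1 n, f i = 0) {i : ℕ} (hi : i < n) : f i < n := by
  by_cases h : i ∈ Finset.Ico 1 n
  · exact hf1 i h
  · rw [hf2 i h]; omega

lemma iter_lt (hn : 2 ≤ n) (hf1 : ∀ i ∈ Finset.Ico 1 n, f i < n)
    (hf2 : ∀ i ∉ Finset.Ico 1 n, f i = 0) (m : ℕ) {i : ℕ} (hi : i < n) : f^[m] i < n := by
  induction m with
  | zero => simpa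
  | succ m ih => rw [Function.iterate_succ_apply']; exact bound_lt hn hf1 hf2 ih

lemma depth_exists (hn : 2 ≤ n) (hf1 : ∀ i ∈ Finset.Ico 1 n, f i < n)
    (hf2 : ∀ i ∉ Finset.Ico 1 n, f i = 0) (hf3 : ¬ HasCycle (Finset.Ico 1 n) f)
    (i : ℕ) : ∃ m, f^[m] i = 0 := by
  by_cases hi : i < n
  · by_contra h
    push_neg at h
    have key : ∀ a b : Fin (n+1), (a : ℕ) < (b : ℕ) →
        f^[(a : ℕ)] i = f^[(b : ℕ)] i → False := by
      intro a b hab' he'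
      apply hf3
      refine ⟨(b : ℕ) - a, fun j => f^[(a : ℕ) + j] i, by omega, ?_, ?_, ?_⟩
      · intro j _
        simp only [Finset.mem_Ico]
        exact ⟨Nat.pos_of_ne_zero (h _), iter_lt hn hf1 hf2 _ hi⟩
      · intro j _
        exact (Function.iterate_succ_apply' f ((a:ℕ)+j) i).symm
      · calc f (f^[(a:ℕ) + ((b:ℕ) - (a:ℕ) - 1)] i)
            = f^[(a:ℕ) + ((b:ℕ) - (a:ℕ) - 1) + 1] i :=
              (Function.iterate_succ_apply' f _ i).symm
          _ = f^[(b:ℕ)] i := by rw [show (a:ℕ) + ((b:ℕ) - (a:ℕ) - 1) + 1 = (b:ℕ) by omega]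
          _ = f^[(a:ℕ) + 0] i := by rw [← he']; norm_num
    obtain ⟨a, b, hab, he⟩ := Fintype.exists_ne_map_eq_of_card_lt
      (fun j : Fin (n+1) => (⟨f^[(j : ℕ)] i, iter_lt hn hf1 hf2 _ hi⟩ : Fin n)) (by simp)
    have he' : f^[(a : ℕ)] i = f^[(b : ℕ)] i := congrArg Fin.val he
    have hne : (a : ℕ) ≠ (b : ℕ) := fun hv => hab (Fin.val_injective hv)
    rcases Nat.lt_or_ge (a : ℕ) (b : ℕ) with hlt | hge
    · exact key a b hlt he'
    · exact key b a (by omega) he'.symm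
  · refine ⟨1, ?_⟩
    simp only [Function.iterate_one]
    exact hf2 i (by simp only [Finset.mem_Ico]; omega)

variable (hn : 2 ≤ n) (hf1 : ∀ i ∈ Finset.Ico 1 n, f i < n)
    (hf2 : ∀ i ∉ Finset.Ico 1 n, f i = 0) (hf3 : ¬ HasCycle (Finset.Ico 1 n) f)

include hn hf1 hf2 hf3

lemma mdepth_iter (i : ℕ) : f^[mdepth f i] i = 0 :=
  Nat.sInf_mem (depth_exists hn hf1 hf2 hf3 i)

lemma mdepth_eq_zero_iff (i : ℕ) : mdepth f i = 0 ↔ i = 0 := by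
  constructor
  · intro h
    have := mdepth_iter hn hf1 hf2 hf3 i
    rwa [h, Function.iterate_zero_apply] at this
  · intro h
    subst h
    exact Nat.sInf_eq_zero.2 (Or.inl (by simp [Set.mem_setOf_eq]))

lemma mdepth_parent {i : ℕ} (hi : i ∈ Finset.Ico 1 n) : mdepth f (f i) + 1 = mdepth f i := by
  have h1 : i ≠ 0 := by simp only [Finset.mem_Ico] at hi; omega
  have hz : mdepth f i ≠ 0 := fun h => h1 ((mdepth_eq_zero_iff hn hf1 hf2 hf3 i).1 h)
  have hup : f^[mdepth f (f i) + 1] i = 0 := by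
    rw [Function.iterate_succ_apply]
    exact mdepth_iter hn hf1 hf2 hf3 (f i)
  have hle : mdepth f i ≤ mdepth f (f i) + 1 := Nat.sInf_le hup
  have hdn : f^[mdepth f i - 1] (f i) = 0 := by
    rw [← Function.iterate_succ_apply, Nat.succ_eq_add_one, Nat.sub_add_cancel (by omega)]
    exact mdepth_iter hn hf1 hf2 hf3 i
  have hge : mdepth f (f i) ≤ mdepth f i - 1 := Nat.sInf_le hdn
  omega

/-- Every edge of `mapGraph n f` joins a vertex with its `f`-parent. -/
lemma edge_struct {a b : Fin n} (hab : (mapGraph n f).Adj a b) :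
    (f (a : ℕ) = (b : ℕ) ∧ mdepth f (b : ℕ) + 1 = mdepth f (a : ℕ)) ∨
    (f (b : ℕ) = (a : ℕ) ∧ mdepth f (a : ℕ) + 1 = mdepth f (b : ℕ)) := by
  obtain ⟨-, ⟨ha0, hfa⟩ | ⟨hb0, hfb⟩⟩ := hab
  · left
    refine ⟨hfa, ?_⟩
    rw [← hfa]
    exact mdepth_parent hn hf1 hf2 hf3 (by simp only [Finset.mem_Ico]; exact ⟨by omega, a.isLt⟩)
  · right
    refine ⟨hfb, ?_⟩
    rw [← hfb]
    exact mdepth_parent hn hf1 hf2 hf3 (by simp only [Finset.mem_Ico]; exact ⟨by omega, b.isLt⟩)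

/-- On a path descending (in depth) the first step is forced to be `f`. -/
lemma first_step_aux : ∀ (L : ℕ) {v w : Fin n} (p : (mapGraph n f).Walk v w),
    p.length ≤ L → p.IsPath → mdepth f (w : ℕ) ≤ mdepth f (v : ℕ) → v ≠ w →
    ((p.getVert 1 : Fin n) : ℕ) = f (v : ℕ) := by
  intro L
  induction L with
  | zero =>
    intro v w p hL hp hd hvw
    obtain ⟨u, ha, q, rfl⟩ := walk_peel p hvw
    simp at hL
  | succ L ih =>
    intro v w p hL hp hd hvw
    obtain ⟨u, ha, q, rfl⟩ := walk_peel p hvw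
    rw [Walk.getVert_cons_succ, Walk.getVert_zero]
    rcases edge_struct hn hf1 hf2 hf3 ha with ⟨h1, _⟩ | ⟨h1, h2⟩
    · exact h1.symm
    · exfalso
      rw [Walk.cons_isPath_iff] at hp
      have huw : u ≠ w := by
        intro h
        subst h
        omega
      have hq1 : ((q.getVert 1 : Fin n) : ℕ) = f (u : ℕ) := by
        refine ih q ?_ hp.1 (by omega) huw
        simpa using hL
      apply hp.2
      rw [Walk.mem_support_iff_exists_getVert]
      refine ⟨1, ?_, ?_⟩
      · exact Fin.ext (by rw [hq1, h1])
      · by_contra hlen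
        exact huw (Walk.eq_of_length_eq_zero (p := q) (by omega))

lemma first_step {v w : Fin n} (p : (mapGraph n f).Walk v w)
    (hp : p.IsPath) (hd : mdepth f (w : ℕ) ≤ mdepth f (v : ℕ)) (hvw : v ≠ w) :
    ((p.getVert 1 : Fin n) : ℕ) = f (v : ℕ) :=
  first_step_aux hn hf1 hf2 hf3 p.length p le_rfl hp hd hvw

/-- Uniqueness of paths in `mapGraph n f`. -/
lemma path_unique_aux : ∀ (L : ℕ) {v w : Fin n} (p q : (mapGraph n f).Walk v w),
    p.length + q.length ≤ L → p.IsPath → q.IsPath → p = q := by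
  intro L
  induction L with
  | zero =>
    intro v w p q hL hp hq
    have h0 : p.length = 0 := by omega
    have hvw : v = w := Walk.eq_of_length_eq_zero h0
    subst hvw
    rw [path_loop_eq_nil p hp, path_loop_eq_nil q hq]
  | succ L ih =>
    intro v w p q hL hp hq
    by_cases hvw : v = w
    · subst hvw
      rw [path_loop_eq_nil p hp, path_loop_eq_nil q hq]
    rcases le_or_gt (mdepth f (w : ℕ)) (mdepth f (v : ℕ)) with hd | hd
    · have k1 := first_step hn hf1 hf2 hf3 p hp hd hvw
      have k2 := first_step hn hf1 hf2 hf3 q hq hd hvw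
      obtain ⟨u1, h1, r1, rfl⟩ := walk_peel p hvw
      obtain ⟨u2, h2, r2, rfl⟩ := walk_peel q hvw
      simp only [Walk.getVert_cons_succ, Walk.getVert_zero] at k1 k2
      obtain rfl : u1 = u2 := Fin.ext (k1.trans k2.symm)
      rw [Walk.cons_isPath_iff] at hp hq
      obtain rfl : r1 = r2 := by
        refine ih r1 r2 ?_ hp.1 hq.1
        simp only [Walk.length_cons] at hL
        omega
      rfl
    · have k1 := first_step hn hf1 hf2 hf3 p.reverse hp.reverse (le_of_lt hd) (Ne.symm hvw)
      have k2 := first_step hn hf1 hf2 hf3 q.reverse hq.reverse (le_of_lt hd) (Ne.symm hvw)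
      obtain ⟨u1, h1, r1, e1⟩ := walk_peel p.reverse (Ne.symm hvw)
      obtain ⟨u2, h2, r2, e2⟩ := walk_peel q.reverse (Ne.symm hvw)
      rw [e1] at k1
      rw [e2] at k2
      simp only [Walk.getVert_cons_succ, Walk.getVert_zero] at k1 k2
      obtain rfl : u1 = u2 := Fin.ext (k1.trans k2.symm)
      have hpr := hp.reverse
      have hqr := hq.reverse
      rw [e1, Walk.cons_isPath_iff] at hpr
      rw [e2, Walk.cons_isPath_iff] at hqr
      obtain rfl : r1 = r2 := by
        refine ih r1 r2 ?_ hpr.1 hqr.1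
        have l1 := congrArg Walk.length e1
        have l2 := congrArg Walk.length e2
        simp only [Walk.length_cons, Walk.length_reverse] at l1 l2
        omega
      have : p.reverse = q.reverse := by rw [e1, e2]
      have := congrArg Walk.reverse this
      rwa [Walk.reverse_reverse, Walk.reverse_reverse] at this

lemma path_unique {v w : Fin n} (p q : (mapGraph n f).Walk v w)
    (hp : p.IsPath) (hq : q.IsPath) : p = q :=
  path_unique_aux hn hf1 hf2 hf3 (p.length + q.length) p q le_rfl hp hq

lemma reach_zero_aux (hn0 : 0 < n) : ∀ (m i : ℕ) (hi : i < n), f^[m] i = 0 →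
    (mapGraph n f).Reachable ⟨i, hi⟩ ⟨0, hn0⟩ := by
  intro m
  induction m with
  | zero =>
    intro i hi h
    simp only [Function.iterate_zero_apply] at h
    subst h
    exact Reachable.refl _
  | succ m ih =>
    intro i hi h
    by_cases hi0 : i = 0
    · subst hi0
      exact Reachable.refl _
    · have hiS : i ∈ Finset.Ico 1 n := by simp only [Finset.mem_Ico]; omega
      have hfi : f i < n := hf1 i hiS
      have hne : i ≠ f i := by
        intro hfe
        have h2 := mdepth_parent hn hf1 hf2 hf3 hiS
        rw [← hfe] at h2
        omega
      have hadj : (mapGraph n f).Adj ⟨i, hi⟩ ⟨f i, hfi⟩ :=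
        ⟨by simp [Fin.ext_iff]; omega, Or.inl ⟨hi0, rfl⟩⟩
      exact hadj.reachable.trans (ih (f i) hfi (by rwa [← Function.iterate_succ_apply]))

lemma reach_zero (hn0 : 0 < n) (v : Fin n) :
    (mapGraph n f).Reachable v ⟨0, hn0⟩ := by
  obtain ⟨m, hm⟩ := depth_exists hn hf1 hf2 hf3 (v : ℕ)
  have := reach_zero_aux hn hf1 hf2 hf3 hn0 m (v : ℕ) v.isLt hm
  simpa using this

lemma mapGraph_isTree : (mapGraph n f).IsTree := by
  rw [SimpleGraph.isTree_iff_existsUnique_path]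
  refine ⟨⟨⟨0, by omega⟩⟩, fun v w => ?_⟩
  have hreach : (mapGraph n f).Reachable v w :=
    (reach_zero hn hf1 hf2 hf3 (by omega) v).trans
      (reach_zero hn hf1 hf2 hf3 (by omega) w).symm
  obtain ⟨wk⟩ := hreach
  exact ⟨wk.toPath, wk.toPath.2, fun q hq => path_unique hn hf1 hf2 hf3 q wk.toPath hq wk.toPath.2⟩

end

section Inverse

variable {n : ℕ} {G : SimpleGraph (Fin n)}

/-- The unique path between two vertices of a tree. -/
noncomputable def cpath (hG : G.IsTree) (v w : Fin n) : G.Walk v w :=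
  (hG.existsUnique_path v w).choose

lemma cpath_isPath (hG : G.IsTree) (v w : Fin n) : (cpath hG v w).IsPath :=
  (hG.existsUnique_path v w).choose_spec.1

lemma cpath_unique (hG : G.IsTree) {v w : Fin n} (q : G.Walk v w) (hq : q.IsPath) :
    q = cpath hG v w :=
  (hG.existsUnique_path v w).choose_spec.2 q hq

lemma cpath_loop (hG : G.IsTree) (v : Fin n) : cpath hG v v = Walk.nil :=
  (cpath_unique hG Walk.nil (by simp)).symm

/-- The parent of a vertex: second vertex on the unique path to the root. -/
noncomputable def par (hG : G.IsTree) (h0 : 0 < n) (v : Fin n) : Fin n :=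
  (cpath hG v ⟨0, h0⟩).getVert 1

lemma par_step (hG : G.IsTree) (h0 : 0 < n) {v : Fin n} (hv : v ≠ ⟨0, h0⟩) :
    ∃ h : G.Adj v (par hG h0 v),
      cpath hG v ⟨0, h0⟩ = Walk.cons h (cpath hG (par hG h0 v) ⟨0, h0⟩) := by
  obtain ⟨u, ha, q, e⟩ := walk_peel (cpath hG v ⟨0, h0⟩) hv
  have hu : u = par hG h0 v := by
    unfold par
    rw [e, Walk.getVert_cons_succ, Walk.getVert_zero]
  subst hu
  refine ⟨ha, ?_⟩
  rw [e]
  congr 1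
  have hq : q.IsPath := by
    have := cpath_isPath hG v ⟨0, h0⟩
    rw [e, Walk.cons_isPath_iff] at this
    exact this.1
  exact cpath_unique hG q hq

lemma par_adj (hG : G.IsTree) (h0 : 0 < n) {v : Fin n} (hv : v ≠ ⟨0, h0⟩) :
    G.Adj v (par hG h0 v) :=
  (par_step hG h0 hv).choose

lemma par_len (hG : G.IsTree) (h0 : 0 < n) {v : Fin n} (hv : v ≠ ⟨0, h0⟩) :
    (cpath hG (par hG h0 v) ⟨0, h0⟩).length + 1 = (cpath hG v ⟨0, h0⟩).length := by
  obtain ⟨h, e⟩ := par_step hG h0 hv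
  rw [e, Walk.length_cons]

/-- The inverse map: each nonzero vertex goes to its parent. -/
noncomputable def invf (hG : G.IsTree) (h0 : 0 < n) : ℕ → ℕ :=
  fun i => if h : 1 ≤ i ∧ i < n then (par hG h0 ⟨i, h.2⟩ : ℕ) else 0

lemma invf_mem1 (hG : G.IsTree) (h0 : 0 < n) :
    ∀ i ∈ Finset.Ico 1 n, invf hG h0 i < n := by
  intro i hi
  simp only [Finset.mem_Ico] at hi
  simp only [invf, dif_pos hi]
  exact (par hG h0 ⟨i, hi.2⟩).isLt

lemma invf_mem2 (hG : G.IsTree) (h0 : 0 < n) :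
    ∀ i ∉ Finset.Ico 1 n, invf hG h0 i = 0 := by
  intro i hi
  simp only [Finset.mem_Ico] at hi
  simp only [invf, dif_neg hi]

lemma invf_mem3 (hG : G.IsTree) (h0 : 0 < n) :
    ¬ HasCycle (Finset.Ico 1 n) (invf hG h0) := by
  rintro ⟨k, a, hk, haS, hstep, hloop⟩
  classical
  set lenF : ℕ → ℕ := fun i => if h : i < n then (cpath hG ⟨i, h⟩ ⟨0, h0⟩).length else 0
    with hlenF
  have key : ∀ j : ℕ, a j ∈ Finset.Ico 1 n →
      lenF (invf hG h0 (a j)) + 1 = lenF (a j) := by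
    intro j hj
    simp only [Finset.mem_Ico] at hj
    have hne : (⟨a j, hj.2⟩ : Fin n) ≠ ⟨0, h0⟩ := by
      intro h
      have h2 := congrArg Fin.val h
      simp at h2
      omega
    have hp := par_len hG h0 hne
    have hiv : invf hG h0 (a j) = (par hG h0 ⟨a j, hj.2⟩ : ℕ) := by
      simp only [invf, dif_pos (⟨hj.1, hj.2⟩ : 1 ≤ a j ∧ a j < n)]
    rw [hiv, hlenF]
    simp only [dif_pos (par hG h0 ⟨a j, hj.2⟩).isLt, dif_pos hj.2]
    simpa using hp
  have mono : ∀ j, j < k → lenF (a j) ≤ lenF (a 0) := by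
    intro j
    induction j with
    | zero => intro _; exact le_rfl
    | succ j ih =>
      intro hjk
      have h1 : j < k := by omega
      have h2 := key j (haS j h1)
      rw [hstep j hjk] at h2
      have := ih h1
      omega
  have h1 := key (k - 1) (haS (k - 1) (by omega))
  rw [hloop] at h1
  have h2 := mono (k - 1) (by omega)
  omega

lemma invf_eq (hG : G.IsTree) (h0 : 0 < n) {a : Fin n} (ha : a ≠ ⟨0, h0⟩) :
    invf hG h0 (a : ℕ) = (par hG h0 a : ℕ) := by
  have hv : 1 ≤ (a : ℕ) ∧ (a : ℕ) < n := by
    refine ⟨?_, a.isLt⟩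
    have : (a : ℕ) ≠ 0 := fun h => ha (Fin.ext (by simpa using h))
    omega
  simp only [invf, dif_pos hv]

lemma mapGraph_invf (hG : G.IsTree) (h0 : 0 < n) : mapGraph n (invf hG h0) = G := by
  ext a b
  constructor
  · rintro ⟨hne, ⟨ha0, hfa⟩ | ⟨hb0, hfb⟩⟩
    · have ha' : a ≠ ⟨0, h0⟩ := fun h => ha0 (by rw [h])
      rw [invf_eq hG h0 ha'] at hfa
      have hpb : par hG h0 a = b := Fin.ext hfa
      rw [← hpb]
      exact par_adj hG h0 ha'
    · have hb' : b ≠ ⟨0, h0⟩ := fun h => hb0 (by rw [h])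
      rw [invf_eq hG h0 hb'] at hfb
      have hpa : par hG h0 b = a := Fin.ext hfb
      rw [← hpa]
      exact (par_adj hG h0 hb').symm
  · intro hab
    have hne : a ≠ b := hab.ne
    by_cases hb : b ∈ (cpath hG a ⟨0, h0⟩).support
    · by_cases ha : a ∈ (cpath hG b ⟨0, h0⟩).support
      · exfalso
        set p := cpath hG a ⟨0, h0⟩ with hp
        set q := cpath hG b ⟨0, h0⟩ with hq
        have e1 : p.dropUntil b hb = q := cpath_unique hG _ ((cpath_isPath hG a _).dropUntil hb)
        have e2 : q.dropUntil a ha = p := cpath_unique hG _ ((cpath_isPath hG b _).dropUntil ha)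
        have l1 := congrArg Walk.length (p.take_spec hb)
        have l2 := congrArg Walk.length (q.take_spec ha)
        rw [Walk.length_append] at l1 l2
        rw [e1] at l1
        rw [e2] at l2
        have t1 : (p.takeUntil b hb).length ≠ 0 :=
          fun h => hne (Walk.eq_of_length_eq_zero (p := p.takeUntil b hb) h)
        have t2 : (q.takeUntil a ha).length ≠ 0 :=
          fun h => hne.symm (Walk.eq_of_length_eq_zero (p := q.takeUntil a ha) h)
        omega
      · have hpath : (Walk.cons hab (cpath hG b ⟨0, h0⟩)).IsPath :=
          (cpath_isPath hG b _).cons ha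
        have e : Walk.cons hab (cpath hG b ⟨0, h0⟩) = cpath hG a ⟨0, h0⟩ :=
          cpath_unique hG _ hpath
        have ha' : a ≠ ⟨0, h0⟩ := by
          intro h
          subst h
          have h2 := e.trans (cpath_loop hG _)
          simp at h2
        have hpar : par hG h0 a = b := by
          unfold par
          rw [← e, Walk.getVert_cons_succ, Walk.getVert_zero]
        refine ⟨hne, Or.inl ⟨?_, ?_⟩⟩
        · exact fun h => ha' (Fin.ext (by simpa using h))
        · rw [invf_eq hG h0 ha', hpar]
    · have hpath : (Walk.cons hab.symm (cpath hG a ⟨0, h0⟩)).IsPath :=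
        (cpath_isPath hG a _).cons hb
      have e : Walk.cons hab.symm (cpath hG a ⟨0, h0⟩) = cpath hG b ⟨0, h0⟩ :=
        cpath_unique hG _ hpath
      have hb' : b ≠ ⟨0, h0⟩ := by
        intro h
        subst h
        have h2 := e.trans (cpath_loop hG _)
        simp at h2
      have hpar : par hG h0 b = a := by
        unfold par
        rw [← e, Walk.getVert_cons_succ, Walk.getVert_zero]
      refine ⟨hne, Or.inr ⟨?_, ?_⟩⟩
      · exact fun h => hb' (Fin.ext (by simpa using h))
      · rw [invf_eq hG h0 hb', hpar]

end Inverse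

/-- For `n ≥ 2`, the mapping sending an `[n-1]`-map `f` to the graph with an edge
between `i` and `f i` for each `i ∈ [n-1]` is a bijection between the set of
cycle-free `[n-1]`-maps (encoded as functions `ℕ → ℕ` vanishing outside
`[n-1] = {1, …, n-1}`) and the set of trees on the `n` vertices `0, 1, …, n-1`;
moreover the inverse sends a tree to the map associating to each vertex `i ≠ 0` the
second vertex on the unique path from `i` to `0`. -/
theorem cycleFree_maps_tree_bijection (n : ℕ) (hn : 2 ≤ n) :
    Set.BijOn (mapGraph n)
      {f : ℕ → ℕ | (∀ i ∈ Finset.Ico 1 n, f i < n) ∧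
        (∀ i ∉ Finset.Ico 1 n, f i = 0) ∧ ¬ HasCycle (Finset.Ico 1 n) f}
      {G : SimpleGraph (Fin n) | G.IsTree}
    ∧
    ∀ f : ℕ → ℕ, (∀ i ∈ Finset.Ico 1 n, f i < n) →
      (∀ i ∉ Finset.Ico 1 n, f i = 0) → ¬ HasCycle (Finset.Ico 1 n) f →
      ∀ i (hi1 : 1 ≤ i) (hin : i < n) (hfi : f i < n)
        (p : (mapGraph n f).Walk ⟨i, hin⟩ ⟨0, by omega⟩),
        p.IsPath → p.getVert 1 = ⟨f i, hfi⟩ := by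
  have h0 : 0 < n := by omega
  have final' : ∀ f : ℕ → ℕ, (∀ i ∈ Finset.Ico 1 n, f i < n) →
      (∀ i ∉ Finset.Ico 1 n, f i = 0) → ¬ HasCycle (Finset.Ico 1 n) f →
      ∀ G : SimpleGraph (Fin n), mapGraph n f = G →
      ∀ (i : ℕ) (hi1 : 1 ≤ i) (hin : i < n)
        (p : G.Walk ⟨i, hin⟩ ⟨0, h0⟩), p.IsPath → ((p.getVert 1 : Fin n) : ℕ) = f i := by
    intro f hf1 hf2 hf3 G hGe i hi1 hin p hp
    subst hGe
    have hvw : (⟨i, hin⟩ : Fin n) ≠ ⟨0, h0⟩ := by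
      intro h
      have h2 := congrArg Fin.val h
      simp at h2
      omega
    have hd : mdepth f (((⟨0, h0⟩ : Fin n)) : ℕ) ≤ mdepth f ((⟨i, hin⟩ : Fin n) : ℕ) := by
      have hz : mdepth f 0 = 0 := (mdepth_eq_zero_iff hn hf1 hf2 hf3 0).2 rfl
      simp [hz]
    exact first_step hn hf1 hf2 hf3 p hp hd hvw
  constructor
  · refine ⟨?_, ?_, ?_⟩
    · intro f hf
      exact mapGraph_isTree hn hf.1 hf.2.1 hf.2.2
    · intro f hf g hg heq
      obtain ⟨hf1, hf2, hf3⟩ := hf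
      obtain ⟨hg1, hg2, hg3⟩ := hg
      funext i
      by_cases hi : i ∈ Finset.Ico 1 n
      · simp only [Finset.mem_Ico] at hi
        obtain ⟨wk⟩ := reach_zero hn hf1 hf2 hf3 h0 (⟨i, hi.2⟩ : Fin n)
        have e1 := final' f hf1 hf2 hf3 (mapGraph n f) rfl i hi.1 hi.2 wk.toPath.1 wk.toPath.2
        have e2 := final' g hg1 hg2 hg3 (mapGraph n f) heq.symm i hi.1 hi.2 wk.toPath.1 wk.toPath.2
        rw [← e1, ← e2]
      · rw [hf2 i hi, hg2 i hi]
    · intro G hG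
      exact ⟨invf hG h0, ⟨invf_mem1 hG h0, invf_mem2 hG h0, invf_mem3 hG h0⟩,
        mapGraph_invf hG h0⟩
  · intro f hf1 hf2 hf3 i hi1 hin hfi p hp
    exact Fin.ext (final' f hf1 hf2 hf3 (mapGraph n f) rfl i hi1 hin p hp)
end

section
/- Let S be a finite nonempty set of positive integers with |S| = n, let π be a probability distribution on S, and for each i ∈ S let p_i ∈ [0,1]. Let f be a random S-map whose values f(i) are chosen independently so that with probability p_i the value f(i) is chosen from S according to π, and otherwise f(i) = 0. Then the probability that f has a cycle equals Σ_{i ∈ S} p_i·π(i). -/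
open MeasureTheory

section CycleAuxiliary

open ProbabilityTheory


theorem hasCycle_congr {S : Finset ℕ} {f g : ℕ → ℕ} (h : ∀ i ∈ S, f i = g i) :
    HasCycle S f → HasCycle S g := by
  rintro ⟨k, a, hk, hmem, hstep, hlast⟩
  refine ⟨k, a, hk, hmem, fun i hi => ?_, ?_⟩
  · rw [← h _ (hmem i (by omega))]; exact hstep i hi
  · rw [← h _ (hmem (k-1) (by omega))]; exact hlast

theorem hasCycle_mono {S T : Finset ℕ} {f : ℕ → ℕ} (h : S ⊆ T) :
    HasCycle S f → HasCycle T f := by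
  rintro ⟨k, a, hk, hmem, hstep, hlast⟩
  exact ⟨k, a, hk, fun i hi => h (hmem i hi), hstep, hlast⟩

theorem hasCycle_of_fixed {S : Finset ℕ} {f : ℕ → ℕ} {v : ℕ} (hv : v ∈ S) (hfv : f v = v) :
    HasCycle S f :=
  ⟨1, fun _ => v, one_pos, fun _ _ => hv, fun i hi => by omega, hfv⟩

def IsCyc (S : Finset ℕ) (f : ℕ → ℕ) (x m : ℕ) : Prop :=
  0 < m ∧ (∀ j < m, f^[j] x ∈ S) ∧ f^[m] x = x

theorem hasCycle_iff_isCyc {S : Finset ℕ} {f : ℕ → ℕ} :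
    HasCycle S f ↔ ∃ x m, IsCyc S f x m := by
  constructor
  · rintro ⟨k, a, hk, hmem, hstep, hlast⟩
    have key : ∀ j < k, f^[j] (a 0) = a j := by
      intro j hj
      induction j with
      | zero => simp
      | succ n ih =>
        rw [Function.iterate_succ_apply', ih (by omega)]
        exact hstep n hj
    refine ⟨a 0, k, hk, fun j hj => by rw [key j hj]; exact hmem j hj, ?_⟩
    have h1 : f^[k] (a 0) = f (f^[k-1] (a 0)) := by
      conv_lhs => rw [show k = (k-1)+1 by omega]
      rw [Function.iterate_succ_apply']
    rw [h1, key (k-1) (by omega), hlast]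
  · rintro ⟨x, m, hm, hmem, hx⟩
    refine ⟨m, fun j => f^[j] x, hm, hmem, fun i _ => ?_, ?_⟩
    · exact (Function.iterate_succ_apply' f i x).symm
    · show f (f^[m-1] x) = f^[0] x
      have := (Function.iterate_succ_apply' f (m-1) x).symm
      rw [show (m-1).succ = m by omega] at this
      rw [this, hx]
      simp

theorem exists_isCyc_inj {S : Finset ℕ} {f : ℕ → ℕ} {x m : ℕ} (h : IsCyc S f x m) :
    ∃ m', IsCyc S f x m' ∧ ∀ i < m', ∀ j < m', f^[i] x = f^[j] x → i = j := by
  classical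
  have hex : ∃ n, IsCyc S f x n := ⟨m, h⟩
  have hc : IsCyc S f x (Nat.find hex) := Nat.find_spec hex
  set m' := Nat.find hex with hm'
  refine ⟨m', hc, ?_⟩
  have H : ∀ i j, i < j → j < m' → f^[i] x = f^[j] x → False := by
    intro i j hij hjm heq
    have hlt : m' - (j - i) < m' := by omega
    have hic : IsCyc S f x (m' - (j - i)) := by
      refine ⟨by omega, fun l hl => hc.2.1 l (by omega), ?_⟩
      have h1 : f^[m' - j] (f^[j] x) = x := by
        rw [← Function.iterate_add_apply, show m' - j + j = m' by omega]; exact hc.2.2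
      calc f^[m' - (j-i)] x = f^[m'-j] (f^[i] x) := by
            rw [← Function.iterate_add_apply]; congr 1; omega
        _ = f^[m'-j] (f^[j] x) := by rw [heq]
        _ = x := h1
    exact Nat.find_min hex hlt hic
  intro i hi j hj hij
  rcases lt_trichotomy i j with h' | h' | h'
  · exact (H i j h' hj hij).elim
  · exact h'
  · exact (H j i h' hi hij.symm).elim

theorem IsCyc.iterate_mod {S : Finset ℕ} {f : ℕ → ℕ} {x m : ℕ} (h : IsCyc S f x m) (n : ℕ) :
    f^[n] x = f^[n % m] x :=
  (Function.IsPeriodicPt.iterate_mod_apply (show Function.IsPeriodicPt f m x from h.2.2) n).symm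

theorem IsCyc.rot {S : Finset ℕ} {f : ℕ → ℕ} {x m : ℕ} (h : IsCyc S f x m) (r : ℕ) :
    IsCyc S f (f^[r] x) m := by
  refine ⟨h.1, fun j hj => ?_, ?_⟩
  · rw [← Function.iterate_add_apply, h.iterate_mod (j + r)]
    exact h.2.1 _ (Nat.mod_lt _ h.1)
  · rw [← Function.iterate_add_apply, show m + r = r + m by ring,
      Function.iterate_add_apply, h.2.2]



theorem hasCycle_erase_zero {S : Finset ℕ} {f : ℕ → ℕ} {v : ℕ} (hv : v ∈ S) (h0 : 0 ∉ S)
    (hfv : f v ∉ S) :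
    HasCycle S f ↔ HasCycle (S.erase v) (fun i => if f i = v then 0 else f i) := by
  constructor
  · rintro ⟨k, a, hk, hmem, hstep, hlast⟩
    have hne : ∀ i < k, a i ≠ v := by
      intro i hi hiv
      rcases Nat.lt_or_ge (i+1) k with h' | h'
      · have h1 := hstep i h'
        rw [hiv] at h1
        have h2 := hmem (i+1) h'
        rw [← h1] at h2
        exact hfv h2
      · have hik : i = k - 1 := by omega
        rw [hik] at hiv
        have h1 := hlast
        rw [hiv] at h1
        have h2 := hmem 0 hk
        rw [← h1] at h2
        exact hfv h2
    refine ⟨k, a, hk, fun i hi => Finset.mem_erase.mpr ⟨hne i hi, hmem i hi⟩, fun i hi => ?_, ?_⟩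
    · show (if f (a i) = v then 0 else f (a i)) = a (i+1)
      rw [hstep i hi, if_neg (hne (i+1) hi)]
    · show (if f (a (k-1)) = v then 0 else f (a (k-1))) = a 0
      rw [hlast, if_neg (hne 0 hk)]
  · rintro ⟨k, a, hk, hmem, hstep, hlast⟩
    have hmem' : ∀ i < k, a i ∈ S := fun i hi => Finset.mem_of_mem_erase (hmem i hi)
    have hne0 : ∀ i < k, a i ≠ 0 := fun i hi h => h0 (h ▸ hmem' i hi)
    refine ⟨k, a, hk, hmem', fun i hi => ?_, ?_⟩
    · have h1 := hstep i hi
      simp only at h1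
      by_cases hfa : f (a i) = v
      · rw [if_pos hfa] at h1
        exact absurd h1.symm (hne0 (i+1) hi)
      · rwa [if_neg hfa] at h1
    · have h1 := hlast
      simp only at h1
      by_cases hfa : f (a (k-1)) = v
      · rw [if_pos hfa] at h1
        exact absurd h1.symm (hne0 0 hk)
      · rwa [if_neg hfa] at h1

theorem hasCycle_contract {S : Finset ℕ} {f : ℕ → ℕ} {v u : ℕ} (hv : v ∈ S) (hu : u ∈ S)
    (huv : u ≠ v) (hfv : f v = u) :
    HasCycle S f ↔ HasCycle (S.erase v) (fun i => if f i = v then u else f i) := by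
  classical
  set fu : ℕ → ℕ := fun i => if f i = v then u else f i with hfu
  have hfu_eq : ∀ w, f w ≠ v → fu w = f w := fun w hw => if_neg hw
  have hfu_v : ∀ w, f w = v → fu w = u := fun w hw => if_pos hw
  constructor
  · intro hcyc
    obtain ⟨x, m0, hic0⟩ := hasCycle_iff_isCyc.mp hcyc
    obtain ⟨m, hic, hinj⟩ := exists_isCyc_inj hic0
    rw [hasCycle_iff_isCyc]
    by_cases hB : ∃ j0, j0 < m ∧ f^[j0] x = v
    · obtain ⟨j0, hj0m, hj0⟩ := hB
      have hm2 : 2 ≤ m := by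
        by_contra h2
        have hm1 : m = 1 := by omega
        have hj00 : j0 = 0 := by omega
        rw [hj00] at hj0
        simp only [Function.iterate_zero_apply] at hj0
        have h2' := hic.2.2
        rw [hm1] at h2'
        simp only [Function.iterate_one] at h2'
        rw [hj0, hfv] at h2'
        exact huv h2'
      set y := f^[j0+1] x with hy_def
      have hyu : y = u := by
        rw [hy_def, Function.iterate_succ_apply', hj0, hfv]
      have hcy : IsCyc S f y m := hic.rot (j0+1)
      have hne : ∀ j < m - 1, f^[j] y ≠ v := by
        intro j hj hveq
        have h1 : f^[j + (j0+1)] x = v := by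
          rw [Function.iterate_add_apply]; exact hveq
        rcases Nat.lt_or_ge (j + (j0+1)) m with hlt | hge
        · have := hinj _ hlt j0 hj0m (h1.trans hj0.symm)
          omega
        · have h2 : f^[j + (j0+1) - m] x = v := by
            have h3 : f^[(j + (j0+1) - m) + m] x = v := by
              rw [show (j + (j0+1) - m) + m = j + (j0+1) by omega]; exact h1
            rwa [Function.iterate_add_apply, hic.2.2] at h3
          have := hinj _ (by omega) j0 hj0m (h2.trans hj0.symm)
          omega
      have hlasty : f^[m-1] y = v := by
        have h1 : f^[(m-1) + (j0+1)] x = f^[j0] x := by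
          rw [show (m-1) + (j0+1) = j0 + m by omega, Function.iterate_add_apply, hic.2.2]
        rw [hy_def, ← Function.iterate_add_apply, h1, hj0]
      have key : ∀ j ≤ m - 2, fu^[j] y = f^[j] y := by
        intro j hj
        induction j with
        | zero => rfl
        | succ n ih =>
          rw [Function.iterate_succ_apply', ih (by omega), Function.iterate_succ_apply']
          refine hfu_eq _ ?_
          have e : f (f^[n] y) = f^[n+1] y := (Function.iterate_succ_apply' f n y).symm
          rw [e]
          exact hne (n+1) (by omega)
      refine ⟨y, m - 1, ⟨by omega, fun j hj => ?_, ?_⟩⟩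
      · rw [key j (by omega)]
        exact Finset.mem_erase.mpr ⟨hne j hj, hcy.2.1 j (by omega)⟩
      · have e1 : fu^[m-1] y = fu (fu^[m-2] y) := by
          rw [show m-1 = (m-2)+1 by omega, Function.iterate_succ_apply']
        have e3 : f (f^[m-2] y) = v := by
          have e : f (f^[m-2] y) = f^[(m-2)+1] y := (Function.iterate_succ_apply' f (m-2) y).symm
          rw [e, show (m-2)+1 = m-1 by omega]
          exact hlasty
        rw [e1, key (m-2) le_rfl, hfu_v _ e3, hyu]
    · push_neg at hB
      have key : ∀ j ≤ m, fu^[j] x = f^[j] x := by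
        intro j hj
        induction j with
        | zero => rfl
        | succ n ih =>
          have hnsucc : f^[n+1] x ≠ v := by
            rcases Nat.lt_or_ge (n+1) m with h | h
            · exact hB _ h
            · have hnm : n+1 = m := by omega
              rw [hnm, hic.2.2]
              have h0 := hB 0 hic.1
              simpa using h0
          rw [Function.iterate_succ_apply', ih (by omega), Function.iterate_succ_apply']
          refine hfu_eq _ ?_
          have e : f (f^[n] x) = f^[n+1] x := (Function.iterate_succ_apply' f n x).symm
          rw [e]; exact hnsucc
      exact ⟨x, m, ⟨hic.1, fun j hj => by
        rw [key j (le_of_lt hj)]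
        exact Finset.mem_erase.mpr ⟨hB j hj, hic.2.1 j hj⟩,
        by rw [key m le_rfl, hic.2.2]⟩⟩
  · intro hcyc
    obtain ⟨x, m0, hic0⟩ := hasCycle_iff_isCyc.mp hcyc
    obtain ⟨m, hc, hinj⟩ := exists_isCyc_inj hic0
    rw [hasCycle_iff_isCyc]
    by_cases hB : ∃ j0, j0 < m ∧ f (fu^[j0] x) = v
    · obtain ⟨j0, hj0m, hj0v⟩ := hB
      have hu0 : fu^[(j0+1) % m] x = u := by
        rw [← hc.iterate_mod (j0+1), Function.iterate_succ_apply']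
        exact hfu_v _ hj0v
      set r := (j0+1) % m with hr_def
      have hrm : r < m := Nat.mod_lt _ hc.1
      set z := fu^[r] x with hz_def
      have hzu : z = u := hu0
      have hcz : IsCyc (S.erase v) fu z m := hc.rot r
      have hprev : ∀ j < m - 1, f (fu^[j] z) ≠ v := by
        intro j hj hveq
        have h1 : fu^[j+1] z = u := by
          rw [Function.iterate_succ_apply']; exact hfu_v _ hveq
        have h2 : fu^[j+1+r] x = fu^[r] x := by
          rw [Function.iterate_add_apply, ← hz_def, h1, hzu]
        have h3 : fu^[(j+1+r) % m] x = fu^[r] x := by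
          rw [← hc.iterate_mod]; exact h2
        have h4 := hinj _ (Nat.mod_lt _ hc.1) _ hrm h3
        rcases Nat.lt_or_ge (j+1+r) m with hlt | hge
        · rw [Nat.mod_eq_of_lt hlt] at h4; omega
        · rw [Nat.mod_eq_sub_mod hge, Nat.mod_eq_of_lt (by omega)] at h4; omega
      by_cases hw : f (fu^[m-1] z) = v
      · -- genuine contraction: expand to cycle of length m+1
        have key : ∀ j ≤ m - 1, f^[j] z = fu^[j] z := by
          intro j hj
          induction j with
          | zero => rfl
          | succ n ih =>
            rw [Function.iterate_succ_apply', ih (by omega), Function.iterate_succ_apply']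
            exact (hfu_eq _ (hprev n (by omega))).symm
        have em : f^[m] z = v := by
          rw [show m = (m-1)+1 from by omega, Function.iterate_succ_apply',
            key (m-1) le_rfl]
          exact hw
        refine ⟨z, m+1, ⟨by omega, fun j hj => ?_, ?_⟩⟩
        · rcases Nat.lt_or_ge j m with hjm | hjm
          · rw [key j (by omega)]
            exact Finset.mem_of_mem_erase (hcz.2.1 j hjm)
          · have hjm' : j = m := by omega
            rw [hjm', em]; exact hv
        · rw [Function.iterate_succ_apply', em, hfv, hzu]
      · -- f agrees with fu on the whole orbit of z
        have hprev' : ∀ j < m, f (fu^[j] z) ≠ v := by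
          intro j hj
          rcases Nat.lt_or_ge j (m-1) with h | h
          · exact hprev j h
          · have : j = m - 1 := by omega
            rw [this]; exact hw
        have key : ∀ j ≤ m, f^[j] z = fu^[j] z := by
          intro j hj
          induction j with
          | zero => rfl
          | succ n ih =>
            rw [Function.iterate_succ_apply', ih (by omega), Function.iterate_succ_apply']
            exact (hfu_eq _ (hprev' n (by omega))).symm
        exact ⟨z, m, ⟨hc.1, fun j hj => by
          rw [key j (le_of_lt hj)]
          exact Finset.mem_of_mem_erase (hcz.2.1 j hj),
          by rw [key m le_rfl, hcz.2.2]⟩⟩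
    · push_neg at hB
      have key : ∀ j ≤ m, f^[j] x = fu^[j] x := by
        intro j hj
        induction j with
        | zero => rfl
        | succ n ih =>
          rw [Function.iterate_succ_apply', ih (by omega), Function.iterate_succ_apply']
          exact (hfu_eq _ (hB n (by omega))).symm
      exact ⟨x, m, ⟨hc.1, fun j hj => by
        rw [key j (le_of_lt hj)]
        exact Finset.mem_of_mem_erase (hc.2.1 j hj),
        by rw [key m le_rfl, hc.2.2]⟩⟩


theorem hasCycle_empty {f : ℕ → ℕ} : ¬ HasCycle ∅ f := by
  rintro ⟨k, a, hk, hmem, -, -⟩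
  exact absurd (hmem 0 hk) (Finset.notMem_empty _)

lemma measurableSet_pi_nat {ι : Type*} [Finite ι] (A : Set (ι → ℕ)) : MeasurableSet A :=
  MeasurableSet.of_discrete

lemma iIndepFun_restrict {Ω : Type*} [MeasurableSpace Ω] {μ : Measure Ω} {S S' : Finset ℕ}
    (hsub : S' ⊆ S) {G : Ω → ℕ → ℕ}
    (h : iIndepFun (fun (i : {i // i ∈ S}) ω => G ω i.1) μ) :
    iIndepFun (fun (i : {i // i ∈ S'}) ω => G ω i.1) μ := by
  classical
  rw [iIndepFun_iff_measure_inter_preimage_eq_mul] at h ⊢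
  intro s sets hsets
  have einj : Function.Injective (fun i : {i // i ∈ S'} => (⟨i.1, hsub i.2⟩ : {i // i ∈ S})) := by
    intro a b hab
    have h1 : a.1 = b.1 := congrArg (Subtype.val : {i // i ∈ S} → ℕ) hab
    exact Subtype.ext h1
  set e : {i // i ∈ S'} ↪ {i // i ∈ S} := ⟨_, einj⟩ with he
  set sets' : {i // i ∈ S} → Set ℕ :=
    fun j => if h' : j.1 ∈ S' then sets ⟨j.1, h'⟩ else Set.univ with hs'
  have hkey := h (s.map e) (sets := sets') (fun j _ => MeasurableSet.of_discrete)
  have h2 : ∀ i : {i // i ∈ S'}, sets' (e i) = sets i := by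
    intro i
    show (if h' : i.1 ∈ S' then sets ⟨i.1, h'⟩ else Set.univ) = sets i
    rw [dif_pos i.2]
  have h3 : (⋂ j ∈ s.map e, (fun ω => G ω j.1) ⁻¹' sets' j)
      = ⋂ i ∈ s, (fun ω => G ω i.1) ⁻¹' sets i := by
    ext ω
    simp only [Set.mem_iInter, Finset.mem_map]
    constructor
    · intro H i hi
      have := H (e i) ⟨i, hi, rfl⟩
      rwa [h2 i] at this
    · rintro H j ⟨i, hi, rfl⟩
      rw [h2 i]
      exact H i hi
  rw [h3] at hkey
  rw [hkey, Finset.prod_map]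
  exact Finset.prod_congr rfl (fun i _ => by rw [show sets' (e i) = sets i from h2 i]; rfl)

lemma event_measurable {Ω : Type*} [MeasurableSpace Ω] (F : Ω → ℕ → ℕ) (T : Finset ℕ)
    (hmeas : ∀ i ∈ T, Measurable fun ω => F ω i) (Q : (ℕ → ℕ) → Prop)
    (hQ : ∀ f g : ℕ → ℕ, (∀ i ∈ T, f i = g i) → Q f → Q g) :
    MeasurableSet {ω | Q (F ω)} := by
  classical
  have h1 : {ω | Q (F ω)} = (fun ω (i : {i // i ∈ T}) => F ω i.1) ⁻¹'
      {x : {i // i ∈ T} → ℕ | Q (fun i => if h : i ∈ T then x ⟨i, h⟩ else 0)} := by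
    ext ω
    simp only [Set.mem_setOf_eq, Set.mem_preimage]
    constructor
    · intro h
      refine hQ _ _ (fun i hi => ?_) h
      simp [hi]
    · intro h
      refine hQ _ _ (fun i hi => ?_) h
      simp [hi]
  rw [h1]
  exact measurable_pi_lambda _ (fun (i : {i // i ∈ T}) => hmeas i.1 i.2) (measurableSet_pi_nat _)

theorem cyc_aux (n : ℕ) : ∀ (S : Finset ℕ), S.card = n → 0 ∉ S →
    ∀ (π p : ℕ → ℝ) {Ω : Type*} [MeasurableSpace Ω] (μ : Measure Ω) [IsProbabilityMeasure μ]
    (F : Ω → ℕ → ℕ),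
    (∀ ω, ∀ i ∈ S, F ω i ∈ S ∨ F ω i = 0) →
    (∀ i ∈ S, Measurable fun ω => F ω i) →
    iIndepFun (fun (i : {i // i ∈ S}) ω => F ω i.val) μ →
    (∀ i ∈ S, (μ {ω | F ω i = 0}).toReal = 1 - p i * ∑ j ∈ S, π j) →
    (∀ i ∈ S, ∀ j ∈ S, (μ {ω | F ω i = j}).toReal = p i * π j) →
    (μ {ω | HasCycle S (F ω)}).toReal = ∑ i ∈ S, p i * π i := by
  induction n with
  | zero =>
    intro S hcard h0 π p Ω _ μ _ F hSmap hmeas hindep hzero hval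
    have hS : S = ∅ := Finset.card_eq_zero.mp hcard
    subst hS
    have hE : {ω | HasCycle ∅ (F ω)} = ∅ := by
      ext ω
      simp only [Set.mem_setOf_eq, Set.mem_empty_iff_false, iff_false]
      exact hasCycle_empty
    rw [hE]
    simp
  | succ n IH =>
    intro S hcard h0 π p Ω _ μ _ F hSmap hmeas hindep hzero hval
    classical
    obtain ⟨v, hv⟩ := Finset.card_pos.mp (by omega : 0 < S.card)
    set S' := S.erase v with hS'
    have hsub : S' ⊆ S := Finset.erase_subset _ _
    have hS'card : S'.card = n := by rw [hS', Finset.card_erase_of_mem hv, hcard]; omega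
    have h0' : (0:ℕ) ∉ S' := fun h => h0 (hsub h)
    have hv0 : v ≠ 0 := fun h => h0 (h ▸ hv)
    set σ := ∑ j ∈ S, π j with hσ
    have hσ' : σ = π v + ∑ j ∈ S', π j := by
      rw [hσ, hS']
      exact (Finset.add_sum_erase S π hv).symm
    set G : ℕ → Ω → ℕ → ℕ := fun u ω i => if F ω i = v then u else F ω i with hG
    set E := {ω | HasCycle S (F ω)} with hE
    have hMeasF : ∀ i : {i // i ∈ S}, Measurable fun ω => F ω i.1 := fun i => hmeas i.1 i.2
    have hmeasE : MeasurableSet E :=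
      event_measurable F S hmeas _ (fun f g h => hasCycle_congr h)
    have hmeasFv : ∀ u : ℕ, MeasurableSet {ω | F ω v = u} :=
      fun u => (hmeas v hv) (measurableSet_singleton u)
    -- partition of E according to the value of F at v
    have hparts : E = ⋃ u ∈ (insert 0 S : Finset ℕ), (E ∩ {ω | F ω v = u}) := by
      ext ω
      simp only [Set.mem_iUnion, Set.mem_inter_iff, Set.mem_setOf_eq, exists_prop,
        Finset.mem_insert]
      constructor
      · intro h
        rcases hSmap ω v hv with h' | h'
        · exact ⟨F ω v, Or.inr h', h, rfl⟩
        · exact ⟨0, Or.inl rfl, h, h'⟩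
      · rintro ⟨u, -, h, -⟩; exact h
    have hdisj : (↑(insert 0 S : Finset ℕ) : Set ℕ).PairwiseDisjoint
        (fun u => E ∩ {ω | F ω v = u}) := by
      intro a _ b _ hab
      apply Set.disjoint_left.mpr
      rintro ω ⟨-, ha⟩ ⟨-, hb⟩
      exact hab (by rw [← ha, ← hb])
    have hEmeasure : μ E = ∑ u ∈ insert 0 S, μ (E ∩ {ω | F ω v = u}) := by
      conv_lhs => rw [hparts]
      exact measure_biUnion_finset hdisj (fun u _ => hmeasE.inter (hmeasFv u))
    -- the key independence/conditioning step
    have hstep : ∀ u ∈ insert 0 S', μ (E ∩ {ω | F ω v = u})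
        = μ {ω | HasCycle S' (G u ω)} * μ {ω | F ω v = u} := by
      intro u hu
      have hu_ne_v : u ≠ v := by
        rcases Finset.mem_insert.mp hu with h | h
        · rw [h]; exact Ne.symm hv0
        · exact (Finset.mem_erase.mp h).1
      have hiff : ∀ ω, F ω v = u → (HasCycle S (F ω) ↔ HasCycle S' (G u ω)) := by
        intro ω hfvu
        rcases Finset.mem_insert.mp hu with h | h
        · subst h
          exact hasCycle_erase_zero (f := F ω) hv h0 (by rw [hfvu]; exact h0)
        · exact hasCycle_contract hv (hsub h) hu_ne_v hfvu
      have hset : E ∩ {ω | F ω v = u} = {ω | HasCycle S' (G u ω)} ∩ {ω | F ω v = u} := by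
        ext ω
        simp only [hE, Set.mem_inter_iff, Set.mem_setOf_eq]
        constructor
        · rintro ⟨hc, hf⟩; exact ⟨(hiff ω hf).mp hc, hf⟩
        · rintro ⟨hc, hf⟩; exact ⟨(hiff ω hf).mpr hc, hf⟩
      have hindep2 := hindep.indepFun_finset (Finset.univ.erase ⟨v, hv⟩) {⟨v, hv⟩}
        (Finset.disjoint_singleton_right.mpr (Finset.notMem_erase _ _)) hMeasF
      set T₂ := (Finset.univ.erase (⟨v, hv⟩ : {i // i ∈ S})) with hT₂
      have membT₂ : ∀ (i : ℕ) (h : i ∈ S'), (⟨i, hsub h⟩ : {i // i ∈ S}) ∈ T₂ := by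
        intro i h
        refine Finset.mem_erase.mpr ⟨?_, Finset.mem_univ _⟩
        intro hh
        exact (Finset.mem_erase.mp h).1 (by simpa [Subtype.ext_iff] using hh)
      set Ae : Set ({x // x ∈ T₂} → ℕ) := {x | HasCycle S'
        (fun i => if h : i ∈ S' then
          (if x ⟨⟨i, hsub h⟩, membT₂ i h⟩ = v then u else x ⟨⟨i, hsub h⟩, membT₂ i h⟩)
          else 0)} with hAe
      set Be : Set ({x // x ∈ ({⟨v, hv⟩} : Finset {i // i ∈ S})} → ℕ) :=
        {y | y ⟨⟨v, hv⟩, Finset.mem_singleton_self _⟩ = u} with hBe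
      have hpre1 : {ω | HasCycle S' (G u ω)}
          = (fun a (i : {x // x ∈ T₂}) => F a i.1.1) ⁻¹' Ae := by
        ext ω
        simp only [Set.mem_setOf_eq, Set.mem_preimage, hAe]
        constructor
        · intro h
          refine hasCycle_congr (fun i hi => ?_) h
          simp only [dif_pos hi]; rfl
        · intro h
          refine hasCycle_congr (fun i hi => ?_) h
          simp only [dif_pos hi]; rfl
      have hpre2 : {ω | F ω v = u}
          = (fun a (i : {x // x ∈ ({⟨v, hv⟩} : Finset {i // i ∈ S})}) => F a i.1.1) ⁻¹' Be := rfl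
      rw [hset, hpre1, hpre2]
      exact hindep2.measure_inter_preimage_eq_mul _ _ (measurableSet_pi_nat _)
        (measurableSet_pi_nat _)
    -- hypotheses of IH for the collapsed maps
    have hmeasG : ∀ u : ℕ, ∀ i ∈ S', Measurable fun ω => G u ω i := by
      intro u i hi
      have hcomp : (fun ω => G u ω i) = (fun x => if x = v then u else x) ∘ (fun ω => F ω i) := rfl
      rw [hcomp]
      exact Measurable.comp measurable_from_nat (hmeas i (hsub hi))
    have hindepG : ∀ u : ℕ,
        iIndepFun (fun (i : {i // i ∈ S'}) ω => G u ω i.val) μ := by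
      intro u
      exact (iIndepFun_restrict hsub hindep).comp
        (fun _ => fun x => if x = v then u else x) (fun _ => measurable_from_nat)
    have hsmapG : ∀ u ∈ insert 0 S', ∀ ω, ∀ i ∈ S', G u ω i ∈ S' ∨ G u ω i = 0 := by
      intro u hu ω i hi
      rcases hSmap ω i (hsub hi) with h | h
      · by_cases hfv' : F ω i = v
        · rcases Finset.mem_insert.mp hu with h' | h'
          · right; simp [hG, hfv', h']
          · left; simpa [hG, hfv'] using h'
        · left
          simp only [hG, if_neg hfv']
          exact Finset.mem_erase.mpr ⟨hfv', h⟩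
      · right
        simp [hG, h, Ne.symm hv0]
    -- value of the cycle probability for the 0-collapse
    have hB0 : (μ {ω | HasCycle S' (G 0 ω)}).toReal = ∑ i ∈ S', p i * π i := by
      refine IH S' hS'card h0' π p μ (G 0) (hsmapG 0 (Finset.mem_insert_self _ _))
        (hmeasG 0) (hindepG 0) ?_ ?_
      · intro i hi
        have hiS := hsub hi
        have hsplit : {ω | G 0 ω i = 0} = {ω | F ω i = 0} ∪ {ω | F ω i = v} := by
          ext ω
          simp only [Set.mem_setOf_eq, Set.mem_union, hG]
          by_cases h' : F ω i = v
          · simp [h', Ne.symm hv0]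
          · simp [h']
        have hdisj2 : Disjoint {ω | F ω i = 0} {ω | F ω i = v} := by
          apply Set.disjoint_left.mpr
          intro ω h1 h2
          exact hv0 (by rw [← h2, h1])
        rw [hsplit, measure_union hdisj2 ((hmeas i hiS) (measurableSet_singleton v)),
          ENNReal.toReal_add (measure_ne_top _ _) (measure_ne_top _ _),
          hzero i hiS, hval i hiS v hv]
        have hh : ∑ j ∈ S', π j = σ - π v := by rw [hσ']; ring
        rw [hh]; ring
      · intro i hi j hj
        have hj0 : j ≠ 0 := fun h => h0' (h ▸ hj)
        have hjv : j ≠ v := (Finset.mem_erase.mp hj).1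
        have hsp : {ω | G 0 ω i = j} = {ω | F ω i = j} := by
          ext ω
          simp only [Set.mem_setOf_eq, hG]
          split_ifs with h' <;> omega
        rw [hsp]
        exact hval i (hsub hi) j (hsub hj)
    -- value of the cycle probability for the u-contraction, u ∈ S'
    have hBu : ∀ u ∈ S', (μ {ω | HasCycle S' (G u ω)}).toReal
        = (∑ i ∈ S', p i * π i) + p u * π v := by
      intro u hu
      have huS : u ∈ S := hsub hu
      have hu0 : u ≠ 0 := fun h => h0' (h ▸ hu)
      have huv : u ≠ v := (Finset.mem_erase.mp hu).1
      set π' : ℕ → ℝ := fun j => if j = u then π u + π v else π j with hπ'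
      have hIH : (μ {ω | HasCycle S' (G u ω)}).toReal = ∑ i ∈ S', p i * π' i := by
        refine IH S' hS'card h0' π' p μ (G u)
          (hsmapG u (Finset.mem_insert_of_mem hu)) (hmeasG u) (hindepG u) ?_ ?_
        · intro i hi
          have hiS := hsub hi
          have hsp : {ω | G u ω i = 0} = {ω | F ω i = 0} := by
            ext ω
            simp only [Set.mem_setOf_eq, hG]
            split_ifs with h' <;> omega
          have hsum' : ∑ j ∈ S', π' j = (∑ j ∈ S', π j) + π v := by
            rw [← Finset.add_sum_erase _ π' hu, ← Finset.add_sum_erase _ π hu]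
            have h1 : π' u = π u + π v := by simp [hπ']
            have h2 : ∀ j ∈ S'.erase u, π' j = π j := fun j hj => by
              simp [hπ', (Finset.mem_erase.mp hj).1]
            rw [h1, Finset.sum_congr rfl h2]
            ring
          rw [hsp, hzero i hiS, hsum']
          have hh : ∑ j ∈ S', π j = σ - π v := by rw [hσ']; ring
          rw [hh]; ring
        · intro i hi j hj
          have hiS := hsub hi
          by_cases hju : j = u
          · subst hju
            have hsplit : {ω | G j ω i = j} = {ω | F ω i = j} ∪ {ω | F ω i = v} := by
              ext ω
              simp only [Set.mem_setOf_eq, Set.mem_union, hG]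
              split_ifs with h' <;> omega
            have hdisj2 : Disjoint {ω | F ω i = j} {ω | F ω i = v} := by
              apply Set.disjoint_left.mpr
              intro ω h1 h2
              exact huv (by rw [← h1, h2])
            rw [hsplit, measure_union hdisj2 ((hmeas i hiS) (measurableSet_singleton v)),
              ENNReal.toReal_add (measure_ne_top _ _) (measure_ne_top _ _),
              hval i hiS j huS, hval i hiS v hv]
            have hh : π' j = π j + π v := by simp [hπ']
            rw [hh]; ring
          · have hjv : j ≠ v := (Finset.mem_erase.mp hj).1
            have hsp : {ω | G u ω i = j} = {ω | F ω i = j} := by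
              ext ω
              simp only [Set.mem_setOf_eq, hG]
              split_ifs with h' <;> omega
            have hh : π' j = π j := by simp [hπ', hju]
            rw [hsp, hval i hiS j (hsub hj), hh]
      rw [hIH]
      rw [← Finset.add_sum_erase _ (fun i => p i * π' i) hu,
        ← Finset.add_sum_erase _ (fun i => p i * π i) hu]
      have h2 : ∀ j ∈ S'.erase u, p j * π' j = p j * π j := fun j hj => by
        simp [hπ', (Finset.mem_erase.mp hj).1]
      rw [Finset.sum_congr rfl h2]
      have h1 : π' u = π u + π v := by simp [hπ']
      rw [h1]; ring
    -- assemble everything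
    have hfin : (μ E).toReal = ∑ u ∈ insert 0 S, (μ (E ∩ {ω | F ω v = u})).toReal := by
      rw [hEmeasure]
      exact ENNReal.toReal_sum (fun u _ => measure_ne_top _ _)
    have hidx : (insert 0 S : Finset ℕ) = insert v (insert 0 S') := by
      conv_lhs => rw [← Finset.insert_erase hv, ← hS']
      exact Finset.insert_comm 0 v S'
    have hvnot : v ∉ (insert 0 S' : Finset ℕ) := by
      simp only [Finset.mem_insert, not_or]
      exact ⟨hv0, Finset.notMem_erase _ _⟩
    have htv : (μ (E ∩ {ω | F ω v = v})).toReal = p v * π v := by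
      have hsub2 : E ∩ {ω | F ω v = v} = {ω | F ω v = v} :=
        Set.inter_eq_self_of_subset_right (fun ω hω => hasCycle_of_fixed hv hω)
      rw [hsub2]
      exact hval v hv v hv
    have ht0 : (μ (E ∩ {ω | F ω v = 0})).toReal = (∑ i ∈ S', p i * π i) * (1 - p v * σ) := by
      rw [hstep 0 (Finset.mem_insert_self 0 S'), ENNReal.toReal_mul, hB0, hzero v hv]
    have hts : ∀ u ∈ S', (μ (E ∩ {ω | F ω v = u})).toReal
        = ((∑ i ∈ S', p i * π i) + p u * π v) * (p v * π u) := by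
      intro u hu
      rw [hstep u (Finset.mem_insert_of_mem hu), ENNReal.toReal_mul, hBu u hu,
        hval v hv u (hsub hu)]
    rw [hfin, hidx, Finset.sum_insert hvnot, Finset.sum_insert h0', htv, ht0,
      Finset.sum_congr rfl hts]
    set A := ∑ i ∈ S', p i * π i with hA
    have hexp : ∑ u ∈ S', ((A + p u * π v) * (p v * π u))
        = (p v * A) * (σ - π v) + (p v * π v) * A := by
      have h1 : ∀ u ∈ S', (A + p u * π v) * (p v * π u)
          = (p v * A) * π u + (p v * π v) * (p u * π u) := fun u _ => by ring
      rw [Finset.sum_congr rfl h1, Finset.sum_add_distrib, ← Finset.mul_sum, ← Finset.mul_sum]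
      have h2 : ∑ u ∈ S', π u = σ - π v := by rw [hσ']; ring
      rw [h2, ← hA]
    have hgoal : ∑ i ∈ S, p i * π i = p v * π v + A := by
      rw [hA, hS', ← Finset.add_sum_erase _ _ hv]
    rw [hgoal, hexp]
    ring

end CycleAuxiliary

/-- Let `S` be a finite nonempty set of positive integers, `π` a probability
distribution on `S`, and `p i ∈ [0,1]` for each `i ∈ S`.  Let `F` be a random
`S`-map whose values are independent, with `F i` distributed according to `π`
with probability `p i` and equal to `0` otherwise (so `P[F i = j] = p i * π j`
for `j ∈ S` and `P[F i = 0] = 1 - p i`).  Then the probability that `F` has a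
cycle equals `∑ i ∈ S, p i * π i`. -/
theorem cycle_prob_weighted
    (S : Finset ℕ) (hS : S.Nonempty) (hpos : ∀ i ∈ S, 0 < i)
    (π : ℕ → ℝ) (hπ0 : ∀ i ∈ S, 0 ≤ π i) (hπ1 : ∑ i ∈ S, π i = 1)
    (p : ℕ → ℝ) (hp : ∀ i ∈ S, 0 ≤ p i ∧ p i ≤ 1)
    {Ω : Type*} [MeasurableSpace Ω] (μ : Measure Ω) [IsProbabilityMeasure μ]
    (F : Ω → ℕ → ℕ)
    (hSmap : ∀ ω, ∀ i ∈ S, F ω i ∈ S ∨ F ω i = 0)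
    (hmeas : ∀ i ∈ S, Measurable fun ω => F ω i)
    (hindep : ProbabilityTheory.iIndepFun
      (fun (i : {i // i ∈ S}) ω => F ω i.val) μ)
    (hzero : ∀ i ∈ S, (μ {ω | F ω i = 0}).toReal = 1 - p i)
    (hval : ∀ i ∈ S, ∀ j ∈ S, (μ {ω | F ω i = j}).toReal = p i * π j) :
    (μ {ω | HasCycle S (F ω)}).toReal = ∑ i ∈ S, p i * π i := by
  have h0 : (0:ℕ) ∉ S := fun h => absurd (hpos 0 h) (lt_irrefl 0)
  exact cyc_aux S.card S rfl h0 π p μ F hSmap hmeas hindep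
    (fun i hi => by rw [hπ1, mul_one]; exact hzero i hi) hval
end

section
/- Let S be a finite nonempty set of positive integers, let π be a probability distribution on S, and let p ∈ [0,1]. Let f be a random S-map whose values f(i) are chosen independently so that with probability p the value f(i) is chosen from S according to π, and otherwise f(i) = 0. Then the probability that f has a cycle is exactly p, independently of π. -/
open MeasureTheory

namespace CycAux

open Function

def Cyc (S : Finset ℕ) (g : ℕ → ℕ) : Prop :=
  ∃ i ∈ S, ∃ k, 0 < k ∧ (∀ j < k, g^[j] i ∈ S) ∧ g^[k] i = i

lemma iter_mod {g : ℕ → ℕ} {i k : ℕ} (hk : 0 < k) (hfix : g^[k] i = i) (m : ℕ) :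
    g^[m] i = g^[m % k] i := by
  have h1 : ∀ q, g^[k * q] i = i := by
    intro q
    rw [Function.iterate_mul]
    exact Function.iterate_fixed hfix q
  conv_lhs => rw [← Nat.mod_add_div m k]
  rw [Function.iterate_add_apply, h1]

lemma distinct_of_min {g : ℕ → ℕ} {i k : ℕ} (hfix : g^[k] i = i)
    (hmin : ∀ m, 0 < m → m < k → g^[m] i ≠ i) :
    ∀ a b, a < b → b < k → g^[a] i ≠ g^[b] i := by
  intro a b hab hbk heq
  have hbk' : b ≤ k := le_of_lt hbk
  have : g^[k - b + a] i = i := by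
    have h1 : g^[k - b] (g^[a] i) = g^[k - b] (g^[b] i) := by rw [heq]
    rw [← Function.iterate_add_apply, ← Function.iterate_add_apply] at h1
    have h2 : k - b + b = k := Nat.sub_add_cancel hbk'
    rw [h2, hfix] at h1
    exact h1
  exact hmin (k - b + a) (by omega) (by omega) this

lemma cyc_norm {S : Finset ℕ} {g : ℕ → ℕ} (h : Cyc S g) :
    ∃ i ∈ S, ∃ k, 0 < k ∧ (∀ j < k, g^[j] i ∈ S) ∧ g^[k] i = i ∧
      ∀ a b, a < b → b < k → g^[a] i ≠ g^[b] i := by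
  obtain ⟨i, hi, k, hk, hmem, hfix⟩ := h
  have hP : ∃ m, 0 < m ∧ g^[m] i = i := ⟨k, hk, hfix⟩
  classical
  let d := Nat.find hP
  obtain ⟨hd0, hdfix⟩ := Nat.find_spec hP
  have hdk : d ≤ k := Nat.find_min' hP ⟨hk, hfix⟩
  have hmin : ∀ m, 0 < m → m < d → g^[m] i ≠ i := by
    intro m hm hmd hfm
    exact Nat.find_min hP hmd ⟨hm, hfm⟩
  exact ⟨i, hi, d, hd0, fun j hj => hmem j (lt_of_lt_of_le hj hdk), hdfix,
    distinct_of_min hdfix hmin⟩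

lemma rebase {S : Finset ℕ} {g : ℕ → ℕ} {i k : ℕ} (t : ℕ) (hk : 0 < k) (hfix : g^[k] i = i)
    (hmem : ∀ j < k, g^[j] i ∈ S) (hdist : ∀ a b, a < b → b < k → g^[a] i ≠ g^[b] i) :
    g^[k] (g^[t] i) = g^[t] i ∧ (∀ j < k, g^[j] (g^[t] i) ∈ S) ∧
      (∀ a b, a < b → b < k → g^[a] (g^[t] i) ≠ g^[b] (g^[t] i)) := by
  have key : ∀ j, g^[j] (g^[t] i) = g^[(j + t) % k] i := by
    intro j
    rw [← Function.iterate_add_apply, iter_mod hk hfix]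
  refine ⟨?_, ?_, ?_⟩
  · rw [key, Nat.add_mod_left]
    exact (iter_mod hk hfix t).symm
  · intro j _
    rw [key]
    exact hmem _ (Nat.mod_lt _ hk)
  · intro a b hab hbk heq
    rw [key, key] at heq
    have ha' : (a + t) % k < k := Nat.mod_lt _ hk
    have hb' : (b + t) % k < k := Nat.mod_lt _ hk
    have : (a + t) % k = (b + t) % k := by
      rcases lt_trichotomy ((a + t) % k) ((b + t) % k) with h | h | h
      · exact absurd heq (hdist _ _ h hb')
      · exact h
      · exact absurd heq.symm (hdist _ _ h ha')
    have : a % k = b % k := by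
      have := Nat.ModEq.add_right_cancel' t (this : (a + t) ≡ (b + t) [MOD k])
      exact this
    rw [Nat.mod_eq_of_lt (lt_trans hab hbk), Nat.mod_eq_of_lt hbk] at this
    omega



lemma cyc_fixpt {S : Finset ℕ} {g : ℕ → ℕ} {v : ℕ} (hv : v ∈ S) (hgv : g v = v) :
    Cyc S g :=
  ⟨v, hv, 1, one_pos, fun j hj => by interval_cases j <;> simpa, by simpa using hgv⟩

lemma cyc_congr {S : Finset ℕ} {f g : ℕ → ℕ} (hfg : ∀ i ∈ S, f i = g i) :
    Cyc S f → Cyc S g := by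
  rintro ⟨i, hi, k, hk, hmem, hfix⟩
  have key : ∀ j ≤ k, g^[j] i = f^[j] i := by
    intro j hj
    induction j with
    | zero => rfl
    | succ n ih =>
      rw [Function.iterate_succ_apply', Function.iterate_succ_apply',
        ih (le_of_lt (Nat.lt_of_succ_le hj))]
      exact (hfg _ (hmem n (Nat.lt_of_succ_le hj))).symm
  refine ⟨i, hi, k, hk, fun j hj => ?_, ?_⟩
  · rw [key j (le_of_lt hj)]; exact hmem j hj
  · rw [key k le_rfl]; exact hfix

lemma cyc_redirect {S' : Finset ℕ} {v u : ℕ} (hv : v ∉ S') (huv : u ≠ v)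
    {g : ℕ → ℕ} (hgv : g v = u) :
    Cyc (insert v S') g ↔ Cyc S' (fun i => if g i = v then u else g i) := by
  set r : ℕ → ℕ := fun i => if g i = v then u else g i with hr
  have hrap : ∀ x, g x ≠ v → r x = g x := fun x hx => if_neg hx
  have hrap' : ∀ x, g x = v → r x = u := fun x hx => if_pos hx
  constructor
  · intro h
    obtain ⟨i, hi, k, hk, hmem, hfix, hdist⟩ := cyc_norm h
    by_cases hvorb : ∃ t < k, g^[t] i = v
    · -- v is on the cycle; rebase at v
      obtain ⟨t, htk, htv⟩ := hvorb
      obtain ⟨hfixv, hmemv, hdistv⟩ := rebase t hk hfix hmem hdist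
      rw [htv] at hfixv hmemv hdistv
      -- k ≥ 2
      have hk2 : 2 ≤ k := by
        by_contra h2
        have hk1 : k = 1 := by omega
        rw [hk1, Function.iterate_one, hgv] at hfixv
        exact huv hfixv
      have claim : ∀ j, j ≤ k - 2 → r^[j] u = g^[j + 1] v := by
        intro j hj
        induction j with
        | zero => simpa using hgv.symm
        | succ n ih =>
          rw [Function.iterate_succ_apply', ih (by omega)]
          have hne : g (g^[n + 1] v) ≠ v := by
            rw [← Function.iterate_succ_apply' g (n + 1) v]
            intro hcon
            exact hdistv 0 (n + 2) (by omega) (by omega) hcon.symm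
          rw [hrap _ hne]
          exact (Function.iterate_succ_apply' g (n + 1) v).symm
      have hmem' : ∀ j, j ≤ k - 2 → g^[j + 1] v ∈ S' := by
        intro j hj
        have h1 : g^[j + 1] v ∈ insert v S' := hmemv (j + 1) (by omega)
        have h2 : g^[j + 1] v ≠ v := by
          intro hcon
          exact hdistv 0 (j + 1) (by omega) (by omega) hcon.symm
        exact (Finset.mem_insert.1 h1).resolve_left h2
      refine ⟨u, ?_, k - 1, by omega, ?_, ?_⟩
      · have h1 := hmem' 0 (by omega)
        rwa [zero_add, Function.iterate_one, hgv] at h1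
      · intro j hj
        rw [claim j (by omega)]
        exact hmem' j (by omega)
      · rw [show k - 1 = (k - 2) + 1 from by omega, Function.iterate_succ_apply',
          claim (k - 2) le_rfl]
        apply hrap'
        rw [← Function.iterate_succ_apply' g (k - 2 + 1) v,
          show (k - 2 + 1).succ = k from by omega]
        exact hfixv
    · push_neg at hvorb
      have claim : ∀ j, j ≤ k → r^[j] i = g^[j] i := by
        intro j hj
        induction j with
        | zero => rfl
        | succ n ih =>
          rw [Function.iterate_succ_apply', ih (by omega), Function.iterate_succ_apply']
          apply hrap
          rw [← Function.iterate_succ_apply' g n i]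
          rcases Nat.lt_or_ge (n + 1) k with h1 | h1
          · exact hvorb _ h1
          · rw [show n.succ = k from by omega, hfix]
            intro hcon
            exact hvorb 0 hk hcon
      have hiS : i ∈ S' := by
        have h0 : i ≠ v := hvorb 0 hk
        exact (Finset.mem_insert.1 hi).resolve_left h0
      refine ⟨i, hiS, k, hk, fun j hj => ?_, ?_⟩
      · rw [claim j (le_of_lt hj)]
        exact (Finset.mem_insert.1 (hmem j hj)).resolve_left (hvorb j hj)
      · rw [claim k le_rfl]; exact hfix
  · intro h
    obtain ⟨i, hi, k, hk, hmem, hfix, hdist⟩ := cyc_norm h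
    by_cases hw : ∃ t < k, g (r^[t] i) = v
    · obtain ⟨t, htk, hgt⟩ := hw
      have hu : r^[t + 1] i = u := by
        rw [Function.iterate_succ_apply' r t i]
        exact hrap' _ hgt
      obtain ⟨hfixu', hmemu', hdistu'⟩ := rebase (t + 1) hk hfix hmem hdist
      rw [hu] at hfixu' hmemu' hdistu'
      have hw1 : r^[k - 1] u = r^[t] i := by
        rw [← hu, ← Function.iterate_add_apply r (k - 1) (t + 1) i,
          show k - 1 + (t + 1) = k + t from by omega, iter_mod hk hfix (k + t),
          Nat.add_mod_left, Nat.mod_eq_of_lt htk]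
      have hgw : g (r^[k - 1] u) = v := by rw [hw1]; exact hgt
      have hstep : ∀ j, j < k - 1 → g (r^[j] u) = r^[j + 1] u := by
        intro j hj
        by_cases hgj : g (r^[j] u) = v
        · exfalso
          have h2 : r^[j + 1] u = u := by
            rw [Function.iterate_succ_apply' r j u, hrap' _ hgj]
          exact hdistu' 0 (j + 1) (by omega) (by omega) h2.symm
        · rw [← hrap _ hgj]
          exact (Function.iterate_succ_apply' r j u).symm
      have hgc : ∀ j, j ≤ k - 1 → g^[j] u = r^[j] u := by
        intro j hj
        induction j with
        | zero => rfl
        | succ n ih =>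
          rw [Function.iterate_succ_apply' g n u, ih (by omega)]
          exact hstep n (by omega)
      refine ⟨v, Finset.mem_insert_self v S', k + 1, by omega, ?_, ?_⟩
      · intro j hj
        match j, hj with
        | 0, _ => exact Finset.mem_insert_self v S'
        | (m + 1), hj =>
          have e : g^[m + 1] v = g^[m] u := by
            rw [Function.iterate_succ_apply g m v, hgv]
          rw [e, hgc m (by omega)]
          exact Finset.mem_insert_of_mem (hmemu' m (by omega))
      · have e1 : g^[k + 1] v = g^[k] u := by
          rw [Function.iterate_succ_apply g k v, hgv]
        rw [e1, show k = (k - 1) + 1 from by omega,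
          Function.iterate_succ_apply' g (k - 1) u, hgc (k - 1) le_rfl, hgw]
    · push_neg at hw
      have claim : ∀ j, j ≤ k → g^[j] i = r^[j] i := by
        intro j hj
        induction j with
        | zero => rfl
        | succ n ih =>
          rw [Function.iterate_succ_apply' g n i, ih (by omega),
            Function.iterate_succ_apply' r n i]
          exact (hrap _ (hw n (by omega))).symm
      refine ⟨i, Finset.mem_insert_of_mem hi, k, hk, fun j hj => ?_, ?_⟩
      · rw [claim j (le_of_lt hj)]
        exact Finset.mem_insert_of_mem (hmem j hj)
      · rw [claim k le_rfl]
        exact hfix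

lemma cyc_empty (g : ℕ → ℕ) : ¬ Cyc ∅ g := by
  rintro ⟨i, hi, -⟩
  exact absurd hi (Finset.notMem_empty i)

lemma hasCycle_iff_cyc (S : Finset ℕ) (f : ℕ → ℕ) : HasCycle S f ↔ Cyc S f := by
  constructor
  · rintro ⟨k, a, hk, hmem, hstep, hlast⟩
    have key : ∀ j < k, f^[j] (a 0) = a j := by
      intro j hj
      induction j with
      | zero => rfl
      | succ n ih =>
        rw [Function.iterate_succ_apply' f n (a 0), ih (by omega)]
        exact hstep n hj
    refine ⟨a 0, hmem 0 hk, k, hk, fun j hj => ?_, ?_⟩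
    · rw [key j hj]; exact hmem j hj
    · rw [show k = (k - 1) + 1 from by omega, Function.iterate_succ_apply' f (k - 1) (a 0),
        key (k - 1) (by omega)]
      exact hlast
  · rintro ⟨i, hi, k, hk, hmem, hfix⟩
    refine ⟨k, fun j => f^[j] i, hk, fun j hj => hmem j hj, fun j hj => ?_, ?_⟩
    · exact (Function.iterate_succ_apply' f j i).symm
    · rw [← Function.iterate_succ_apply' f (k - 1) i, show (k - 1).succ = k from by omega]
      exact hfix

open Finset

noncomputable def Fn (S T : Finset ℕ) : Finset (ℕ → ℕ) := by
  classical
  exact (S.pi fun _ => T).image (fun γ i => if h : i ∈ S then γ i h else 0)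

lemma mem_Fn {S T : Finset ℕ} {g : ℕ → ℕ} :
    g ∈ Fn S T ↔ (∀ i ∈ S, g i ∈ T) ∧ ∀ i ∉ S, g i = 0 := by
  classical
  unfold Fn
  simp only [mem_image, mem_pi]
  constructor
  · rintro ⟨γ, hγ, rfl⟩
    constructor
    · intro i hi
      simp only [dif_pos hi]
      exact hγ i hi
    · intro i hi
      simp only [dif_neg hi]
  · rintro ⟨h1, h2⟩
    refine ⟨fun i _ => g i, fun i hi => h1 i hi, ?_⟩
    funext i
    by_cases hi : i ∈ S
    · simp [dif_pos hi]
    · simp [dif_neg hi, h2 i hi]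

lemma fn_ext {S T : Finset ℕ} {g g' : ℕ → ℕ} (hg : g ∈ Fn S T) (hg' : g' ∈ Fn S T)
    (h : ∀ i ∈ S, g i = g' i) : g = g' := by
  funext i
  by_cases hi : i ∈ S
  · exact h i hi
  · rw [(mem_Fn.1 hg).2 i hi, (mem_Fn.1 hg').2 i hi]

open Finset in
lemma cyc_iff_congr {S : Finset ℕ} {f g : ℕ → ℕ} (hfg : ∀ i ∈ S, f i = g i) :
    Cyc S f ↔ Cyc S g :=
  ⟨cyc_congr hfg, cyc_congr (fun i hi => (hfg i hi).symm)⟩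

lemma Fn_empty (T : Finset ℕ) : Fn ∅ T = {fun _ => 0} := by
  ext g
  rw [mem_Fn, Finset.mem_singleton]
  constructor
  · rintro ⟨-, h2⟩
    funext i
    exact h2 i (Finset.notMem_empty i)
  · rintro rfl
    exact ⟨fun i hi => absurd hi (Finset.notMem_empty i), fun i _ => rfl⟩

lemma update_mem_Fn {v : ℕ} {S' T : Finset ℕ} (hv : v ∉ S') {h : ℕ → ℕ}
    (hh : h ∈ Fn S' T) {u : ℕ} (hu : u ∈ T) :
    Function.update h v u ∈ Fn (insert v S') T := by
  rw [mem_Fn] at hh ⊢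
  constructor
  · intro i hi
    rcases Finset.mem_insert.1 hi with rfl | hi'
    · rw [Function.update_self]; exact hu
    · have hiv : i ≠ v := by rintro rfl; exact hv hi'
      rw [Function.update_of_ne hiv]
      exact hh.1 i hi'
  · intro i hi
    have hiv : i ≠ v := by rintro rfl; exact hi (Finset.mem_insert_self _ S')
    rw [Function.update_of_ne hiv]
    exact hh.2 i (fun hc => hi (Finset.mem_insert_of_mem hc))

lemma sum_Fn_insert {v : ℕ} {S' T : Finset ℕ} (hv : v ∉ S') (hvT : v ∈ T)
    (f : (ℕ → ℕ) → ℝ) :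
    ∑ g ∈ Fn (insert v S') T, f g
      = ∑ u ∈ T, ∑ h ∈ Fn S' T, f (Function.update h v u) := by
  classical
  rw [← Finset.sum_product']
  refine Finset.sum_nbij' (fun g => (g v, Function.update g v 0))
    (fun p => Function.update p.2 v p.1) ?_ ?_ ?_ ?_ ?_
  · intro g hg
    rw [mem_Fn] at hg
    refine Finset.mem_product.2 ⟨hg.1 v (Finset.mem_insert_self v S'), mem_Fn.2 ⟨?_, ?_⟩⟩
    · intro i hi
      have hiv : i ≠ v := by rintro rfl; exact hv hi
      show Function.update g v 0 i ∈ T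
      rw [Function.update_of_ne hiv]
      exact hg.1 i (Finset.mem_insert_of_mem hi)
    · intro i hi
      show Function.update g v 0 i = 0
      by_cases hiv : i = v
      · subst hiv; rw [Function.update_self]
      · rw [Function.update_of_ne hiv]
        exact hg.2 i (fun hc => hi ((Finset.mem_insert.1 hc).resolve_left hiv))
  · intro p hp
    obtain ⟨hp1, hp2⟩ := Finset.mem_product.1 hp
    exact update_mem_Fn hv hp2 hp1
  · intro g hg
    dsimp only
    rw [mem_Fn] at hg
    funext i
    by_cases hiv : i = v
    · subst hiv; rw [Function.update_self]
    · rw [Function.update_of_ne hiv, Function.update_of_ne hiv]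
  · intro p hp
    obtain ⟨hp1, hp2⟩ := Finset.mem_product.1 hp
    rw [mem_Fn] at hp2
    have h2 : Function.update (Function.update p.2 v p.1) v 0 = p.2 := by
      funext i
      by_cases hiv : i = v
      · subst hiv
        rw [Function.update_self]
        exact (hp2.2 _ hv).symm
      · rw [Function.update_of_ne hiv, Function.update_of_ne hiv]
    rw [Function.update_self, h2]
  · intro g hg
    dsimp only
    rw [mem_Fn] at hg
    congr 1
    funext i
    by_cases hiv : i = v
    · subst hiv; rw [Function.update_self]
    · rw [Function.update_of_ne hiv, Function.update_of_ne hiv]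


open Classical in
lemma fiber_sum {S' T : Finset ℕ} {u v : ℕ} (huv : u ≠ v) (huT : u ∈ T) (hvT : v ∈ T)
    (hv0 : v ≠ 0) (w : ℕ → ℝ) (g' : ℕ → ℕ) (hg' : g' ∈ Fn S' (T.erase v)) :
    ∑ h ∈ (Fn S' T).filter (fun h => (fun i => if h i = v then u else h i) = g'),
        ∏ i ∈ S', w (h i)
      = ∏ i ∈ S', (if g' i = u then w u + w v else w (g' i)) := by
  classical
  rw [mem_Fn] at hg'
  have hts : ∀ i ∈ S', (if g' i = u then w u + w v else w (g' i))
      = (∑ x ∈ (if g' i = u then ({u, v} : Finset ℕ) else {g' i}), w x) := by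
    intro i hi
    by_cases h : g' i = u
    · rw [if_pos h, if_pos h, Finset.sum_pair huv]
    · rw [if_neg h, if_neg h, Finset.sum_singleton]
  rw [Finset.prod_congr rfl hts, Finset.prod_sum]
  refine Finset.sum_nbij' (fun h => (fun i _ => h i : ∀ i ∈ S', ℕ))
    (fun p => (fun i => if h : i ∈ S' then p i h else 0)) ?_ ?_ ?_ ?_ ?_
  · -- maps into pi
    intro h hh
    rw [Finset.mem_filter] at hh
    obtain ⟨hh1, hh2⟩ := hh
    rw [mem_Fn] at hh1
    rw [Finset.mem_pi]
    intro i hi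
    have heq : (if h i = v then u else h i) = g' i := congrFun hh2 i
    by_cases hgu : g' i = u
    · rw [if_pos hgu]
      by_cases hhv : h i = v
      · rw [hhv]; exact Finset.mem_insert_of_mem (Finset.mem_singleton_self v)
      · rw [if_neg hhv] at heq
        rw [heq, hgu]
        exact Finset.mem_insert_self u {v}
    · rw [if_neg hgu, Finset.mem_singleton]
      by_cases hhv : h i = v
      · rw [if_pos hhv] at heq
        exact absurd heq.symm hgu
      · rw [if_neg hhv] at heq
        exact heq
  · -- ext p ∈ filter
    intro p hp
    rw [Finset.mem_pi] at hp
    rw [Finset.mem_filter]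
    constructor
    · rw [mem_Fn]
      constructor
      · intro i hi
        show (if h : i ∈ S' then p i h else 0) ∈ T
        rw [dif_pos hi]
        have := hp i hi
        by_cases hgu : g' i = u
        · rw [if_pos hgu] at this
          rcases Finset.mem_insert.1 this with rfl | hsing
          · exact huT
          · rw [Finset.mem_singleton.1 hsing]; exact hvT
        · rw [if_neg hgu, Finset.mem_singleton] at this
          rw [this]
          exact Finset.mem_of_mem_erase (hg'.1 i hi)
      · intro i hi
        show (if h : i ∈ S' then p i h else 0) = 0
        rw [dif_neg hi]
    · funext i
      dsimp only
      by_cases hi : i ∈ S'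
      · simp only [dif_pos hi]
        have hmem := hp i hi
        by_cases hgu : g' i = u
        · rw [if_pos hgu] at hmem
          rcases Finset.mem_insert.1 hmem with hu' | hsing
          · rw [hu', if_neg huv, hgu]
          · rw [Finset.mem_singleton.1 hsing, if_pos rfl, hgu]
        · rw [if_neg hgu, Finset.mem_singleton] at hmem
          rw [hmem, if_neg (Finset.ne_of_mem_erase (hg'.1 i hi))]
      · simp only [dif_neg hi]
        rw [if_neg (Ne.symm hv0), (hg'.2 i hi).symm]
  · -- left inverse
    intro h hh
    rw [Finset.mem_filter] at hh
    have hh1 := (mem_Fn.1 hh.1).2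
    funext i
    dsimp only
    by_cases hi : i ∈ S'
    · rw [dif_pos hi]
    · rw [dif_neg hi, hh1 i hi]
  · -- right inverse
    intro p hp
    funext i hi
    dsimp only
    rw [dif_pos hi]
  · -- values
    intro h hh
    exact (Finset.prod_attach S' (fun i => w (h i))).symm

open Classical in
theorem key_identity : ∀ (S T : Finset ℕ) (w : ℕ → ℝ), S ⊆ T → 0 ∉ S →
    (∑ g ∈ Fn S T, if Cyc S g then 0 else ∏ i ∈ S, w (g i)) * (∑ t ∈ T, w t)
      = (∑ t ∈ T \ S, w t) * (∑ t ∈ T, w t) ^ S.card := by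
  classical
  intro S
  induction S using Finset.induction_on with
  | empty =>
    intro T w _ _
    rw [Fn_empty, Finset.sum_singleton, if_neg (cyc_empty _), Finset.prod_empty,
      Finset.card_empty, Finset.sdiff_empty, pow_zero, one_mul, mul_one]
  | @insert v S' hv ih =>
    intro T w hST h0S
    have hvT : v ∈ T := hST (Finset.mem_insert_self v S')
    have hS'T : S' ⊆ T := fun i hi => hST (Finset.mem_insert_of_mem hi)
    have hv0 : v ≠ 0 := fun h => h0S (h ▸ Finset.mem_insert_self v S')
    have h0S' : 0 ∉ S' := fun h => h0S (Finset.mem_insert_of_mem h)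
    have hS'T' : S' ⊆ T.erase v := fun i hi =>
      Finset.mem_erase.2 ⟨fun h => hv (h ▸ hi), hS'T hi⟩
    set W : ℝ := ∑ t ∈ T, w t with hW
    set R : ℝ := ∑ t ∈ T \ insert v S', w t with hRdef
    -- Step 1: peel off v
    rw [sum_Fn_insert hv hvT]
    -- the v-summand vanishes
    have hzero : (∑ h ∈ Fn S' T, if Cyc (insert v S') (Function.update h v v) then 0
        else ∏ i ∈ insert v S', w (Function.update h v v i)) = 0 := by
      apply Finset.sum_eq_zero
      intro h hh
      rw [if_pos (cyc_fixpt (Finset.mem_insert_self v S') (Function.update_self v v h))]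
    rw [← Finset.sum_erase T hzero]  -- hope: direction
    -- Step 2: per-u evaluation
    have hmain : ∀ u ∈ T.erase v,
        (∑ h ∈ Fn S' T, if Cyc (insert v S') (Function.update h v u) then 0
          else ∏ i ∈ insert v S', w (Function.update h v u i)) * W
        = (R * w u + (if u ∈ T \ insert v S' then w u * w v else 0)) * W ^ S'.card := by
      intro u hu
      obtain ⟨huv, huT⟩ := Finset.mem_erase.1 hu
      set w' : ℕ → ℝ := fun j => if j = u then w u + w v else w j with hw'
      -- rewrite summand
      have hsummand : ∀ h ∈ Fn S' T,
          (if Cyc (insert v S') (Function.update h v u) then 0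
            else ∏ i ∈ insert v S', w (Function.update h v u i))
          = (if Cyc S' (fun i => if h i = v then u else h i) then 0
            else w u * ∏ i ∈ S', w (h i)) := by
        intro h hh
        have hcyc : Cyc (insert v S') (Function.update h v u)
            ↔ Cyc S' (fun i => if h i = v then u else h i) := by
          rw [cyc_redirect hv huv (Function.update_self v u h)]
          apply cyc_iff_congr
          intro i hi
          have hiv : i ≠ v := by rintro rfl; exact hv hi
          rw [Function.update_of_ne hiv]
        have hprod : ∏ i ∈ insert v S', w (Function.update h v u i)
            = w u * ∏ i ∈ S', w (h i) := by
          rw [Finset.prod_insert hv, Function.update_self]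
          congr 1
          apply Finset.prod_congr rfl
          intro i hi
          have hiv : i ≠ v := by rintro rfl; exact hv hi
          rw [Function.update_of_ne hiv]
        rw [hcyc, hprod]
      rw [Finset.sum_congr rfl hsummand]
      -- fiberwise over redirect
      have hmapsto : ∀ h ∈ Fn S' T,
          (fun i => if h i = v then u else h i) ∈ Fn S' (T.erase v) := by
        intro h hh
        rw [mem_Fn] at hh ⊢
        constructor
        · intro i hi
          by_cases hhv : h i = v
          · rw [if_pos hhv]
            exact Finset.mem_erase.2 ⟨huv, huT⟩
          · rw [if_neg hhv]
            exact Finset.mem_erase.2 ⟨hhv, hh.1 i hi⟩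
        · intro i hi
          rw [hh.2 i hi, if_neg (Ne.symm hv0)]
      rw [← Finset.sum_fiberwise_of_maps_to hmapsto]
      -- evaluate each fiber
      have hfib : ∀ g' ∈ Fn S' (T.erase v),
          (∑ h ∈ (Fn S' T).filter (fun h => (fun i => if h i = v then u else h i) = g'),
            if Cyc S' (fun i => if h i = v then u else h i) then 0
            else w u * ∏ i ∈ S', w (h i))
          = (if Cyc S' g' then 0 else w u * ∏ i ∈ S', w' (g' i)) := by
        intro g' hg'
        have hcongr : ∀ h ∈ (Fn S' T).filter
            (fun h => (fun i => if h i = v then u else h i) = g'),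
            (if Cyc S' (fun i => if h i = v then u else h i) then 0
              else w u * ∏ i ∈ S', w (h i))
            = (if Cyc S' g' then 0 else w u * ∏ i ∈ S', w (h i)) := by
          intro h hh
          rw [(Finset.mem_filter.1 hh).2]
        rw [Finset.sum_congr rfl hcongr]
        by_cases hc : Cyc S' g'
        · rw [if_pos hc]
          apply Finset.sum_eq_zero
          intro h _
          rw [if_pos hc]
        · simp only [if_neg hc]
          rw [← Finset.mul_sum, fiber_sum huv huT hvT hv0 w g' hg']
      rw [Finset.sum_congr rfl hfib]
      -- apply IH
      have hIH := ih (T.erase v) w' hS'T' h0S'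
      -- compute the two weight sums
      have hWsum : (∑ t ∈ T.erase v, w' t) = W := by
        have : ∀ t ∈ T.erase v, w' t = w t + (if t = u then w v else 0) := by
          intro t ht
          by_cases htu : t = u
          · subst htu; simp [hw']
          · simp [hw', htu]
        rw [Finset.sum_congr rfl this, Finset.sum_add_distrib,
          Finset.sum_ite_eq' (T.erase v) u (fun _ => w v), if_pos hu, hW]
        exact Finset.sum_erase_add T w hvT
      have hset : (T.erase v) \ S' = T \ insert v S' := by
        ext t
        simp only [Finset.mem_sdiff, Finset.mem_erase, Finset.mem_insert]
        tauto
      have hRsum : (∑ t ∈ (T.erase v) \ S', w' t)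
          = R + (if u ∈ T \ insert v S' then w v else 0) := by
        rw [hset]
        have : ∀ t ∈ T \ insert v S', w' t = w t + (if t = u then w v else 0) := by
          intro t ht
          by_cases htu : t = u
          · subst htu; simp [hw']
          · simp [hw', htu]
        rw [Finset.sum_congr rfl this, Finset.sum_add_distrib,
          Finset.sum_ite_eq' (T \ insert v S') u (fun _ => w v), hRdef]
      rw [hWsum, hRsum] at hIH
      -- pull w u out of the sum
      have hpull : (∑ g' ∈ Fn S' (T.erase v),
          if Cyc S' g' then 0 else w u * ∏ i ∈ S', w' (g' i))
          = w u * ∑ g' ∈ Fn S' (T.erase v),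
            (if Cyc S' g' then 0 else ∏ i ∈ S', w' (g' i)) := by
        rw [Finset.mul_sum]
        apply Finset.sum_congr rfl
        intro g' _
        rw [mul_ite, mul_zero]
      rw [hpull, mul_assoc, hIH]
      by_cases hu' : u ∈ T \ insert v S'
      · rw [if_pos hu', if_pos hu']
        ring
      · rw [if_neg hu', if_neg hu']
        ring
    -- Step 3: assemble
    rw [Finset.sum_mul, Finset.sum_congr rfl hmain, ← Finset.sum_mul]
    have hsplit : (∑ u ∈ T.erase v,
        (R * w u + (if u ∈ T \ insert v S' then w u * w v else 0)))
        = R * (W - w v) + R * w v := by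
      rw [Finset.sum_add_distrib, ← Finset.mul_sum]
      congr 1
      · congr 1
        have := Finset.sum_erase_add T w hvT
        linarith
      · rw [Finset.sum_ite_mem]
        have hsub : T \ insert v S' ⊆ T.erase v := by
          intro t ht
          rw [Finset.mem_sdiff, Finset.mem_insert] at ht
          exact Finset.mem_erase.2 ⟨fun h => ht.2 (Or.inl h), ht.1⟩
        rw [Finset.inter_eq_right.2 hsub, ← Finset.sum_mul, hRdef]
    rw [hsplit, Finset.card_insert_of_notMem hv]
    ring

end CycAux

open CycAux

/-- Let `S` be a finite nonempty set of positive integers, `π` a probability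
distribution on `S`, and `p ∈ [0,1]`.  Let `F` be a random `S`-map whose values are
independent, with `F i` distributed according to `π` with probability `p` and equal
to `0` otherwise (so `P[F i = j] = p * π j` for `j ∈ S` and `P[F i = 0] = 1 - p`).
Then the probability that `F` has a cycle is exactly `p`, independently of `π`. -/
theorem cycle_prob_range_weighted
    (S : Finset ℕ) (hS : S.Nonempty) (hpos : ∀ i ∈ S, 0 < i)
    (π : ℕ → ℝ) (hπ0 : ∀ i ∈ S, 0 ≤ π i) (hπ1 : ∑ i ∈ S, π i = 1)
    (p : ℝ) (hp0 : 0 ≤ p) (hp1 : p ≤ 1)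
    {Ω : Type*} [MeasurableSpace Ω] (μ : Measure Ω) [IsProbabilityMeasure μ]
    (F : Ω → ℕ → ℕ)
    (hSmap : ∀ ω, ∀ i ∈ S, F ω i ∈ S ∨ F ω i = 0)
    (hmeas : ∀ i ∈ S, Measurable fun ω => F ω i)
    (hindep : ProbabilityTheory.iIndepFun
      (fun (i : {i // i ∈ S}) ω => F ω i.val) μ)
    (hzero : ∀ i ∈ S, (μ {ω | F ω i = 0}).toReal = 1 - p)
    (hval : ∀ i ∈ S, ∀ j ∈ S, (μ {ω | F ω i = j}).toReal = p * π j) :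
    (μ {ω | HasCycle S (F ω)}).toReal = p := by
  classical
  set T : Finset ℕ := insert 0 S with hT
  have h0S : 0 ∉ S := fun h => absurd (hpos 0 h) (lt_irrefl 0)
  set w : ℕ → ℝ := fun j => if j = 0 then 1 - p else p * π j with hw
  set E : (ℕ → ℕ) → Set Ω := fun g => {ω | ∀ i ∈ S, F ω i = g i} with hE
  -- measurability of atoms
  have hmeasE : ∀ g : ℕ → ℕ, MeasurableSet (E g) := by
    intro g
    have hrw : E g = ⋂ i ∈ S, (fun ω => F ω i) ⁻¹' {g i} := by
      ext ω
      simp only [hE, Set.mem_setOf_eq, Set.mem_iInter, Set.mem_preimage,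
        Set.mem_singleton_iff]
    rw [hrw]
    exact MeasurableSet.biInter S.countable_toSet
      (fun i hi => (hmeas i hi) (measurableSet_singleton _))
  -- measure of an atom
  have hatom : ∀ g ∈ Fn S T, (μ (E g)).toReal = ∏ i ∈ S, w (g i) := by
    intro g hg
    have hrw : E g = ⋂ i ∈ (Finset.univ : Finset {i // i ∈ S}),
        (fun ω => F ω i.val) ⁻¹' {g i.val} := by
      ext ω
      simp only [hE, Set.mem_setOf_eq, Set.mem_iInter, Set.mem_preimage,
        Set.mem_singleton_iff, Finset.mem_univ, forall_true_left]
      exact ⟨fun h i => h i.1 i.2, fun h i hi => h ⟨i, hi⟩⟩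
    have hprd := hindep.measure_inter_preimage_eq_mul (S := Finset.univ)
      (sets := fun i => {g i.val}) (fun i _ => measurableSet_singleton _)
    rw [hrw, hprd, ENNReal.toReal_prod]
    rw [Finset.univ_eq_attach]
    rw [← Finset.prod_attach S (fun i => w (g i))]
    apply Finset.prod_congr rfl
    intro i _
    have hpre : (fun ω => F ω i.val) ⁻¹' {g i.val} = {ω | F ω i.val = g i.val} := rfl
    rw [hpre]
    have hgi : g i.val ∈ T := (mem_Fn.1 hg).1 i.val i.2
    rcases Finset.mem_insert.1 hgi with h0 | hSmem
    · rw [h0, hzero i.val i.2, hw]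
      norm_num
    · have hne : g i.val ≠ 0 := by intro hc; rw [hc] at hSmem; exact h0S hSmem
      rw [hval i.val i.2 (g i.val) hSmem, hw]
      simp [hne]
  -- disjointness of atoms
  have hdisj : (↑((Fn S T).filter (fun g => Cyc S g)) : Set (ℕ → ℕ)).PairwiseDisjoint E := by
    intro g hg g' hg' hne
    simp only [Finset.coe_filter, Set.mem_setOf_eq] at hg hg'
    rw [Function.onFun, Set.disjoint_left]
    intro ω hω hω'
    exact hne (fn_ext hg.1 hg'.1 (fun i hi => (hω i hi).symm.trans (hω' i hi)))
  have hdisj' : (↑(Fn S T) : Set (ℕ → ℕ)).PairwiseDisjoint E := by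
    intro g hg g' hg' hne
    rw [Function.onFun, Set.disjoint_left]
    intro ω hω hω'
    exact hne (fn_ext (by exact_mod_cast hg) (by exact_mod_cast hg')
      (fun i hi => (hω i hi).symm.trans (hω' i hi)))
  -- every ω lies in the atom of its own restriction
  have hself : ∀ ω : Ω, (fun i => if i ∈ S then F ω i else 0) ∈ Fn S T ∧
      ω ∈ E (fun i => if i ∈ S then F ω i else 0) := by
    intro ω
    constructor
    · rw [mem_Fn]
      constructor
      · intro i hi
        rw [if_pos hi]
        rcases hSmap ω i hi with h | h
        · exact Finset.mem_insert_of_mem h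
        · rw [h]; exact Finset.mem_insert_self 0 S
      · intro i hi
        rw [if_neg hi]
    · intro i hi
      show F ω i = if i ∈ S then F ω i else 0
      rw [if_pos hi]
  -- the cycle event as a finite disjoint union
  have hcycset : {ω | HasCycle S (F ω)}
      = ⋃ g ∈ (Fn S T).filter (fun g => Cyc S g), E g := by
    ext ω
    simp only [Set.mem_setOf_eq, Set.mem_iUnion, Finset.mem_filter, exists_prop]
    rw [hasCycle_iff_cyc]
    constructor
    · intro hcyc
      refine ⟨(fun i => if i ∈ S then F ω i else 0), ⟨(hself ω).1, ?_⟩, (hself ω).2⟩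
      exact cyc_congr (fun i hi => (if_pos hi).symm) hcyc
    · rintro ⟨g, ⟨hgFn, hgcyc⟩, hωE⟩
      exact cyc_congr (fun i hi => (hωE i hi).symm) hgcyc
  -- total mass : the atoms cover Ω
  have huniv : (Set.univ : Set Ω) = ⋃ g ∈ Fn S T, E g := by
    ext ω
    simp only [Set.mem_univ, true_iff, Set.mem_iUnion, exists_prop]
    exact ⟨_, (hself ω).1, (hself ω).2⟩
  -- sum over all atoms is 1
  have htotal : ∑ g ∈ Fn S T, ∏ i ∈ S, w (g i) = 1 := by
    have h1 : μ (⋃ g ∈ Fn S T, E g) = ∑ g ∈ Fn S T, μ (E g) :=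
      measure_biUnion_finset hdisj' (fun g _ => hmeasE g)
    have h2 : (μ (Set.univ : Set Ω)).toReal = 1 := by simp
    rw [huniv, h1, ENNReal.toReal_sum (fun g _ => measure_ne_top μ _)] at h2
    rw [← h2]
    exact (Finset.sum_congr rfl (fun g hg => (hatom g hg).symm))
  -- measure of the cycle event
  have hcycval : (μ {ω | HasCycle S (F ω)}).toReal
      = ∑ g ∈ (Fn S T).filter (fun g => Cyc S g), ∏ i ∈ S, w (g i) := by
    rw [hcycset, measure_biUnion_finset hdisj (fun g _ => hmeasE g),
      ENNReal.toReal_sum (fun g _ => measure_ne_top μ _)]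
    exact Finset.sum_congr rfl (fun g hg => hatom g (Finset.mem_filter.1 hg).1)
  -- the combinatorial identity
  have hw0 : w 0 = 1 - p := by rw [hw]; norm_num
  have hwS : ∀ i ∈ S, w i = p * π i := by
    intro i hi
    have hne : i ≠ 0 := by rintro rfl; exact h0S hi
    rw [hw]
    simp [hne]
  have hW : (∑ t ∈ T, w t) = 1 := by
    rw [hT, Finset.sum_insert h0S, hw0, Finset.sum_congr rfl hwS, ← Finset.mul_sum, hπ1]
    ring
  have hR : (∑ t ∈ T \ S, w t) = 1 - p := by
    have hset : T \ S = {0} := by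
      ext t
      simp only [hT, Finset.mem_sdiff, Finset.mem_insert, Finset.mem_singleton]
      constructor
      · rintro ⟨h1 | h1, h2⟩
        · exact h1
        · exact absurd h1 h2
      · rintro rfl
        exact ⟨Or.inl rfl, h0S⟩
    rw [hset, Finset.sum_singleton]
    exact hw0
  have hkey := key_identity S T w (fun i hi => Finset.mem_insert_of_mem hi) h0S
  rw [hW, hR, mul_one, one_pow, mul_one] at hkey
  -- split the total sum
  have hsplit := Finset.sum_filter_add_sum_filter_not (Fn S T) (fun g => Cyc S g)
    (fun g => ∏ i ∈ S, w (g i))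
  have hnc : ∑ g ∈ (Fn S T).filter (fun g => ¬ Cyc S g), ∏ i ∈ S, w (g i)
      = ∑ g ∈ Fn S T, if Cyc S g then 0 else ∏ i ∈ S, w (g i) := by
    rw [Finset.sum_filter]
    apply Finset.sum_congr rfl
    intro g _
    by_cases hc : Cyc S g
    · rw [if_pos hc, if_neg (not_not_intro hc)]
    · rw [if_neg hc, if_pos hc]
  rw [hcycval]
  rw [hnc, hkey, htotal] at hsplit
  linarith
end
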